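/- arXiv:1406.0390 — 6 statements merged into one kernel-verified Lean document; each statement's English description precedes it below -/
import Mathlib

section
/- Let X and Y be real Hilbert spaces, let a and b be continuous bilinear forms on X × Y, and let A and B be continuous linear operators from X to Y. Suppose there are constants C₁, C₂ > 0 such that for all u ∈ X: (i) b(u, B u) + a(u, A u) ≥ (1/C₁) ‖u‖²; (ii) b(u, A u) ≥ 0; (iii) |a(u, B u)| ≤ C₂ a(u, A u). Then the bilinear form b + a satisfies an inf-sup condition on X × Y: there is a constant c > 0, depending only on C₁, C₂ and the operator norms of A and B, such that for every nonzero u ∈ X, sup over nonzero v ∈ Y of |(b+a)(u,v)|/(‖u‖ ‖v‖) ≥ c. In fact, for λ = C₂ + 1 the test function v = B u + λ A u satisfies (b+a)(u, B u + λ A u) ≥ (1/C₁) ‖u‖². -/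
open MeasureTheory

/-- **Combining two bilinear forms into an inf-sup condition.**
Let `a`, `b` be continuous bilinear forms on `X × Y` (real Hilbert spaces) and
`A`, `B` continuous linear operators from `X` to `Y` with
`b(u,Bu) + a(u,Au) ≥ (1/C₁)‖u‖²`, `b(u,Au) ≥ 0` and `|a(u,Bu)| ≤ C₂ a(u,Au)`.
Then `b + a` satisfies an inf-sup condition on `X × Y`; in fact, for `λ = C₂ + 1`
the test function `v = B u + λ A u` satisfies `(b+a)(u, v) ≥ (1/C₁)‖u‖²`. -/
theorem infSup_of_combination
    {X Y : Type*} [NormedAddCommGroup X] [InnerProductSpace ℝ X] [CompleteSpace X]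
    [NormedAddCommGroup Y] [InnerProductSpace ℝ Y] [CompleteSpace Y]
    (a b : X →L[ℝ] Y →L[ℝ] ℝ) (A B : X →L[ℝ] Y) (C₁ C₂ : ℝ)
    (hC₁ : 0 < C₁) (hC₂ : 0 < C₂)
    (h1 : ∀ u : X, (1 / C₁) * ‖u‖ ^ 2 ≤ b u (B u) + a u (A u))
    (h2 : ∀ u : X, 0 ≤ b u (A u))
    (h3 : ∀ u : X, |a u (B u)| ≤ C₂ * a u (A u)) :
    (∀ u : X, (1 / C₁) * ‖u‖ ^ 2 ≤
        b u (B u + (C₂ + 1) • A u) + a u (B u + (C₂ + 1) • A u)) ∧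
    ∃ c > (0 : ℝ), ∀ u : X, u ≠ 0 → ∃ v : Y, v ≠ 0 ∧
      c ≤ |b u v + a u v| / (‖u‖ * ‖v‖) := by
  have key : ∀ u : X, (1 / C₁) * ‖u‖ ^ 2 ≤
      b u (B u + (C₂ + 1) • A u) + a u (B u + (C₂ + 1) • A u) := by
    intro u
    have hab : -(C₂ * a u (A u)) ≤ a u (B u) := neg_le_of_abs_le (h3 u)
    have hba : 0 ≤ b u (A u) := h2 u
    have expand : b u (B u + (C₂ + 1) • A u) + a u (B u + (C₂ + 1) • A u)
        = (b u (B u) + a u (A u)) + (C₂ + 1) * b u (A u)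
          + (a u (B u) + C₂ * a u (A u)) := by
      simp [map_add, _root_.map_smul, smul_eq_mul]; ring
    have := h1 u
    nlinarith [hba, hab, this]
  refine ⟨key, ?_⟩
  set M : ℝ := ‖B‖ + (C₂ + 1) * ‖A‖ + 1 with hM
  have hMpos : 0 < M := by positivity
  refine ⟨1 / (C₁ * M), by positivity, ?_⟩
  intro u hu
  set v : Y := B u + (C₂ + 1) • A u with hv
  have hupos : (0 : ℝ) < ‖u‖ := norm_pos_iff.mpr hu
  have hs : (1 / C₁) * ‖u‖ ^ 2 ≤ b u v + a u v := key u
  have hspos : 0 < b u v + a u v := lt_of_lt_of_le (by positivity) hs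
  have hvne : v ≠ 0 := by
    intro h
    rw [h] at hspos
    simp at hspos
  refine ⟨v, hvne, ?_⟩
  have hvpos : (0 : ℝ) < ‖v‖ := norm_pos_iff.mpr hvne
  have hvle : ‖v‖ ≤ M * ‖u‖ := by
    calc ‖v‖ ≤ ‖B u‖ + ‖(C₂ + 1) • A u‖ := norm_add_le _ _
      _ ≤ ‖B‖ * ‖u‖ + (C₂ + 1) * (‖A‖ * ‖u‖) := by
          rw [norm_smul]
          gcongr
          · exact B.le_opNorm u
          · simp [abs_of_pos (by linarith : (0:ℝ) < C₂ + 1)]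
          · exact A.le_opNorm u
      _ ≤ M * ‖u‖ := by rw [hM]; nlinarith
  have habs : |b u v + a u v| = b u v + a u v := abs_of_pos hspos
  rw [habs, le_div_iff₀ (by positivity)]
  calc 1 / (C₁ * M) * (‖u‖ * ‖v‖)
      ≤ 1 / (C₁ * M) * (‖u‖ * (M * ‖u‖)) := by
        gcongr
    _ = (1 / C₁) * ‖u‖ ^ 2 := by field_simp
    _ ≤ b u v + a u v := hs
end

section
/- There exists a constant C > 0 such that for every τ > 0 and every u ∈ L²(ℝ) with finite Slobodetski H^{1/2} seminorm, the L² projection P_τ u of u onto the τ-piecewise constant functions satisfies |P_τ u|_{H^{1/2}_w} ≤ C |u|_{H^{1/2}}; that is, ‖P_τ u − (P_τ u)(· − y)‖_{L²(ℝ)} ≤ C |y|^{1/2} |u|_{H^{1/2}} for all y ∈ ℝ, with C independent of τ and u. -/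
open MeasureTheory

/-- Squared Slobodetski `H^{1/2}` seminorm on `ℝ`. -/
noncomputable def slobHalfSq (u : ℝ → ℝ) : ENNReal :=
  ∫⁻ x : ℝ, ∫⁻ y : ℝ, ENNReal.ofReal ((u x - u y) ^ 2 / |x - y| ^ 2)

/-- `L²` orthogonal projection onto `τ`-piecewise constant functions: on each interval
`(kτ, (k+1)τ)` the value is the average of `u` over that interval. -/
noncomputable def projPC (τ : ℝ) (u : ℝ → ℝ) (x : ℝ) : ℝ :=
  (1 / τ) * ∫ t in Set.Ioc ((⌊x / τ⌋ : ℝ) * τ) ((⌊x / τ⌋ + 1 : ℝ) * τ), u t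

open MeasureTheory Set
namespace ProjAux

lemma ofReal_integral_le {α : Type*} [MeasurableSpace α] {μ : Measure α} (f : α → ℝ)
    (hf : 0 ≤ᵐ[μ] f) : ENNReal.ofReal (∫ x, f x ∂μ) ≤ ∫⁻ x, ENNReal.ofReal (f x) ∂μ := by
  by_cases hfi : Integrable f μ
  · exact (ofReal_integral_eq_lintegral_ofReal hfi hf).le
  · rw [integral_undef hfi]; simp

lemma sq_lintegral_le {α : Type*} [MeasurableSpace α] (μ : Measure α) (f : α → ENNReal)
    (hf : AEMeasurable f μ) : (∫⁻ x, f x ∂μ) ^ 2 ≤ μ Set.univ * ∫⁻ x, (f x) ^ 2 ∂μ := by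
  have hpq : (2:ℝ).HolderConjugate 2 := Real.HolderConjugate.two_two
  have h := ENNReal.lintegral_mul_le_Lp_mul_Lq μ hpq hf (aemeasurable_const (b := (1:ENNReal)))
  simp only [Pi.mul_apply, Pi.one_apply, mul_one, ENNReal.one_rpow, one_pow, lintegral_const, one_mul] at h
  have h2 : (∫⁻ x, f x ∂μ) ^ 2 ≤
      ((∫⁻ a, f a ^ (2:ℝ) ∂μ) ^ (1/(2:ℝ)) * (μ Set.univ) ^ (1/(2:ℝ))) ^ 2 :=
    pow_le_pow_left₀ zero_le h 2
  calc (∫⁻ x, f x ∂μ) ^ 2 ≤ _ := h2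
    _ = (∫⁻ a, f a ^ (2:ℝ) ∂μ) * μ Set.univ := by
        rw [mul_pow, ← ENNReal.rpow_natCast (_ ^ (1/(2:ℝ))) 2,
          ← ENNReal.rpow_natCast ((μ Set.univ) ^ (1/(2:ℝ))) 2,
          ← ENNReal.rpow_mul, ← ENNReal.rpow_mul]
        norm_num
    _ = μ Set.univ * ∫⁻ x, (f x) ^ 2 ∂μ := by
        rw [mul_comm]
        congr 1
        refine lintegral_congr fun x => ?_
        rw [← ENNReal.rpow_natCast (f x) 2]
        norm_num


lemma lintegral_comp_sub_left (f : ℝ → ENNReal) (hf : Measurable f) (c : ℝ) :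
    ∫⁻ x, f (c - x) = ∫⁻ x, f x :=
  (Measure.measurePreserving_sub_left volume c).lintegral_comp hf


lemma lintegral_comp_sub (f : ℝ → ENNReal) (hf : Measurable f) (c : ℝ) :
    ∫⁻ x, f (x - c) = ∫⁻ x, f x :=
  (measurePreserving_sub_right volume c).lintegral_comp hf

noncomputable def sd (g : ℝ → ℝ) (y : ℝ) : ENNReal :=
  ∫⁻ x : ℝ, ENNReal.ofReal ((g x - g (x - y)) ^ 2)

variable {u : ℝ → ℝ}

lemma meas_sq_sub (hu : Measurable u) (y : ℝ) :
    Measurable fun x => ENNReal.ofReal ((u x - u (x - y)) ^ 2) :=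
  ENNReal.measurable_ofReal.comp
    ((hu.sub (hu.comp (measurable_id.sub measurable_const))).pow_const 2)

lemma sd_shift (hu : Measurable u) (y s : ℝ) :
    ∫⁻ x, ENNReal.ofReal ((u (x - s) - u (x - y)) ^ 2) = sd u (y - s) := by
  have h := lintegral_comp_sub (fun x => ENNReal.ofReal ((u x - u (x - (y - s))) ^ 2))
    (meas_sq_sub hu (y - s)) s
  simpa [sd, sub_sub, add_comm, add_sub_assoc] using h

lemma sd_neg (hu : Measurable u) (y : ℝ) : sd u (-y) = sd u y := by
  have h := lintegral_comp_sub (fun x => ENNReal.ofReal ((u x - u (x - y)) ^ 2))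
    (meas_sq_sub hu y) (-y)
  calc sd u (-y) = ∫⁻ x, ENNReal.ofReal ((u x - u (x - y)) ^ 2) := by
        rw [← h]
        refine lintegral_congr fun x => ?_
        have : x - -y - y = x := by ring
        rw [this]
        congr 1
        ring
    _ = sd u y := rfl
lemma slob_repr (hu : Measurable u) :
    slobHalfSq u = ∫⁻ s : ℝ, sd u s / ENNReal.ofReal (s ^ 2) := by
  have hmeas : AEMeasurable (Function.uncurry fun x s : ℝ =>
      ENNReal.ofReal ((u x - u (x - s)) ^ 2 / s ^ 2)) (volume.prod volume) := by
    apply Measurable.aemeasurable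
    apply ENNReal.measurable_ofReal.comp
    exact (((hu.comp measurable_fst).sub
      (hu.comp (measurable_fst.sub measurable_snd))).pow_const 2).div
      ((measurable_snd.pow_const 2))
  have step1 : slobHalfSq u =
      ∫⁻ x : ℝ, ∫⁻ s : ℝ, ENNReal.ofReal ((u x - u (x - s)) ^ 2 / s ^ 2) := by
    refine lintegral_congr fun x => ?_
    have hm : Measurable fun t => ENNReal.ofReal ((u x - u t) ^ 2 / |x - t| ^ 2) :=
      ENNReal.measurable_ofReal.comp (((measurable_const.sub hu).pow_const 2).div
        (((measurable_const.sub measurable_id).abs).pow_const 2))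
    have h := (Measure.measurePreserving_sub_left volume x).lintegral_comp hm
    simp only [sub_sub_cancel] at h
    rw [← h]
    refine lintegral_congr fun s => ?_
    rw [sq_abs]
  rw [step1, lintegral_lintegral_swap hmeas]
  have h0 : ∀ᵐ s : ℝ, s ≠ (0:ℝ) := by
    rw [ae_iff]
    simp only [not_not, setOf_eq_eq_singleton]
    exact Real.volume_singleton
  refine lintegral_congr_ae (h0.mono fun s hs => ?_)
  have hsq : (0:ℝ) < s ^ 2 := by positivity
  have hpt : ∀ x : ℝ, ENNReal.ofReal ((u x - u (x - s)) ^ 2 / s ^ 2)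
      = ENNReal.ofReal ((u x - u (x - s)) ^ 2) * (ENNReal.ofReal (s ^ 2))⁻¹ := by
    intro x
    rw [ENNReal.ofReal_div_of_pos hsq, div_eq_mul_inv]
  simp only [hpt]
  rw [lintegral_mul_const'' _ (meas_sq_sub hu s).aemeasurable]
  rw [div_eq_mul_inv]
  rfl
lemma sd_triangle (hu : Measurable u) (y s : ℝ) :
    sd u y ≤ 2 * sd u s + 2 * sd u (y - s) := by
  have hm2 : Measurable fun x => ENNReal.ofReal ((u (x - s) - u (x - y)) ^ 2) :=
    ENNReal.measurable_ofReal.comp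
      (((hu.comp (measurable_id.sub measurable_const)).sub
        (hu.comp (measurable_id.sub measurable_const))).pow_const 2)
  have hpt : ∀ x : ℝ, ENNReal.ofReal ((u x - u (x - y)) ^ 2)
      ≤ ENNReal.ofReal (2 * (u x - u (x - s)) ^ 2) +
        ENNReal.ofReal (2 * (u (x - s) - u (x - y)) ^ 2) := by
    intro x
    rw [← ENNReal.ofReal_add (by positivity) (by positivity)]
    apply ENNReal.ofReal_le_ofReal
    nlinarith [sq_nonneg ((u x - u (x - s)) - (u (x - s) - u (x - y)))]
  calc sd u y ≤ ∫⁻ x, (ENNReal.ofReal (2 * (u x - u (x - s)) ^ 2) +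
        ENNReal.ofReal (2 * (u (x - s) - u (x - y)) ^ 2)) := lintegral_mono hpt
    _ = 2 * sd u s + 2 * sd u (y - s) := by
        rw [lintegral_add_left]
        · congr 1
          · simp only [ENNReal.ofReal_mul (by norm_num : (0:ℝ) ≤ 2)]
            rw [lintegral_const_mul'' _ (meas_sq_sub hu s).aemeasurable]
            norm_num
            rfl
          · simp only [ENNReal.ofReal_mul (by norm_num : (0:ℝ) ≤ 2)]
            rw [lintegral_const_mul'' _ hm2.aemeasurable, sd_shift hu y s]
            norm_num
        · exact ENNReal.measurable_ofReal.comp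
            (((hu.sub (hu.comp (measurable_id.sub measurable_const))).pow_const 2).const_mul 2)
lemma sd_meas (hu : Measurable u) : Measurable (sd u) := by
  apply Measurable.lintegral_prod_right (f := fun s x => ENNReal.ofReal ((u x - u (x - s)) ^ 2))
  exact ENNReal.measurable_ofReal.comp
    (((hu.comp measurable_snd).sub (hu.comp (measurable_snd.sub measurable_fst))).pow_const 2)

lemma sd_le_pos (hu : Measurable u) {y : ℝ} (hy : 0 < y) (hS : slobHalfSq u ≠ ⊤) :
    sd u y ≤ ENNReal.ofReal (4 * y) * slobHalfSq u := by
  set S := slobHalfSq u with hSdef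
  have hmeas2 : Measurable fun s => 2 * sd u s := (sd_meas hu).const_mul 2
  have h1 : ENNReal.ofReal y * sd u y = ∫⁻ _ in Ioc (0:ℝ) y, sd u y := by
    rw [setLIntegral_const, Real.volume_Ioc, mul_comm]
    norm_num
  have h4 : ∫⁻ s in Ioc (0:ℝ) y, sd u (y - s) = ∫⁻ s in Ioc (0:ℝ) y, sd u s := by
    have hpre : (fun s : ℝ => y - s) ⁻¹' Ioc (0:ℝ) y = Ico (0:ℝ) y := by
      ext s
      simp only [mem_preimage, mem_Ioc, mem_Ico, sub_pos]
      constructor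
      · rintro ⟨h1', h2'⟩; exact ⟨by linarith, h1'⟩
      · rintro ⟨h1', h2'⟩; exact ⟨h2', by linarith⟩
    have := (Measure.measurePreserving_sub_left volume y).setLIntegral_comp_preimage
      (s := Ioc (0:ℝ) y) measurableSet_Ioc (sd_meas hu)
    rw [hpre] at this
    rw [← this, setLIntegral_congr (Ico_ae_eq_Ioc (a := (0:ℝ)) (b := y)).symm]
  have h5 : ∫⁻ s in Ioc (0:ℝ) y, sd u s
      ≤ ENNReal.ofReal (y ^ 2) * ∫⁻ s in Ioc (0:ℝ) y, sd u s / ENNReal.ofReal (s ^ 2) := by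
    have hmd : Measurable fun s : ℝ => sd u s / ENNReal.ofReal (s ^ 2) :=
      (sd_meas hu).div (ENNReal.measurable_ofReal.comp (measurable_id.pow_const 2))
    rw [← lintegral_const_mul'' _ hmd.aemeasurable.restrict]
    refine setLIntegral_mono (by fun_prop) fun s hs => ?_
    obtain ⟨hs0, hsy⟩ := hs
    have hsq : ENNReal.ofReal (s ^ 2) ≠ 0 := by
      exact (ENNReal.ofReal_pos.mpr (by positivity)).ne'
    have hsqt : ENNReal.ofReal (s ^ 2) ≠ ⊤ := ENNReal.ofReal_ne_top
    calc sd u s = ENNReal.ofReal (s ^ 2) * (sd u s / ENNReal.ofReal (s ^ 2)) :=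
          (ENNReal.mul_div_cancel hsq hsqt).symm
      _ ≤ ENNReal.ofReal (y ^ 2) * (sd u s / ENNReal.ofReal (s ^ 2)) := by
          apply mul_le_mul_left
          apply ENNReal.ofReal_le_ofReal
          nlinarith
  have h6 : ∫⁻ s in Ioc (0:ℝ) y, sd u s / ENNReal.ofReal (s ^ 2) ≤ S := by
    rw [hSdef, slob_repr hu]
    exact setLIntegral_le_lintegral _ _
  have key : ENNReal.ofReal y * sd u y ≤ ENNReal.ofReal y * (ENNReal.ofReal (4 * y) * S) := by
    calc ENNReal.ofReal y * sd u y = ∫⁻ _ in Ioc (0:ℝ) y, sd u y := h1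
      _ ≤ ∫⁻ s in Ioc (0:ℝ) y, (2 * sd u s + 2 * sd u (y - s)) :=
          lintegral_mono fun s => sd_triangle hu y s
      _ = (∫⁻ s in Ioc (0:ℝ) y, 2 * sd u s) + ∫⁻ s in Ioc (0:ℝ) y, 2 * sd u (y - s) :=
          lintegral_add_left hmeas2 _
      _ = 2 * (∫⁻ s in Ioc (0:ℝ) y, sd u s) + 2 * ∫⁻ s in Ioc (0:ℝ) y, sd u (y - s) := by
          have hm4 : Measurable fun s : ℝ => sd u (y - s) :=
            (sd_meas hu).comp (measurable_const.sub measurable_id)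
          rw [lintegral_const_mul'' _ (sd_meas hu).aemeasurable.restrict,
            lintegral_const_mul'' _ hm4.aemeasurable.restrict]
      _ = 4 * ∫⁻ s in Ioc (0:ℝ) y, sd u s := by rw [h4]; ring
      _ ≤ 4 * (ENNReal.ofReal (y ^ 2) * ∫⁻ s in Ioc (0:ℝ) y, sd u s / ENNReal.ofReal (s ^ 2)) :=
          mul_le_mul_right h5 4
      _ ≤ 4 * (ENNReal.ofReal (y ^ 2) * S) := by
          exact mul_le_mul_right (mul_le_mul_right h6 _) 4
      _ = ENNReal.ofReal y * (ENNReal.ofReal (4 * y) * S) := by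
          rw [← mul_assoc, ← mul_assoc]
          congr 1
          rw [show (4:ENNReal) = ENNReal.ofReal 4 by norm_num,
            ← ENNReal.ofReal_mul (by norm_num), ← ENNReal.ofReal_mul (by positivity)]
          congr 1
          ring
  have hy0 : ENNReal.ofReal y ≠ 0 := by exact (ENNReal.ofReal_pos.mpr (by positivity)).ne'
  exact (ENNReal.mul_le_mul_iff_right hy0 ENNReal.ofReal_ne_top).mp key

lemma sd_le (hu : Measurable u) (y : ℝ) :
    sd u y ≤ ENNReal.ofReal (4 * |y|) * slobHalfSq u := by
  by_cases hS : slobHalfSq u = ⊤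
  · rcases eq_or_ne y 0 with rfl | hy
    · simp [sd]
    · rw [hS, ENNReal.mul_top (by exact (ENNReal.ofReal_pos.mpr (by positivity)).ne')]
      exact le_top
  rcases lt_trichotomy y 0 with hy | rfl | hy
  · rw [← sd_neg hu, abs_of_neg hy]
    exact sd_le_pos hu (by linarith) hS
  · simp [sd]
  · rw [abs_of_pos hy]
    exact sd_le_pos hu hy hS
section Proj

variable (τ : ℝ) (u : ℝ → ℝ)

/-- the closed-ish interval of index `k` -/
def Jiv (k : ℤ) : Set ℝ := Ioc ((k:ℝ) * τ) (((k:ℝ) + 1) * τ)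

def Kiv (k : ℤ) : Set ℝ := Ico ((k:ℝ) * τ) (((k:ℝ) + 1) * τ)

noncomputable def avg (k : ℤ) : ℝ := (1 / τ) * ∫ t in Jiv τ k, u t

variable {τ}

lemma projPC_eq (x : ℝ) : projPC τ u x = avg τ u ⌊x / τ⌋ := by
  simp only [projPC, avg, Jiv]

lemma floor_eq_of_mem {k : ℤ} {x : ℝ} (hτ : 0 < τ) (hx : x ∈ Kiv τ k) : ⌊x / τ⌋ = k := by
  obtain ⟨h1, h2⟩ := hx
  rw [Int.floor_eq_iff]
  constructor
  · rw [le_div_iff₀ hτ]; linarith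
  · rw [div_lt_iff₀ hτ]; push_cast; linarith

lemma measurable_projPC (hτ : 0 < τ) : Measurable (projPC τ u) := by
  have : projPC τ u = (fun k : ℤ => avg τ u k) ∘ (fun x : ℝ => ⌊x / τ⌋) := by
    funext x; exact projPC_eq u x
  rw [this]
  exact Measurable.of_discrete.comp (Int.measurable_floor.comp (measurable_id.div_const τ))

lemma Kiv_disjoint (hτ : 0 < τ) : Pairwise (Function.onFun Disjoint (Kiv τ)) := by
  intro k l hkl
  simp only [Function.onFun, Kiv]
  rw [Set.Ico_disjoint_Ico]
  rcases hkl.lt_or_gt with h | h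
  · have : (k:ℝ) + 1 ≤ l := by exact_mod_cast h
    refine le_trans (min_le_left _ _) (le_trans ?_ (le_max_right _ _))
    nlinarith
  · have : (l:ℝ) + 1 ≤ k := by exact_mod_cast h
    refine le_trans (min_le_right _ _) (le_trans ?_ (le_max_left _ _))
    nlinarith

lemma Kiv_cover (hτ : 0 < τ) : ⋃ k : ℤ, Kiv τ k = univ := by
  refine eq_univ_of_forall fun x => ?_
  refine mem_iUnion.mpr ⟨⌊x / τ⌋, ?_⟩
  simp only [Kiv, mem_Ico]
  constructor
  · rw [← le_div_iff₀ hτ]; exact Int.floor_le _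
  · rw [← div_lt_iff₀ hτ]; exact Int.lt_floor_add_one _

lemma lintegral_eq_sum (hτ : 0 < τ) (f : ℝ → ENNReal) :
    ∫⁻ x, f x = ∑' k : ℤ, ∫⁻ x in Kiv τ k, f x := by
  have hm : ∀ k : ℤ, MeasurableSet (Kiv τ k) := fun k => measurableSet_Ico
  rw [← lintegral_iUnion hm (Kiv_disjoint hτ) f, Kiv_cover hτ, Measure.restrict_univ]

lemma sum_double_le (hτ : 0 < τ) (F : ℝ → ℝ → ENNReal)
    (hF : Measurable (Function.uncurry F)) (B : ℤ → Set ℝ) :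
    ∑' k : ℤ, ∫⁻ x in Kiv τ k, ∫⁻ t in B k, F x t ≤ ∫⁻ x, ∫⁻ t, F x t := by
  calc ∑' k : ℤ, ∫⁻ x in Kiv τ k, ∫⁻ t in B k, F x t
      ≤ ∑' k : ℤ, ∫⁻ x in Kiv τ k, ∫⁻ t, F x t :=
        ENNReal.tsum_le_tsum fun k => lintegral_mono fun x => setLIntegral_le_lintegral _ _
    _ = ∫⁻ x, ∫⁻ t, F x t := (lintegral_eq_sum hτ _).symm

end Proj
section ProjBound

variable {τ : ℝ} {u : ℝ → ℝ}

lemma volume_J (hτ : 0 < τ) (k : ℤ) : volume (Jiv τ k) = ENNReal.ofReal τ := by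
  rw [Jiv, Real.volume_Ioc]
  congr 1
  ring

lemma finJ (hτ : 0 < τ) (k : ℤ) : IsFiniteMeasure (volume.restrict (Jiv τ k)) := by
  constructor
  rw [Measure.restrict_apply_univ, volume_J hτ]
  exact ENNReal.ofReal_lt_top

lemma integrableOn_J (hτ : 0 < τ) (hu2 : MemLp u 2 volume) (k : ℤ) :
    IntegrableOn u (Jiv τ k) volume := by
  haveI := finJ hτ k
  exact (hu2.restrict _).integrable one_le_two

lemma avg_sub (hτ : 0 < τ) (hu2 : MemLp u 2 volume) (k : ℤ) (c : ℝ) :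
    c - avg τ u k = (1 / τ) * ∫ t in Jiv τ k, (c - u t) := by
  haveI := finJ hτ k
  rw [integral_sub (integrableOn_const (C := c) (by rw [volume_J hτ]; exact ENNReal.ofReal_ne_top) : Integrable (fun _ => c) (volume.restrict (Jiv τ k))) (integrableOn_J hτ hu2 k),
    setIntegral_const, measureReal_def, volume_J hτ, ENNReal.toReal_ofReal hτ.le, avg]
  field_simp
  ring

lemma sq_dev_le (hτ : 0 < τ) (hu : Measurable u) (hu2 : MemLp u 2 volume) (k : ℤ) (c : ℝ) :
    ENNReal.ofReal ((c - avg τ u k) ^ 2)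
      ≤ ENNReal.ofReal (1 / τ) * ∫⁻ t in Jiv τ k, ENNReal.ofReal ((c - u t) ^ 2) := by
  have habs : |c - avg τ u k| ≤ (1 / τ) * ∫ t in Jiv τ k, |c - u t| := by
    rw [avg_sub hτ hu2 k c, abs_mul, abs_of_pos (by positivity : (0:ℝ) < 1 / τ)]
    have habs2 : |∫ t in Jiv τ k, (c - u t)| ≤ ∫ t in Jiv τ k, |c - u t| := by
      simpa [Real.norm_eq_abs] using
        norm_integral_le_integral_norm (μ := volume.restrict (Jiv τ k)) (fun t => c - u t)
    exact mul_le_mul_of_nonneg_left habs2 (by positivity)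
  have hmabs : Measurable fun t => ENNReal.ofReal |c - u t| :=
    ENNReal.measurable_ofReal.comp (measurable_const.sub hu).abs
  calc ENNReal.ofReal ((c - avg τ u k) ^ 2)
      = (ENNReal.ofReal |c - avg τ u k|) ^ 2 := by
        rw [← ENNReal.ofReal_pow (abs_nonneg _), sq_abs]
    _ ≤ (ENNReal.ofReal ((1 / τ) * ∫ t in Jiv τ k, |c - u t|)) ^ 2 :=
        pow_le_pow_left₀ zero_le (ENNReal.ofReal_le_ofReal habs) 2
    _ = (ENNReal.ofReal (1 / τ)) ^ 2 * (ENNReal.ofReal (∫ t in Jiv τ k, |c - u t|)) ^ 2 := by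
        rw [ENNReal.ofReal_mul (by positivity), mul_pow]
    _ ≤ (ENNReal.ofReal (1 / τ)) ^ 2 * (∫⁻ t in Jiv τ k, ENNReal.ofReal |c - u t|) ^ 2 := by
        gcongr
        exact ofReal_integral_le _ (ae_of_all _ fun t => abs_nonneg _)
    _ ≤ (ENNReal.ofReal (1 / τ)) ^ 2 * ((volume.restrict (Jiv τ k)) Set.univ *
          ∫⁻ t in Jiv τ k, (ENNReal.ofReal |c - u t|) ^ 2) := by
        gcongr
        exact sq_lintegral_le _ _ hmabs.aemeasurable
    _ = ENNReal.ofReal (1 / τ) * ∫⁻ t in Jiv τ k, ENNReal.ofReal ((c - u t) ^ 2) := by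
        rw [Measure.restrict_apply_univ, volume_J hτ]
        have h1 : ∀ t : ℝ, (ENNReal.ofReal |c - u t|) ^ 2 = ENNReal.ofReal ((c - u t) ^ 2) := by
          intro t
          rw [← ENNReal.ofReal_pow (abs_nonneg _), sq_abs]
        simp only [h1]
        rw [← mul_assoc]
        congr 1
        rw [sq, mul_assoc, ← ENNReal.ofReal_mul (by positivity), ← ENNReal.ofReal_mul (by positivity)]
        congr 1
        field_simp

lemma err_bound (hτ : 0 < τ) (hu : Measurable u) (hu2 : MemLp u 2 volume) :
    ∫⁻ x, ENNReal.ofReal ((u x - projPC τ u x) ^ 2) ≤ ENNReal.ofReal τ * slobHalfSq u := by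
  have hFm : Measurable (Function.uncurry fun x t : ℝ =>
      ENNReal.ofReal ((u x - u t) ^ 2 / |x - t| ^ 2)) :=
    ENNReal.measurable_ofReal.comp
      ((((hu.comp measurable_fst).sub (hu.comp measurable_snd)).pow_const 2).div
        (((measurable_fst.sub measurable_snd).abs).pow_const 2))
  have hsqm : Measurable (Function.uncurry fun x t : ℝ => ENNReal.ofReal ((u x - u t) ^ 2)) :=
    ENNReal.measurable_ofReal.comp
      (((hu.comp measurable_fst).sub (hu.comp measurable_snd)).pow_const 2)
  have hterm : ∀ k : ℤ, (∫⁻ x in Kiv τ k, ENNReal.ofReal ((u x - projPC τ u x) ^ 2))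
      ≤ ENNReal.ofReal τ * ∫⁻ x in Kiv τ k, ∫⁻ t in Jiv τ k,
          ENNReal.ofReal ((u x - u t) ^ 2 / |x - t| ^ 2) := by
    intro k
    have hgm : Measurable fun x => ∫⁻ t in Jiv τ k, ENNReal.ofReal ((u x - u t) ^ 2) :=
      Measurable.lintegral_prod_right hsqm
    have h1 : (∫⁻ x in Kiv τ k, ENNReal.ofReal ((u x - projPC τ u x) ^ 2))
        = ∫⁻ x in Kiv τ k, ENNReal.ofReal ((u x - avg τ u k) ^ 2) := by
      refine setLIntegral_congr_fun measurableSet_Ico (fun x hx => ?_)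
      rw [projPC_eq, floor_eq_of_mem hτ hx]
    have h2 : (∫⁻ x in Kiv τ k, ENNReal.ofReal ((u x - avg τ u k) ^ 2))
        ≤ ∫⁻ x in Kiv τ k, ENNReal.ofReal (1 / τ) *
            ∫⁻ t in Jiv τ k, ENNReal.ofReal ((u x - u t) ^ 2) :=
      setLIntegral_mono (hgm.const_mul _) fun x _ => sq_dev_le hτ hu hu2 k (u x)
    have h3 : ∀ x ∈ Kiv τ k, (∫⁻ t in Jiv τ k, ENNReal.ofReal ((u x - u t) ^ 2))
        ≤ ENNReal.ofReal (τ ^ 2) * ∫⁻ t in Jiv τ k,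
            ENNReal.ofReal ((u x - u t) ^ 2 / |x - t| ^ 2) := by
      intro x hx
      have hgm2 : Measurable fun t => ENNReal.ofReal (τ ^ 2) *
          ENNReal.ofReal ((u x - u t) ^ 2 / |x - t| ^ 2) :=
        (ENNReal.measurable_ofReal.comp ((((measurable_const.sub hu)).pow_const 2).div
          ((measurable_const.sub measurable_id).abs.pow_const 2))).const_mul _
      rw [← lintegral_const_mul'' _ (by fun_prop : Measurable fun t : ℝ =>
        ENNReal.ofReal ((u x - u t) ^ 2 / |x - t| ^ 2)).aemeasurable.restrict]
      refine setLIntegral_mono hgm2 fun t ht => ?_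
      rcases eq_or_ne x t with rfl | hxt
      · simp
      · have habs : |x - t| ≤ τ := by
          obtain ⟨hx1, hx2⟩ := hx
          obtain ⟨ht1, ht2⟩ := ht
          rw [abs_le]
          constructor <;> linarith
        have hpos : (0:ℝ) < |x - t| := abs_pos.mpr (sub_ne_zero.mpr hxt)
        rw [← ENNReal.ofReal_mul (by positivity)]
        apply ENNReal.ofReal_le_ofReal
        rw [div_eq_mul_inv]
        have h4 : (u x - u t) ^ 2 * (|x - t| ^ 2)⁻¹ * |x - t| ^ 2 = (u x - u t) ^ 2 := by
          rw [mul_assoc, inv_mul_cancel₀ (by positivity), mul_one]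
        nlinarith [sq_nonneg (u x - u t), sq_nonneg (|x - t|), inv_nonneg.mpr (sq_nonneg |x - t|),
          mul_le_mul_of_nonneg_left (mul_le_mul habs habs (abs_nonneg _) hτ.le)
            (inv_nonneg.mpr (sq_nonneg |x - t|) |>.trans_eq rfl)]
    calc (∫⁻ x in Kiv τ k, ENNReal.ofReal ((u x - projPC τ u x) ^ 2))
        ≤ ∫⁻ x in Kiv τ k, ENNReal.ofReal (1 / τ) *
            ∫⁻ t in Jiv τ k, ENNReal.ofReal ((u x - u t) ^ 2) := h1 ▸ h2
      _ = ENNReal.ofReal (1 / τ) * ∫⁻ x in Kiv τ k,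
            ∫⁻ t in Jiv τ k, ENNReal.ofReal ((u x - u t) ^ 2) :=
          lintegral_const_mul'' _ hgm.aemeasurable.restrict
      _ ≤ ENNReal.ofReal (1 / τ) * (ENNReal.ofReal (τ ^ 2) * ∫⁻ x in Kiv τ k,
            ∫⁻ t in Jiv τ k, ENNReal.ofReal ((u x - u t) ^ 2 / |x - t| ^ 2)) := by
          apply mul_le_mul_right
          rw [← lintegral_const_mul'' _ (Measurable.lintegral_prod_right
            ((by fun_prop : Measurable (Function.uncurry fun x t : ℝ =>
              ENNReal.ofReal ((u x - u t) ^ 2 / |x - t| ^ 2))))).aemeasurable.restrict]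
          exact setLIntegral_mono ((Measurable.lintegral_prod_right (by fun_prop)).const_mul _) h3
      _ = ENNReal.ofReal τ * ∫⁻ x in Kiv τ k, ∫⁻ t in Jiv τ k,
            ENNReal.ofReal ((u x - u t) ^ 2 / |x - t| ^ 2) := by
          rw [← mul_assoc, ← ENNReal.ofReal_mul (by positivity)]
          congr 2
          field_simp
  calc ∫⁻ x, ENNReal.ofReal ((u x - projPC τ u x) ^ 2)
      = ∑' k : ℤ, ∫⁻ x in Kiv τ k, ENNReal.ofReal ((u x - projPC τ u x) ^ 2) :=
        lintegral_eq_sum hτ _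
    _ ≤ ∑' k : ℤ, ENNReal.ofReal τ * ∫⁻ x in Kiv τ k, ∫⁻ t in Jiv τ k,
          ENNReal.ofReal ((u x - u t) ^ 2 / |x - t| ^ 2) := ENNReal.tsum_le_tsum hterm
    _ = ENNReal.ofReal τ * ∑' k : ℤ, ∫⁻ x in Kiv τ k, ∫⁻ t in Jiv τ k,
          ENNReal.ofReal ((u x - u t) ^ 2 / |x - t| ^ 2) := ENNReal.tsum_mul_left
    _ ≤ ENNReal.ofReal τ * slobHalfSq u := by
        apply mul_le_mul_right
        exact sum_double_le hτ _ hFm (Jiv τ)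

end ProjBound
section Jump

variable {τ : ℝ} {u : ℝ → ℝ}

lemma Jiv_disjoint (hτ : 0 < τ) : Pairwise (Function.onFun Disjoint (Jiv τ)) := by
  intro k l hkl
  simp only [Function.onFun, Jiv]
  rw [Set.Ioc_disjoint_Ioc]
  rcases hkl.lt_or_gt with h | h
  · have : (k:ℝ) + 1 ≤ l := by exact_mod_cast h
    refine le_trans (min_le_left _ _) (le_trans ?_ (le_max_right _ _))
    nlinarith
  · have : (l:ℝ) + 1 ≤ k := by exact_mod_cast h
    refine le_trans (min_le_right _ _) (le_trans ?_ (le_max_left _ _))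
    nlinarith

lemma sum_double_le' (F : ℝ → ℝ → ENNReal) (hF : Measurable (Function.uncurry F))
    (A B : ℤ → Set ℝ) (hA : ∀ k, MeasurableSet (A k))
    (hd : Pairwise (Function.onFun Disjoint A)) :
    ∑' k : ℤ, ∫⁻ x in A k, ∫⁻ t in B k, F x t ≤ ∫⁻ x, ∫⁻ t, F x t := by
  have hm : Measurable fun x => ∫⁻ t, F x t := Measurable.lintegral_prod_right hF
  calc ∑' k : ℤ, ∫⁻ x in A k, ∫⁻ t in B k, F x t
      ≤ ∑' k : ℤ, ∫⁻ x in A k, ∫⁻ t, F x t :=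
        ENNReal.tsum_le_tsum fun k => lintegral_mono fun x => setLIntegral_le_lintegral _ _
    _ = ∫⁻ x in ⋃ k : ℤ, A k, ∫⁻ t, F x t := (lintegral_iUnion hA hd _).symm
    _ ≤ ∫⁻ x, ∫⁻ t, F x t := setLIntegral_le_lintegral _ _

lemma avg_diff_sq_le (hτ : 0 < τ) (hu : Measurable u) (hu2 : MemLp u 2 volume) (k : ℤ) :
    ENNReal.ofReal ((avg τ u k - avg τ u (k - 1)) ^ 2)
      ≤ 4 * ∫⁻ t in Jiv τ (k - 1), ∫⁻ s in Jiv τ k,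
          ENNReal.ofReal ((u t - u s) ^ 2 / |t - s| ^ 2) := by
  have h1 : ENNReal.ofReal ((avg τ u k - avg τ u (k - 1)) ^ 2)
      ≤ ENNReal.ofReal (1 / τ) * ∫⁻ t in Jiv τ (k - 1),
          ENNReal.ofReal ((avg τ u k - u t) ^ 2) :=
    sq_dev_le hτ hu hu2 (k - 1) (avg τ u k)
  have h2 : ∀ t : ℝ, ENNReal.ofReal ((avg τ u k - u t) ^ 2)
      ≤ ENNReal.ofReal (1 / τ) * ∫⁻ s in Jiv τ k, ENNReal.ofReal ((u t - u s) ^ 2) := by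
    intro t
    have := sq_dev_le hτ hu hu2 k (u t)
    have heq : (avg τ u k - u t) ^ 2 = (u t - avg τ u k) ^ 2 := by ring
    rw [heq]
    exact this
  have hsqm : ∀ t : ℝ, Measurable fun s => ENNReal.ofReal ((u t - u s) ^ 2) := fun t =>
    ENNReal.measurable_ofReal.comp ((measurable_const.sub hu).pow_const 2)
  have hinm : Measurable fun t => ∫⁻ s in Jiv τ k, ENNReal.ofReal ((u t - u s) ^ 2) :=
    Measurable.lintegral_prod_right (ENNReal.measurable_ofReal.comp
      (((hu.comp measurable_fst).sub (hu.comp measurable_snd)).pow_const 2))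
  have h3 : ∀ t ∈ Jiv τ (k - 1), (∫⁻ s in Jiv τ k, ENNReal.ofReal ((u t - u s) ^ 2))
      ≤ ENNReal.ofReal (4 * τ ^ 2) * ∫⁻ s in Jiv τ k,
          ENNReal.ofReal ((u t - u s) ^ 2 / |t - s| ^ 2) := by
    intro t ht
    rw [← lintegral_const_mul'' _ (by fun_prop : Measurable fun s : ℝ =>
      ENNReal.ofReal ((u t - u s) ^ 2 / |t - s| ^ 2)).aemeasurable.restrict]
    refine setLIntegral_mono ((by fun_prop : Measurable fun s : ℝ =>
      ENNReal.ofReal ((u t - u s) ^ 2 / |t - s| ^ 2)).const_mul _) fun s hs => ?_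
    rcases eq_or_ne t s with rfl | hts
    · simp
    · have habs : |t - s| ≤ 2 * τ := by
        obtain ⟨ht1, ht2⟩ := ht
        obtain ⟨hs1, hs2⟩ := hs
        rw [abs_le]
        push_cast at ht1 ht2 ⊢
        constructor <;> linarith
      have hpos : (0:ℝ) < |t - s| := abs_pos.mpr (sub_ne_zero.mpr hts)
      rw [← ENNReal.ofReal_mul (by positivity)]
      apply ENNReal.ofReal_le_ofReal
      rw [div_eq_mul_inv]
      have hb0 : (|t - s|:ℝ) ^ 2 ≠ 0 := by positivity
      have hb2 : (|t - s|:ℝ) ^ 2 ≤ 4 * τ ^ 2 := by nlinarith [abs_nonneg (t - s)]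
      have hq : (0:ℝ) ≤ (u t - u s) ^ 2 * (|t - s| ^ 2)⁻¹ := by positivity
      have heq : |t - s| ^ 2 * ((u t - u s) ^ 2 * (|t - s| ^ 2)⁻¹) = (u t - u s) ^ 2 := by
        rw [mul_comm (|t - s| ^ 2) _, mul_assoc, inv_mul_cancel₀ hb0, mul_one]
      calc (u t - u s) ^ 2 = |t - s| ^ 2 * ((u t - u s) ^ 2 * (|t - s| ^ 2)⁻¹) := heq.symm
        _ ≤ 4 * τ ^ 2 * ((u t - u s) ^ 2 * (|t - s| ^ 2)⁻¹) :=
            mul_le_mul_of_nonneg_right hb2 hq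
  calc ENNReal.ofReal ((avg τ u k - avg τ u (k - 1)) ^ 2)
      ≤ ENNReal.ofReal (1 / τ) * ∫⁻ t in Jiv τ (k - 1),
          ENNReal.ofReal ((avg τ u k - u t) ^ 2) := h1
    _ ≤ ENNReal.ofReal (1 / τ) * ∫⁻ t in Jiv τ (k - 1), (ENNReal.ofReal (1 / τ) *
          ∫⁻ s in Jiv τ k, ENNReal.ofReal ((u t - u s) ^ 2)) := by
        apply mul_le_mul_right
        exact setLIntegral_mono (hinm.const_mul _) fun t _ => h2 t
    _ = ENNReal.ofReal (1 / τ) * (ENNReal.ofReal (1 / τ) * ∫⁻ t in Jiv τ (k - 1),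
          ∫⁻ s in Jiv τ k, ENNReal.ofReal ((u t - u s) ^ 2)) := by
        rw [lintegral_const_mul'' _ hinm.aemeasurable.restrict]
    _ ≤ ENNReal.ofReal (1 / τ) * (ENNReal.ofReal (1 / τ) * (ENNReal.ofReal (4 * τ ^ 2) *
          ∫⁻ t in Jiv τ (k - 1), ∫⁻ s in Jiv τ k,
            ENNReal.ofReal ((u t - u s) ^ 2 / |t - s| ^ 2))) := by
        apply mul_le_mul_right
        apply mul_le_mul_right
        rw [← lintegral_const_mul'' _ (Measurable.lintegral_prod_right
          ((by fun_prop : Measurable (Function.uncurry fun t s : ℝ =>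
            ENNReal.ofReal ((u t - u s) ^ 2 / |t - s| ^ 2))))).aemeasurable.restrict]
        exact setLIntegral_mono ((Measurable.lintegral_prod_right (by fun_prop)).const_mul _) h3
    _ = 4 * ∫⁻ t in Jiv τ (k - 1), ∫⁻ s in Jiv τ k,
          ENNReal.ofReal ((u t - u s) ^ 2 / |t - s| ^ 2) := by
        rw [← mul_assoc, ← mul_assoc, ← ENNReal.ofReal_mul (by positivity),
          ← ENNReal.ofReal_mul (by positivity)]
        congr 1
        have : 1 / τ * (1 / τ) * (4 * τ ^ 2) = 4 := by field_simp
        rw [this]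
        norm_num

end Jump
section Jump2

variable {τ : ℝ} {u : ℝ → ℝ}

lemma jump_bound (hτ : 0 < τ) (hu : Measurable u) (hu2 : MemLp u 2 volume)
    {y : ℝ} (hy0 : 0 < y) (hyτ : y < τ) :
    sd (projPC τ u) y ≤ ENNReal.ofReal (4 * y) * slobHalfSq u := by
  have hFm : Measurable (Function.uncurry fun t s : ℝ =>
      ENNReal.ofReal ((u t - u s) ^ 2 / |t - s| ^ 2)) := by fun_prop
  have hterm : ∀ k : ℤ, (∫⁻ x in Kiv τ k,
        ENNReal.ofReal ((projPC τ u x - projPC τ u (x - y)) ^ 2))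
      ≤ ENNReal.ofReal y * (4 * ∫⁻ t in Jiv τ (k - 1), ∫⁻ s in Jiv τ k,
          ENNReal.ofReal ((u t - u s) ^ 2 / |t - s| ^ 2)) := by
    intro k
    have hsplit : Kiv τ k = Ico ((k:ℝ) * τ) ((k:ℝ) * τ + y) ∪ Ico ((k:ℝ) * τ + y) (((k:ℝ) + 1) * τ) := by
      rw [Kiv, Ico_union_Ico_eq_Ico (by linarith) (by nlinarith)]
    have hdisj : Disjoint (Ico ((k:ℝ) * τ) ((k:ℝ) * τ + y)) (Ico ((k:ℝ) * τ + y) (((k:ℝ) + 1) * τ)) := by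
      rw [Set.Ico_disjoint_Ico]
      exact le_trans (min_le_left _ _) (le_max_right _ _)
    have hfloor1 : ∀ x ∈ Ico ((k:ℝ) * τ) ((k:ℝ) * τ + y), ⌊x / τ⌋ = k ∧ ⌊(x - y) / τ⌋ = k - 1 := by
      intro x hx
      obtain ⟨hx1, hx2⟩ := hx
      constructor
      · exact floor_eq_of_mem hτ ⟨hx1, by nlinarith⟩
      · rw [Int.floor_eq_iff]
        push_cast
        constructor
        · rw [le_div_iff₀ hτ]; nlinarith
        · rw [div_lt_iff₀ hτ]; nlinarith
    have hfloor2 : ∀ x ∈ Ico ((k:ℝ) * τ + y) (((k:ℝ) + 1) * τ), ⌊x / τ⌋ = k ∧ ⌊(x - y) / τ⌋ = k := by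
      intro x hx
      obtain ⟨hx1, hx2⟩ := hx
      constructor
      · exact floor_eq_of_mem hτ ⟨by nlinarith, hx2⟩
      · exact floor_eq_of_mem hτ ⟨by nlinarith, by nlinarith⟩
    have h1 : (∫⁻ x in Ico ((k:ℝ) * τ) ((k:ℝ) * τ + y),
          ENNReal.ofReal ((projPC τ u x - projPC τ u (x - y)) ^ 2))
        = ENNReal.ofReal ((avg τ u k - avg τ u (k - 1)) ^ 2) * ENNReal.ofReal y := by
      have hval : ∀ x ∈ Ico ((k:ℝ) * τ) ((k:ℝ) * τ + y),
          ENNReal.ofReal ((projPC τ u x - projPC τ u (x - y)) ^ 2)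
            = ENNReal.ofReal ((avg τ u k - avg τ u (k - 1)) ^ 2) := by
        intro x hx
        rw [projPC_eq, projPC_eq, (hfloor1 x hx).1, (hfloor1 x hx).2]
      rw [setLIntegral_congr_fun measurableSet_Ico hval,
        setLIntegral_const, Real.volume_Ico, add_sub_cancel_left]
    have h2 : (∫⁻ x in Ico ((k:ℝ) * τ + y) (((k:ℝ) + 1) * τ),
          ENNReal.ofReal ((projPC τ u x - projPC τ u (x - y)) ^ 2)) = 0 := by
      rw [setLIntegral_congr_fun measurableSet_Ico (fun x hx => ?_)]
      · exact lintegral_zero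
      · rw [projPC_eq, projPC_eq, (hfloor2 x hx).1, (hfloor2 x hx).2]
        simp
    calc (∫⁻ x in Kiv τ k, ENNReal.ofReal ((projPC τ u x - projPC τ u (x - y)) ^ 2))
        = ENNReal.ofReal ((avg τ u k - avg τ u (k - 1)) ^ 2) * ENNReal.ofReal y := by
          rw [hsplit, lintegral_union measurableSet_Ico hdisj, h1, h2, add_zero]
      _ ≤ (4 * ∫⁻ t in Jiv τ (k - 1), ∫⁻ s in Jiv τ k,
            ENNReal.ofReal ((u t - u s) ^ 2 / |t - s| ^ 2)) * ENNReal.ofReal y :=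
          mul_le_mul_left (avg_diff_sq_le hτ hu hu2 k) _
      _ = ENNReal.ofReal y * (4 * ∫⁻ t in Jiv τ (k - 1), ∫⁻ s in Jiv τ k,
            ENNReal.ofReal ((u t - u s) ^ 2 / |t - s| ^ 2)) := mul_comm _ _
  have hshiftdisj : Pairwise (Function.onFun Disjoint fun k : ℤ => Jiv τ (k - 1)) := by
    intro k l hkl
    exact Jiv_disjoint hτ (by omega : k - 1 ≠ l - 1)
  calc sd (projPC τ u) y
      = ∑' k : ℤ, ∫⁻ x in Kiv τ k,
          ENNReal.ofReal ((projPC τ u x - projPC τ u (x - y)) ^ 2) := lintegral_eq_sum hτ _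
    _ ≤ ∑' k : ℤ, ENNReal.ofReal y * (4 * ∫⁻ t in Jiv τ (k - 1), ∫⁻ s in Jiv τ k,
          ENNReal.ofReal ((u t - u s) ^ 2 / |t - s| ^ 2)) := ENNReal.tsum_le_tsum hterm
    _ = ENNReal.ofReal y * (4 * ∑' k : ℤ, ∫⁻ t in Jiv τ (k - 1), ∫⁻ s in Jiv τ k,
          ENNReal.ofReal ((u t - u s) ^ 2 / |t - s| ^ 2)) := by
        rw [ENNReal.tsum_mul_left, ENNReal.tsum_mul_left]
    _ ≤ ENNReal.ofReal y * (4 * slobHalfSq u) := by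
        apply mul_le_mul_right
        apply mul_le_mul_right
        exact sum_double_le' _ hFm _ _ (fun k => measurableSet_Ioc) hshiftdisj
    _ = ENNReal.ofReal (4 * y) * slobHalfSq u := by
        rw [← mul_assoc, show (4:ENNReal) = ENNReal.ofReal 4 by norm_num,
          ← ENNReal.ofReal_mul hy0.le, mul_comm y 4]

lemma three_term (hτ : 0 < τ) (hu : Measurable u) (hu2 : MemLp u 2 volume) (y : ℝ) :
    sd (projPC τ u) y ≤ 6 * (∫⁻ x, ENNReal.ofReal ((u x - projPC τ u x) ^ 2)) + 3 * sd u y := by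
  set P := projPC τ u with hP
  have hPm : Measurable P := measurable_projPC u hτ
  have hm1 : Measurable fun x => ENNReal.ofReal (3 * (u x - P x) ^ 2) := by fun_prop
  have hm2 : Measurable fun x => ENNReal.ofReal (3 * (u x - u (x - y)) ^ 2) := by fun_prop
  have hm3 : Measurable fun x => ENNReal.ofReal ((u x - P x) ^ 2) := by fun_prop
  have hpt : ∀ x : ℝ, ENNReal.ofReal ((P x - P (x - y)) ^ 2)
      ≤ ENNReal.ofReal (3 * (u x - P x) ^ 2) + ENNReal.ofReal (3 * (u x - u (x - y)) ^ 2)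
        + ENNReal.ofReal (3 * (u (x - y) - P (x - y)) ^ 2) := by
    intro x
    rw [← ENNReal.ofReal_add (by positivity) (by positivity),
      ← ENNReal.ofReal_add (by positivity) (by positivity)]
    apply ENNReal.ofReal_le_ofReal
    nlinarith [sq_nonneg ((u x - P x) + (u x - u (x - y))),
      sq_nonneg ((u x - P x) + (u (x - y) - P (x - y))),
      sq_nonneg ((u x - u (x - y)) - (u (x - y) - P (x - y)))]
  have htrans : ∫⁻ x, ENNReal.ofReal ((u (x - y) - P (x - y)) ^ 2)
      = ∫⁻ x, ENNReal.ofReal ((u x - P x) ^ 2) :=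
    lintegral_comp_sub (fun x => ENNReal.ofReal ((u x - P x) ^ 2)) hm3 y
  have hc3 : ∀ (f : ℝ → ℝ), (∀ x, 0 ≤ f x) → (Measurable fun x => ENNReal.ofReal (f x)) →
      ∫⁻ x, ENNReal.ofReal (3 * f x) = 3 * ∫⁻ x, ENNReal.ofReal (f x) := by
    intro f hf hmf
    have : ∀ x, ENNReal.ofReal (3 * f x) = 3 * ENNReal.ofReal (f x) := by
      intro x
      rw [ENNReal.ofReal_mul (by norm_num)]
      norm_num
    simp only [this]
    exact lintegral_const_mul 3 hmf
  calc sd P y ≤ ∫⁻ x, (ENNReal.ofReal (3 * (u x - P x) ^ 2)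
        + ENNReal.ofReal (3 * (u x - u (x - y)) ^ 2)
        + ENNReal.ofReal (3 * (u (x - y) - P (x - y)) ^ 2)) := lintegral_mono hpt
    _ = (∫⁻ x, ENNReal.ofReal (3 * (u x - P x) ^ 2))
        + (∫⁻ x, ENNReal.ofReal (3 * (u x - u (x - y)) ^ 2))
        + ∫⁻ x, ENNReal.ofReal (3 * (u (x - y) - P (x - y)) ^ 2) := by
        rw [lintegral_add_left (f := fun x => ENNReal.ofReal (3 * (u x - P x) ^ 2) + ENNReal.ofReal (3 * (u x - u (x - y)) ^ 2)) (hm1.add hm2), lintegral_add_left hm1]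
    _ = 3 * (∫⁻ x, ENNReal.ofReal ((u x - P x) ^ 2)) + 3 * sd u y
        + 3 * ∫⁻ x, ENNReal.ofReal ((u (x - y) - P (x - y)) ^ 2) := by
        rw [hc3 _ (fun x => sq_nonneg _) hm3,
          hc3 _ (fun x => sq_nonneg _) (meas_sq_sub hu y),
          hc3 _ (fun x => sq_nonneg _) (by fun_prop)]
        rfl
    _ = 6 * (∫⁻ x, ENNReal.ofReal ((u x - P x) ^ 2)) + 3 * sd u y := by
        rw [htrans]
        ring

end Jump2
lemma main_meas {τ : ℝ} {u : ℝ → ℝ} (hτ : 0 < τ) (hu : Measurable u)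
    (hu2 : MemLp u 2 volume) (y : ℝ) :
    sd (projPC τ u) y ≤ ENNReal.ofReal (25 * |y|) * slobHalfSq u := by
  have hPm : Measurable (projPC τ u) := measurable_projPC u hτ
  have key : ∀ z : ℝ, 0 < z → sd (projPC τ u) z ≤ ENNReal.ofReal (25 * z) * slobHalfSq u := by
    intro z hz
    rcases lt_or_ge z τ with hzτ | hzτ
    · calc sd (projPC τ u) z ≤ ENNReal.ofReal (4 * z) * slobHalfSq u :=
            jump_bound hτ hu hu2 hz hzτ
        _ ≤ ENNReal.ofReal (25 * z) * slobHalfSq u :=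
            mul_le_mul_left (ENNReal.ofReal_le_ofReal (by linarith)) _
    · calc sd (projPC τ u) z
          ≤ 6 * (∫⁻ x, ENNReal.ofReal ((u x - projPC τ u x) ^ 2)) + 3 * sd u z :=
            three_term hτ hu hu2 z
        _ ≤ 6 * (ENNReal.ofReal τ * slobHalfSq u) +
            3 * (ENNReal.ofReal (4 * |z|) * slobHalfSq u) := by
            gcongr
            · exact err_bound hτ hu hu2
            · exact sd_le hu z
        _ ≤ ENNReal.ofReal (25 * z) * slobHalfSq u := by
            rw [abs_of_pos hz]
            have h6 : (6:ENNReal) * (ENNReal.ofReal τ * slobHalfSq u)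
                = ENNReal.ofReal (6 * τ) * slobHalfSq u := by
              rw [← mul_assoc, show (6:ENNReal) = ENNReal.ofReal 6 by norm_num,
                ← ENNReal.ofReal_mul (by norm_num)]
            have h3 : (3:ENNReal) * (ENNReal.ofReal (4 * z) * slobHalfSq u)
                = ENNReal.ofReal (12 * z) * slobHalfSq u := by
              rw [← mul_assoc, show (3:ENNReal) = ENNReal.ofReal 3 by norm_num,
                ← ENNReal.ofReal_mul (by norm_num), show (3:ℝ) * (4 * z) = 12 * z by ring]
            rw [h6, h3, ← add_mul, ← ENNReal.ofReal_add (by positivity) (by positivity)]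
            exact mul_le_mul_left (ENNReal.ofReal_le_ofReal (by linarith)) _
  rcases lt_trichotomy y 0 with hy | rfl | hy
  · rw [← sd_neg hPm, ← abs_of_neg hy] at *
    exact key |y| (abs_pos.mpr hy.ne)
  · simp [sd]
  · rw [abs_of_pos hy]
    exact key y hy
end ProjAux
/-- **Projection onto piecewise constants is bounded from `H^{1/2}` to weak `H^{1/2}`,
uniformly in `τ`:** there is `C > 0` such that for all `τ > 0` and all `u ∈ L²(ℝ)` with
finite Slobodetski seminorm, `‖P_τ u − (P_τ u)(· − y)‖_{L²}² ≤ C² |y| |u|²_{H^{1/2}}`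
for all `y ∈ ℝ`. -/
theorem projPC_weakHalf_bound :
    ∃ C > (0 : ℝ), ∀ τ : ℝ, 0 < τ → ∀ u : ℝ → ℝ, MemLp u 2 volume →
      slobHalfSq u < ⊤ →
      ∀ y : ℝ,
        (∫⁻ x : ℝ, ENNReal.ofReal ((projPC τ u x - projPC τ u (x - y)) ^ 2))
          ≤ ENNReal.ofReal (C ^ 2 * |y|) * slobHalfSq u := by
  refine ⟨5, by norm_num, fun τ hτ u hu2 _ y => ?_⟩
  have hsm := hu2.aestronglyMeasurable
  set v := hsm.mk u with hv
  have hvm : Measurable v := hsm.stronglyMeasurable_mk.measurable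
  have huv : u =ᵐ[volume] v := hsm.ae_eq_mk
  have hv2 : MeasureTheory.MemLp v 2 volume := hu2.ae_eq huv
  have hproj : projPC τ u = projPC τ v := by
    funext x
    simp only [projPC]
    congr 1
    exact integral_congr_ae (ae_restrict_of_ae huv)
  have hslob : slobHalfSq u = slobHalfSq v := by
    refine lintegral_congr_ae (huv.mono fun x hx => ?_)
    refine lintegral_congr_ae (huv.mono fun t ht => ?_)
    simp only [hx, ht]
  have h := ProjAux.main_meas hτ hvm hv2 y
  rw [show (5:ℝ) ^ 2 * |y| = 25 * |y| by norm_num, hslob, hproj]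
  exact h
end

section
/- There exists a constant C > 0 such that for every ε ∈ (0, 1/4] and every u ∈ L²(ℝ) with finite weak H^{1/2} seminorm, the Slobodetski H^{1/2−ε} seminorm satisfies |u|²_{H^{1/2−ε}} ≤ (C/ε) (‖u‖²_{L²} + |u|²_{H^{1/2}_w}). In particular the canonical injection of H^{1/2}_w(ℝ) into H^{1/2−ε}(ℝ) has norm of order ε^{−1/2} for small ε. -/
open MeasureTheory

/-- Squared Slobodetski `H^s` seminorm on `ℝ`, for `s ∈ (0,1)`. -/
noncomputable def slobSq (s : ℝ) (u : ℝ → ℝ) : ENNReal :=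
  ∫⁻ x : ℝ, ∫⁻ y : ℝ, ENNReal.ofReal ((u x - u y) ^ 2 / |x - y| ^ (1 + 2 * s))

section auxKey
open Set


lemma aux_ae_ne_zero : ∀ᵐ h : ℝ, h ≠ 0 := by
  refine ae_iff.mpr ?_
  simp only [ne_eq, not_not]
  have : {h : ℝ | h = 0} = {0} := by ext; simp
  rw [this]
  exact Real.volume_singleton

lemma key (ε : ℝ) (hε : 0 < ε) (hε4 : ε ≤ 1/4) (u : ℝ → ℝ) (hm : Measurable u)
    (M : ℝ) (hM : 0 ≤ M)
    (hsh : ∀ y : ℝ, (∫⁻ x : ℝ, ENNReal.ofReal ((u x - u (x - y))^2))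
        ≤ ENNReal.ofReal (M^2 * |y|)) :
    (∫⁻ x : ℝ, ∫⁻ y : ℝ, ENNReal.ofReal ((u x - u y) ^ 2 / |x - y| ^ (1 + 2 * (1/2 - ε))))
      ≤ ENNReal.ofReal (16 / ε) *
        ((∫⁻ x : ℝ, ENNReal.ofReal (u x ^ 2)) + ENNReal.ofReal (M^2)) := by
  set p : ℝ := 1 + 2 * (1/2 - ε) with hpdef
  have hp : p = 2 - 2*ε := by rw [hpdef]; ring
  have hp1 : 1 < p := by rw [hp]; linarith
  set A : ENNReal := ∫⁻ x : ℝ, ENNReal.ofReal (u x ^ 2) with hAdef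
  set I : ℝ → ENNReal := fun h => ∫⁻ x : ℝ, ENNReal.ofReal ((u x - u (x - h))^2) with hIdef
  have hIm : ∀ h : ℝ, Measurable (fun x : ℝ => ENNReal.ofReal ((u x - u (x - h))^2)) := by
    intro h
    exact ENNReal.measurable_ofReal.comp ((hm.sub (hm.comp (measurable_id.sub measurable_const))).pow_const 2)
  -- measurability of the 2-variable integrand
  have hGm : Measurable (fun q : ℝ × ℝ =>
      ENNReal.ofReal ((u q.1 - u (q.1 - q.2)) ^ 2 / |q.2| ^ p)) := by
    apply ENNReal.measurable_ofReal.comp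
    apply Measurable.div
    · exact ((hm.comp measurable_fst).sub (hm.comp (measurable_fst.sub measurable_snd))).pow_const 2
    · exact measurable_snd.abs.pow measurable_const
  -- Step 1: change of variables in the inner integral
  have step1 : (∫⁻ x : ℝ, ∫⁻ y : ℝ, ENNReal.ofReal ((u x - u y) ^ 2 / |x - y| ^ p))
      = ∫⁻ x : ℝ, ∫⁻ h : ℝ, ENNReal.ofReal ((u x - u (x - h)) ^ 2 / |h| ^ p) := by
    refine lintegral_congr fun x => ?_
    have := (Measure.measurePreserving_sub_left volume x).lintegral_comp
      (f := fun y : ℝ => ENNReal.ofReal ((u x - u y) ^ 2 / |x - y| ^ p)) ?_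
    · rw [← this]
      refine lintegral_congr fun h => ?_
      rw [sub_sub_cancel]
    · apply ENNReal.measurable_ofReal.comp
      apply Measurable.div
      · exact (measurable_const.sub hm).pow_const 2
      · exact (measurable_const.sub measurable_id).abs.pow measurable_const
  -- Step 2: Tonelli swap
  have step2 : (∫⁻ x : ℝ, ∫⁻ h : ℝ, ENNReal.ofReal ((u x - u (x - h)) ^ 2 / |h| ^ p))
      = ∫⁻ h : ℝ, ∫⁻ x : ℝ, ENNReal.ofReal ((u x - u (x - h)) ^ 2 / |h| ^ p) :=
    lintegral_lintegral_swap hGm.aemeasurable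
  -- Step 3: pull out the constant
  have step3 : (∫⁻ h : ℝ, ∫⁻ x : ℝ, ENNReal.ofReal ((u x - u (x - h)) ^ 2 / |h| ^ p))
      = ∫⁻ h : ℝ, I h * (ENNReal.ofReal (|h| ^ p))⁻¹ := by
    refine lintegral_congr_ae (aux_ae_ne_zero.mono fun h hh => ?_)
    have hc : (0:ℝ) < |h| ^ p := Real.rpow_pos_of_pos (abs_pos.mpr hh) p
    have : ∀ x : ℝ, ENNReal.ofReal ((u x - u (x - h)) ^ 2 / |h| ^ p)
        = ENNReal.ofReal ((u x - u (x - h)) ^ 2) * (ENNReal.ofReal (|h| ^ p))⁻¹ := by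
      intro x
      rw [div_eq_mul_inv, ENNReal.ofReal_mul (sq_nonneg _), ENNReal.ofReal_inv_of_pos hc]
    simp_rw [this]
    exact lintegral_mul_const _ (hIm h)
  -- bound : I h ≤ 4 * A
  have hI4 : ∀ h : ℝ, I h ≤ 4 * A := by
    intro h
    have pt : ∀ x : ℝ, ENNReal.ofReal ((u x - u (x - h))^2)
        ≤ 2 * ENNReal.ofReal (u x ^ 2) + 2 * ENNReal.ofReal (u (x - h) ^ 2) := by
      intro x
      have h1 : (u x - u (x - h))^2 ≤ 2 * u x ^ 2 + 2 * u (x - h) ^ 2 := by nlinarith [sq_nonneg (u x + u (x - h))]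
      calc ENNReal.ofReal ((u x - u (x - h))^2)
          ≤ ENNReal.ofReal (2 * u x ^ 2 + 2 * u (x - h) ^ 2) := ENNReal.ofReal_le_ofReal h1
        _ = 2 * ENNReal.ofReal (u x ^ 2) + 2 * ENNReal.ofReal (u (x - h) ^ 2) := by
            rw [ENNReal.ofReal_add (by positivity) (by positivity),
              ENNReal.ofReal_mul (by norm_num), ENNReal.ofReal_mul (by norm_num)]
            norm_num
    calc I h ≤ ∫⁻ x : ℝ, (2 * ENNReal.ofReal (u x ^ 2) + 2 * ENNReal.ofReal (u (x - h) ^ 2)) :=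
          lintegral_mono pt
      _ = 2 * A + 2 * A := by
          have m1 : Measurable fun x : ℝ => ENNReal.ofReal (u x ^ 2) :=
            ENNReal.measurable_ofReal.comp (hm.pow_const 2)
          have m2 : Measurable fun x : ℝ => ENNReal.ofReal (u (x - h) ^ 2) :=
            ENNReal.measurable_ofReal.comp ((hm.comp (measurable_id.sub measurable_const)).pow_const 2)
          rw [lintegral_add_left (m1.const_mul 2), lintegral_const_mul 2 m1,
            lintegral_const_mul 2 m2]
          congr 1
          congr 1
          exact lintegral_sub_right_eq_self (fun x => ENNReal.ofReal (u x ^ 2)) h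
      _ = 4 * A := by ring
  -- integral computations
  have hr : (-1:ℝ) < 1 - p := by rw [hp]; linarith
  have KR : (∫⁻ h in Icc (0:ℝ) 1, ENNReal.ofReal (|h| ^ (1 - p))) = ENNReal.ofReal (1/(2*ε)) := by
    have hcong : (∫⁻ h in Icc (0:ℝ) 1, ENNReal.ofReal (|h| ^ (1 - p)))
        = ∫⁻ h in Icc (0:ℝ) 1, ENNReal.ofReal (h ^ (1 - p)) := by
      refine lintegral_congr_ae ((ae_restrict_mem measurableSet_Icc).mono fun h hh => ?_)
      simp only [abs_of_nonneg hh.1]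
    have hint : IntegrableOn (fun h : ℝ => h ^ (1 - p)) (Icc (0:ℝ) 1) := by
      have := intervalIntegral.intervalIntegrable_rpow' (a := 0) (b := 1) hr
      rwa [intervalIntegrable_iff_integrableOn_Icc_of_le zero_le_one] at this
    have hnn : 0 ≤ᵐ[volume.restrict (Icc (0:ℝ) 1)] fun h : ℝ => h ^ (1 - p) :=
      (ae_restrict_mem measurableSet_Icc).mono fun h hh => Real.rpow_nonneg hh.1 _
    have hval : (∫ h in Icc (0:ℝ) 1, h ^ (1 - p)) = 1/(2*ε) := by
      rw [integral_Icc_eq_integral_Ioc, ← intervalIntegral.integral_of_le zero_le_one,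
        integral_rpow (Or.inl hr)]
      have h2 : 1 - p + 1 = 2*ε := by rw [hp]; ring
      have h3 : (2*ε) ≠ 0 := by positivity
      rw [h2, Real.one_rpow, Real.zero_rpow h3]
      norm_num
    rw [hcong, ← ofReal_integral_eq_lintegral_ofReal hint hnn, hval]
  have KL : (∫⁻ h in Icc (-1:ℝ) 0, ENNReal.ofReal (|h| ^ (1 - p)))
      = ∫⁻ h in Icc (0:ℝ) 1, ENNReal.ofReal (|h| ^ (1 - p)) := by
    have hpre : (Neg.neg ⁻¹' (Icc (-1:ℝ) 0)) = Icc (0:ℝ) 1 := by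
      ext x
      simp only [mem_preimage, mem_Icc]
      constructor <;> intro hx <;> constructor <;> linarith [hx.1, hx.2]
    have := (Measure.measurePreserving_neg (volume : Measure ℝ)).setLIntegral_comp_preimage_emb
      (Homeomorph.neg ℝ).measurableEmbedding
      (fun b : ℝ => ENNReal.ofReal (|b| ^ (1 - p))) (Icc (-1:ℝ) 0)
    rw [hpre] at this
    rw [← this]
    refine lintegral_congr fun x => ?_
    simp only [abs_neg]
  have JS : (∫⁻ h in Icc (-1:ℝ) 1, ENNReal.ofReal (|h| ^ (1 - p))) ≤ ENNReal.ofReal (1/ε) := by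
    have hun : Icc (-1:ℝ) 1 = Icc (-1:ℝ) 0 ∪ Icc (0:ℝ) 1 :=
      (Icc_union_Icc_eq_Icc (by norm_num) (by norm_num)).symm
    calc (∫⁻ h in Icc (-1:ℝ) 1, ENNReal.ofReal (|h| ^ (1 - p)))
        ≤ (∫⁻ h in Icc (-1:ℝ) 0, ENNReal.ofReal (|h| ^ (1 - p)))
          + ∫⁻ h in Icc (0:ℝ) 1, ENNReal.ofReal (|h| ^ (1 - p)) := by
          rw [hun]; exact lintegral_union_le _ _ _
      _ = ENNReal.ofReal (1/(2*ε)) + ENNReal.ofReal (1/(2*ε)) := by rw [KL, KR]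
      _ = ENNReal.ofReal (1/ε) := by
          rw [← ENNReal.ofReal_add (by positivity) (by positivity)]
          congr 1
          rw [← add_div, div_eq_div_iff (by positivity) (by positivity)]
          ring
  have KR2 : (∫⁻ h in Ioi (1:ℝ), ENNReal.ofReal (|h| ^ (-p))) ≤ 2 := by
    have hcong : (∫⁻ h in Ioi (1:ℝ), ENNReal.ofReal (|h| ^ (-p)))
        = ∫⁻ h in Ioi (1:ℝ), ENNReal.ofReal (h ^ (-p)) := by
      refine lintegral_congr_ae ((ae_restrict_mem measurableSet_Ioi).mono fun h hh => ?_)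
      simp only [abs_of_pos (lt_trans one_pos (mem_Ioi.mp hh))]
    have hplt : -p < -1 := by linarith
    have hint : IntegrableOn (fun h : ℝ => h ^ (-p)) (Ioi (1:ℝ)) :=
      integrableOn_Ioi_rpow_of_lt hplt one_pos
    have hnn : 0 ≤ᵐ[volume.restrict (Ioi (1:ℝ))] fun h : ℝ => h ^ (-p) :=
      (ae_restrict_mem measurableSet_Ioi).mono fun h hh =>
        Real.rpow_nonneg (le_of_lt (lt_trans one_pos hh)) _
    have hval : (∫ h in Ioi (1:ℝ), h ^ (-p)) = 1/(p-1) := by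
      rw [integral_Ioi_rpow_of_lt hplt one_pos, Real.one_rpow]
      rw [div_eq_div_iff (by intro hc0; linarith [hc0]; ) (by intro hc0; linarith [hc0])]
      ring
    have hle : (1:ℝ)/(p-1) ≤ 2 := by
      rw [hp, div_le_iff₀ (by linarith)]
      linarith
    rw [hcong, ← ofReal_integral_eq_lintegral_ofReal hint hnn, hval]
    calc ENNReal.ofReal (1/(p-1)) ≤ ENNReal.ofReal 2 := ENNReal.ofReal_le_ofReal hle
      _ = 2 := by norm_num
  have KL2 : (∫⁻ h in Iio (-1:ℝ), ENNReal.ofReal (|h| ^ (-p)))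
      = ∫⁻ h in Ioi (1:ℝ), ENNReal.ofReal (|h| ^ (-p)) := by
    have hpre : (Neg.neg ⁻¹' (Iio (-1:ℝ))) = Ioi (1:ℝ) := by
      ext x
      simp only [mem_preimage, mem_Iio, mem_Ioi]
      constructor <;> intro hx <;> linarith
    have := (Measure.measurePreserving_neg (volume : Measure ℝ)).setLIntegral_comp_preimage_emb
      (Homeomorph.neg ℝ).measurableEmbedding
      (fun b : ℝ => ENNReal.ofReal (|b| ^ (-p))) (Iio (-1:ℝ))
    rw [hpre] at this
    rw [← this]
    refine lintegral_congr fun x => ?_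
    simp only [abs_neg]
  have JC : (∫⁻ h in (Icc (-1:ℝ) 1)ᶜ, ENNReal.ofReal (|h| ^ (-p))) ≤ 4 := by
    have hsub : (Icc (-1:ℝ) 1)ᶜ ⊆ Iio (-1:ℝ) ∪ Ioi (1:ℝ) := by
      intro x hx
      simp only [mem_compl_iff, mem_Icc, not_and_or, not_le] at hx
      rcases hx with hx | hx
      · exact Or.inl hx
      · exact Or.inr hx
    calc (∫⁻ h in (Icc (-1:ℝ) 1)ᶜ, ENNReal.ofReal (|h| ^ (-p)))
        ≤ ∫⁻ h in Iio (-1:ℝ) ∪ Ioi (1:ℝ), ENNReal.ofReal (|h| ^ (-p)) :=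
          lintegral_mono_set hsub
      _ ≤ (∫⁻ h in Iio (-1:ℝ), ENNReal.ofReal (|h| ^ (-p)))
          + ∫⁻ h in Ioi (1:ℝ), ENNReal.ofReal (|h| ^ (-p)) := lintegral_union_le _ _ _
      _ ≤ 2 + 2 := by rw [KL2]; exact add_le_add KR2 KR2
      _ = 4 := by norm_num
  -- bound on the near part
  have bound1 : (∫⁻ h in Icc (-1:ℝ) 1, I h * (ENNReal.ofReal (|h| ^ p))⁻¹)
      ≤ ENNReal.ofReal (M^2 / ε) := by
    have hmono : ∀ᵐ h ∂(volume.restrict (Icc (-1:ℝ) 1)),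
        I h * (ENNReal.ofReal (|h| ^ p))⁻¹
          ≤ ENNReal.ofReal (M^2) * ENNReal.ofReal (|h| ^ (1 - p)) := by
      refine ae_restrict_of_ae (aux_ae_ne_zero.mono fun h hh => ?_)
      have habs : (0:ℝ) < |h| := abs_pos.mpr hh
      have hc : (0:ℝ) < |h| ^ p := Real.rpow_pos_of_pos habs p
      calc I h * (ENNReal.ofReal (|h| ^ p))⁻¹
          ≤ ENNReal.ofReal (M^2 * |h|) * (ENNReal.ofReal (|h| ^ p))⁻¹ :=
            mul_le_mul_left (hsh h) _
        _ = ENNReal.ofReal (M^2) * ENNReal.ofReal (|h| ^ (1 - p)) := by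
            rw [← ENNReal.ofReal_inv_of_pos hc, ← ENNReal.ofReal_mul (by positivity),
              ← ENNReal.ofReal_mul (sq_nonneg M)]
            congr 1
            rw [Real.rpow_sub habs, Real.rpow_one]
            ring
    calc (∫⁻ h in Icc (-1:ℝ) 1, I h * (ENNReal.ofReal (|h| ^ p))⁻¹)
        ≤ ∫⁻ h in Icc (-1:ℝ) 1, ENNReal.ofReal (M^2) * ENNReal.ofReal (|h| ^ (1 - p)) :=
          lintegral_mono_ae hmono
      _ = ENNReal.ofReal (M^2) * ∫⁻ h in Icc (-1:ℝ) 1, ENNReal.ofReal (|h| ^ (1 - p)) :=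
          lintegral_const_mul' _ _ ENNReal.ofReal_ne_top
      _ ≤ ENNReal.ofReal (M^2) * ENNReal.ofReal (1/ε) := mul_le_mul_right JS _
      _ = ENNReal.ofReal (M^2 / ε) := by
          rw [← ENNReal.ofReal_mul (sq_nonneg M)]
          congr 1; ring
  -- bound on the far part
  have bound2 : (∫⁻ h in (Icc (-1:ℝ) 1)ᶜ, I h * (ENNReal.ofReal (|h| ^ p))⁻¹)
      ≤ 16 * A := by
    have hmono : ∀ᵐ h ∂(volume.restrict (Icc (-1:ℝ) 1)ᶜ),
        I h * (ENNReal.ofReal (|h| ^ p))⁻¹ ≤ (4 * A) * ENNReal.ofReal (|h| ^ (-p)) := by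
      refine (ae_restrict_mem measurableSet_Icc.compl).mono fun h hh => ?_
      have habs : (1:ℝ) < |h| := by
        simp only [mem_compl_iff, mem_Icc, not_and_or, not_le] at hh
        rcases hh with hh | hh
        · rw [abs_of_neg (by linarith)]; linarith
        · rw [abs_of_pos (by linarith)]; linarith
      have habs0 : (0:ℝ) < |h| := by linarith
      have hc : (0:ℝ) < |h| ^ p := Real.rpow_pos_of_pos habs0 p
      have : (ENNReal.ofReal (|h| ^ p))⁻¹ = ENNReal.ofReal (|h| ^ (-p)) := by
        rw [← ENNReal.ofReal_inv_of_pos hc, Real.rpow_neg (le_of_lt habs0)]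
      rw [this]
      exact mul_le_mul_left (hI4 h) _
    calc (∫⁻ h in (Icc (-1:ℝ) 1)ᶜ, I h * (ENNReal.ofReal (|h| ^ p))⁻¹)
        ≤ ∫⁻ h in (Icc (-1:ℝ) 1)ᶜ, (4 * A) * ENNReal.ofReal (|h| ^ (-p)) :=
          lintegral_mono_ae hmono
      _ = (4 * A) * ∫⁻ h in (Icc (-1:ℝ) 1)ᶜ, ENNReal.ofReal (|h| ^ (-p)) :=
          lintegral_const_mul _ (ENNReal.measurable_ofReal.comp (measurable_id.abs.pow measurable_const))
      _ ≤ (4 * A) * 4 := mul_le_mul_right JC _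
      _ = 16 * A := by ring
  -- assemble
  calc (∫⁻ x : ℝ, ∫⁻ y : ℝ, ENNReal.ofReal ((u x - u y) ^ 2 / |x - y| ^ p))
      = ∫⁻ h : ℝ, I h * (ENNReal.ofReal (|h| ^ p))⁻¹ := by rw [step1, step2, step3]
    _ = (∫⁻ h in Icc (-1:ℝ) 1, I h * (ENNReal.ofReal (|h| ^ p))⁻¹)
        + ∫⁻ h in (Icc (-1:ℝ) 1)ᶜ, I h * (ENNReal.ofReal (|h| ^ p))⁻¹ :=
        (lintegral_add_compl _ measurableSet_Icc).symm
    _ ≤ ENNReal.ofReal (M^2 / ε) + 16 * A := add_le_add bound1 bound2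
    _ ≤ ENNReal.ofReal (16 / ε) * (A + ENNReal.ofReal (M^2)) := by
        rw [mul_add]
        rw [add_comm (ENNReal.ofReal (16 / ε) * A)]
        refine add_le_add ?_ ?_
        · rw [← ENNReal.ofReal_mul (by positivity)]
          apply ENNReal.ofReal_le_ofReal
          have h1 : 16 / ε * M ^ 2 = (16 * M ^ 2) / ε := by ring
          rw [h1]
          gcongr
          nlinarith [sq_nonneg M]
        · refine mul_le_mul_left ?_ A
          have : (16:ENNReal) = ENNReal.ofReal 16 := by norm_num
          rw [this]
          apply ENNReal.ofReal_le_ofReal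
          rw [le_div_iff₀ hε]; linarith

end auxKey

/-- **The injection `H^{1/2}_w(ℝ) ↪ H^{1/2−ε}(ℝ)` has norm of order `ε^{−1/2}`:**
there is `C > 0` such that for every `ε ∈ (0, 1/4]` and every `u ∈ L²(ℝ)` whose weak
`H^{1/2}` seminorm is bounded by `M` (i.e. `‖u − u(· − y)‖²_{L²} ≤ M² |y|` for all `y`),
one has `|u|²_{H^{1/2−ε}} ≤ (C/ε) (‖u‖²_{L²} + M²)`. -/
theorem weakHalf_into_HhalfSubEps :
    ∃ C > (0 : ℝ), ∀ ε : ℝ, 0 < ε → ε ≤ 1 / 4 →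
      ∀ u : ℝ → ℝ, MemLp u 2 volume →
      ∀ M : ℝ, 0 ≤ M →
        (∀ y : ℝ, (∫⁻ x : ℝ, ENNReal.ofReal ((u x - u (x - y)) ^ 2))
            ≤ ENNReal.ofReal (M ^ 2 * |y|)) →
        slobSq (1 / 2 - ε) u
          ≤ ENNReal.ofReal (C / ε) *
              ((∫⁻ x : ℝ, ENNReal.ofReal ((u x) ^ 2)) + ENNReal.ofReal (M ^ 2)) := by
  refine ⟨16, by norm_num, ?_⟩
  intro ε hε hε4 u hu M hM hsh
  set v : ℝ → ℝ := hu.aestronglyMeasurable.mk u with hvdef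
  have hvm : Measurable v := hu.aestronglyMeasurable.stronglyMeasurable_mk.measurable
  have huv : u =ᵐ[volume] v := hu.aestronglyMeasurable.ae_eq_mk
  have hsh' : ∀ y : ℝ, (∫⁻ x : ℝ, ENNReal.ofReal ((v x - v (x - y)) ^ 2))
      ≤ ENNReal.ofReal (M ^ 2 * |y|) := by
    intro y
    have h1 : ∀ᵐ x : ℝ, u (x - y) = v (x - y) :=
      (measurePreserving_sub_right volume y).quasiMeasurePreserving.ae huv
    have h2 : (∫⁻ x : ℝ, ENNReal.ofReal ((v x - v (x - y)) ^ 2))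
        = ∫⁻ x : ℝ, ENNReal.ofReal ((u x - u (x - y)) ^ 2) := by
      refine lintegral_congr_ae ?_
      filter_upwards [huv, h1] with x hx hxy
      rw [hx, hxy]
    rw [h2]
    exact hsh y
  have hA : (∫⁻ x : ℝ, ENNReal.ofReal (u x ^ 2)) = ∫⁻ x : ℝ, ENNReal.ofReal (v x ^ 2) :=
    lintegral_congr_ae (huv.mono fun x hx => by simp only [hx])
  have hslob : slobSq (1 / 2 - ε) u = slobSq (1 / 2 - ε) v := by
    unfold slobSq
    refine lintegral_congr_ae (huv.mono fun x hx => ?_)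
    refine lintegral_congr_ae (huv.mono fun y hy => ?_)
    simp only [hx, hy]
  rw [hslob, hA]
  exact key ε hε hε4 v hvm M hM hsh'
end

section
/- There exists a constant C > 0, independent of α, β, τ and N, with the following property. Let α, β, τ > 0, let N ≥ 1 be an integer, and set T = Nτ. Let u : [0,T] → ℝ be continuous, affine on each interval [kτ, (k+1)τ] (0 ≤ k < N), with u(0) = u(T) = 0, and let v : [0,T] → ℝ be its upwinded interpolant, i.e. v is continuous, v(kτ) = u(kτ) for all 0 ≤ k ≤ N, and on each interval [kτ, (k+1)τ] there exist constants c₁, c₂ with v(t) = c₁ + c₂ exp(−βt/α). Then (1/C) ∫₀ᵀ |u|² ≤ ∫₀ᵀ |v|² ≤ C ∫₀ᵀ |u|². -/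
open MeasureTheory

set_option maxHeartbeats 1000000

lemma affine_sq_integral (c₁ c₂ p τ : ℝ) :
    ∫ t in p..(p + τ), (c₁ + c₂ * t) ^ 2
      = τ * ((c₁ + c₂*p)^2 + (c₁ + c₂*p)*(c₁ + c₂*(p+τ)) + (c₁ + c₂*(p+τ))^2) / 3 := by
  have h : ∀ t : ℝ, (c₁ + c₂ * t)^2 = c₂^2 * t^2 + 2*c₁*c₂ * t + c₁^2 := fun t => by ring
  simp_rw [h]
  rw [intervalIntegral.integral_add (by apply Continuous.intervalIntegrable; continuity)
        (by apply Continuous.intervalIntegrable; continuity),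
      intervalIntegral.integral_add (by apply Continuous.intervalIntegrable; continuity)
        (by apply Continuous.intervalIntegrable; continuity),
      intervalIntegral.integral_const_mul, intervalIntegral.integral_const_mul,
      integral_pow, integral_id, intervalIntegral.integral_const, smul_eq_mul]
  push_cast
  ring

lemma upper_const (f : ℝ → ℝ) (hf : Continuous f) (p q M : ℝ) (h : p ≤ q)
    (hM : ∀ t ∈ Set.Icc p q, f t ≤ M) : ∫ t in p..q, f t ≤ (q - p) * M := by
  have := intervalIntegral.integral_mono_on (μ := volume) h (hf.intervalIntegrable p q)
    (intervalIntegrable_const) hM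
  simpa using this

lemma sq_le_of_between {a b v : ℝ} (h : 0 ≤ (v - b) * (a - v)) : v^2 ≤ a^2 + b^2 := by
  nlinarith [sq_nonneg (a - b), sq_nonneg (a + b - v), sq_nonneg v, sq_nonneg (a+b)]

lemma exp_cont (α β c₁ c₂ : ℝ) : Continuous (fun t => (c₁ + c₂ * Real.exp (-(β*t)/α))^2) := by
  fun_prop

lemma split_lower (f : ℝ → ℝ) (hf : Continuous f) (hnn : ∀ t, 0 ≤ f t)
    (p r s q : ℝ) (h1 : p ≤ r) (h2 : r ≤ s) (h3 : s ≤ q) (m₁ m₂ : ℝ)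
    (hm1 : ∀ t ∈ Set.Icc p r, m₁ ≤ f t) (hm2 : ∀ t ∈ Set.Icc s q, m₂ ≤ f t) :
    (r - p) * m₁ + (q - s) * m₂ ≤ ∫ t in p..q, f t := by
  have hi : ∀ x y : ℝ, IntervalIntegrable f volume x y :=
    fun x y => hf.intervalIntegrable x y
  have e1 : (∫ t in p..r, f t) + ∫ t in r..q, f t = ∫ t in p..q, f t :=
    intervalIntegral.integral_add_adjacent_intervals (hi _ _) (hi _ _)
  have e2 : (∫ t in r..s, f t) + ∫ t in s..q, f t = ∫ t in r..q, f t :=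
    intervalIntegral.integral_add_adjacent_intervals (hi _ _) (hi _ _)
  have b1 : (r - p) * m₁ ≤ ∫ t in p..r, f t := by
    have := intervalIntegral.integral_mono_on h1 (intervalIntegrable_const) (hi _ _) hm1
    simpa using this
  have b2 : (q - s) * m₂ ≤ ∫ t in s..q, f t := by
    have := intervalIntegral.integral_mono_on h3 (intervalIntegrable_const) (hi _ _) hm2
    simpa using this
  have b3 : (0:ℝ) ≤ ∫ t in r..s, f t :=
    intervalIntegral.integral_nonneg h2 (fun t _ => hnn t)
  linarith

lemma sq_le_sq_of_nonneg' {x u : ℝ} (h0 : 0 ≤ x) (h : x ≤ u) : x^2 ≤ u^2 := by nlinarith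

lemma layer_poly {θ σ : ℝ} (hθ0 : 0 < θ) (hθ4 : θ < 1/4) (hσ0 : 0 < σ) (hσ1 : σ < 1) :
    (3*(θ*(1-σ^2))+σ^2)*σ ≤ θ*(1-σ^2)+σ^2 := by
  have h1σ : 0 < 1 - σ^2 := by nlinarith
  rcases le_or_gt σ (1/3) with hc | hc
  · nlinarith [mul_nonneg (mul_nonneg hθ0.le h1σ.le) (by linarith : (0:ℝ) ≤ 1-3*σ),
      mul_nonneg (sq_nonneg σ) (by linarith : (0:ℝ) ≤ 1-σ)]
  · nlinarith [mul_nonneg (mul_nonneg h1σ.le (by linarith : (0:ℝ) ≤ 1/4 - θ))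
        (by linarith : (0:ℝ) ≤ 3*σ-1),
      pow_nonneg (by linarith : (0:ℝ) ≤ 1-σ) 3]

lemma sq_quarter_of_small {b d : ℝ} (h : d^2 ≤ b^2/4) : b^2/4 ≤ (b+d)^2 := by
  nlinarith [sq_nonneg (b + 2*d)]

lemma sq_quarter_of_large {b d : ℝ} (h : (3/2)*|b| ≤ |d|) : b^2/4 ≤ (b+d)^2 := by
  have hbd : -(|b| * |d|) ≤ b*d := by
    have h2 := neg_abs_le (b*d); rwa [abs_mul] at h2
  nlinarith [mul_nonneg (by linarith : (0:ℝ) ≤ |d| - (3/2)*|b|)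
      (by nlinarith [abs_nonneg b] : (0:ℝ) ≤ |d| - (1/2)*|b|),
    sq_abs b, sq_abs d, abs_nonneg b, abs_nonneg d]

lemma exp_sq_lower (α β p τ a b c₁ c₂ : ℝ) (hα : 0 < α) (hβ : 0 < β) (hτ : 0 < τ)
    (ha : c₁ + c₂ * Real.exp (-(β*p)/α) = a)
    (hb : c₁ + c₂ * Real.exp (-(β*(p+τ))/α) = b) :
    τ * b^2 / 16 ≤ ∫ t in p..(p+τ), (c₁ + c₂ * Real.exp (-(β*t)/α))^2 := by
  have hnn : ∀ t : ℝ, 0 ≤ (c₁ + c₂ * Real.exp (-(β*t)/α))^2 := fun t => sq_nonneg _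
  have hfc := exp_cont α β c₁ c₂
  set q0 : ℝ := Real.exp (-(β*p)/α) with hq0
  set q1 : ℝ := Real.exp (-(β*(p+τ))/α) with hq1
  clear_value q0 q1
  have hq0pos : 0 < q0 := by rw [hq0]; exact Real.exp_pos _
  have hq1pos : 0 < q1 := by rw [hq1]; exact Real.exp_pos _
  have hD : 0 < q0 - q1 := by
    have : q1 < q0 := by
      rw [hq0, hq1]
      apply Real.exp_lt_exp.2
      rw [div_lt_div_iff_of_pos_right hα]
      nlinarith
    linarith
  have hab : c₂ * (q0 - q1) = a - b := by rw [← ha, ← hb]; ring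
  have hvt : ∀ t : ℝ, c₁ + c₂ * Real.exp (-(β*t)/α)
      = b + c₂ * (Real.exp (-(β*t)/α) - q1) := by
    intro t; rw [← hb]; ring
  have hEmono : ∀ {x y : ℝ}, x ≤ y → Real.exp (-(β*y)/α) ≤ Real.exp (-(β*x)/α) := by
    intro x y hxy
    apply Real.exp_le_exp.2
    rw [div_le_div_iff_of_pos_right hα]
    nlinarith
  have lt_of_exp : ∀ {x y : ℝ}, Real.exp (-(β*y)/α) < Real.exp (-(β*x)/α) → x < y := by
    intro x y h
    have h2 := Real.exp_lt_exp.1 h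
    rw [div_lt_div_iff_of_pos_right hα] at h2
    nlinarith
  rcases eq_or_ne b 0 with hb0 | hb0
  · rw [hb0]
    simpa using intervalIntegral.integral_nonneg (by linarith : p ≤ p + τ) (fun t _ => hnn t)
  rcases le_or_gt ((a-b)^2) (4*b^2) with hcase | hcase
  · -- Case A : |a-b| ≤ 2|b|, use right quarter interval
    have hm2 : ∀ t ∈ Set.Icc (p + 3*τ/4) (p+τ), b^2/4 ≤ (c₁ + c₂ * Real.exp (-(β*t)/α))^2 := by
      intro t ht
      obtain ⟨ht1, ht2⟩ := ht
      have hq1le : q1 ≤ Real.exp (-(β*t)/α) := by rw [hq1]; exact hEmono ht2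
      -- convexity of exp
      set μ : ℝ := (p + τ - t)/τ with hμ
      clear_value μ
      have hμ0 : 0 ≤ μ := by rw [hμ]; exact div_nonneg (by linarith) hτ.le
      have hμ4 : μ ≤ 1/4 := by rw [hμ, div_le_iff₀ hτ]; linarith
      have harg : -(β*t)/α = μ * (-(β*p)/α) + (1-μ) * (-(β*(p+τ))/α) := by
        rw [hμ]; field_simp; ring
      have hconv := convexOn_exp.2 (Set.mem_univ (-(β*p)/α)) (Set.mem_univ (-(β*(p+τ))/α))
        hμ0 (by linarith : (0:ℝ) ≤ 1 - μ) (by ring : μ + (1 - μ) = 1)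
      rw [smul_eq_mul, smul_eq_mul, smul_eq_mul, smul_eq_mul, ← harg] at hconv
      -- hconv : Real.exp (-(β*t)/α) ≤ μ * q0 + (1-μ) * q1
      have hxu : Real.exp (-(β*t)/α) - q1 ≤ (q0 - q1)/4 := by
        have h6 := mul_le_mul_of_nonneg_right hμ4 hD.le
        nlinarith [h6, hconv]
      have hx0 : 0 ≤ Real.exp (-(β*t)/α) - q1 := by linarith
      have hd2 : (c₂ * (Real.exp (-(β*t)/α) - q1))^2 ≤ b^2/4 := by
        have hx2 : (Real.exp (-(β*t)/α) - q1)^2 ≤ ((q0-q1)/4)^2 :=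
          sq_le_sq_of_nonneg' hx0 hxu
        calc (c₂ * (Real.exp (-(β*t)/α) - q1))^2
            = c₂^2 * (Real.exp (-(β*t)/α) - q1)^2 := by ring
          _ ≤ c₂^2 * ((q0-q1)/4)^2 := mul_le_mul_of_nonneg_left hx2 (sq_nonneg c₂)
          _ = (c₂*(q0-q1))^2/16 := by ring
          _ = (a-b)^2/16 := by rw [hab]
          _ ≤ b^2/4 := by linarith
      rw [hvt t]
      exact sq_quarter_of_small hd2
    have hsplit := split_lower _ hfc hnn p p (p + 3*τ/4) (p+τ) le_rfl (by linarith)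
      (by linarith) 0 (b^2/4) (fun t _ => hnn t) hm2
    nlinarith [hsplit]
  · -- Case B : |a-b| > 2|b|, boundary layer argument
    have hbpos : 0 < |b| := abs_pos.2 hb0
    have hane : a - b ≠ 0 := by
      intro h; rw [h] at hcase; simp at hcase; nlinarith
    have hGpos : 0 < |a - b| := abs_pos.2 hane
    have h2b : 2*|b| < |a-b| := by
      nlinarith [sq_abs b, sq_abs (a-b), abs_nonneg b, abs_nonneg (a-b)]
    set θ : ℝ := |b|/(2*|a-b|) with hθ
    clear_value θ
    have hθpos : 0 < θ := by rw [hθ]; positivity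
    have hθ4 : θ < 1/4 := by rw [hθ, div_lt_iff₀ (by positivity)]; linarith
    -- σ and the relation q1 = q0 σ²
    set σ : ℝ := Real.exp (-(β*(τ/2))/α) with hσ
    clear_value σ
    have hσpos : 0 < σ := by rw [hσ]; exact Real.exp_pos _
    have hσ1 : σ < 1 := by
      rw [hσ]
      have h := Real.exp_lt_exp.2 (show -(β*(τ/2))/α < 0 by
        apply div_neg_of_neg_of_pos _ hα; nlinarith)
      simpa [Real.exp_zero] using h
    have hq1q0 : q1 = q0 * σ^2 := by
      rw [hq0, hq1, hσ, sq, ← Real.exp_add, ← Real.exp_add]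
      congr 1
      field_simp
      ring
    -- levels and layer points
    set w₁ : ℝ := θ*(q0-q1) + q1 with hw₁
    set w₂ : ℝ := 3*θ*(q0-q1) + q1 with hw₂
    clear_value w₁ w₂
    have hw₁pos : 0 < w₁ := by rw [hw₁]; positivity
    have hw₂pos : 0 < w₂ := by rw [hw₂]; positivity
    have hθD : 0 < θ*(q0-q1) := mul_pos hθpos hD
    have hw₁₂ : w₁ ≤ w₂ := by rw [hw₁, hw₂]; linarith
    have hw₂q0 : w₂ < q0 := by
      rw [hw₂]
      have h6 := mul_pos (by linarith : (0:ℝ) < 1-3*θ) hD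
      nlinarith
    have hq1w₁ : q1 < w₁ := by rw [hw₁]; linarith
    set r : ℝ := -(α * Real.log w₂)/β with hr
    set s : ℝ := -(α * Real.log w₁)/β with hs
    clear_value r s
    have hEr : Real.exp (-(β*r)/α) = w₂ := by
      rw [hr, show -(β * (-(α * Real.log w₂)/β))/α = Real.log w₂ by field_simp]
      exact Real.exp_log hw₂pos
    have hEs : Real.exp (-(β*s)/α) = w₁ := by
      rw [hs, show -(β * (-(α * Real.log w₁)/β))/α = Real.log w₁ by field_simp]
      exact Real.exp_log hw₁pos
    have hpr : p < r := lt_of_exp (by rw [hEr, ← hq0]; exact hw₂q0)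
    have hrs : r ≤ s := by
      rcases eq_or_lt_of_le hw₁₂ with h | h
      · rw [hr, hs, h]
      · exact le_of_lt (lt_of_exp (by rw [hEr, hEs]; exact h))
    have hsq : s < p + τ := lt_of_exp (by rw [hEs, ← hq1]; exact hq1w₁)
    -- the gap bound s - r ≤ τ/2
    have hkey : w₂ * σ ≤ w₁ := by
      have hpoly := layer_poly hθpos hθ4 hσpos hσ1
      calc w₂ * σ = q0*((3*(θ*(1-σ^2))+σ^2)*σ) := by rw [hw₂, hq1q0]; ring
        _ ≤ q0*(θ*(1-σ^2)+σ^2) := mul_le_mul_of_nonneg_left hpoly hq0pos.le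
        _ = w₁ := by rw [hw₁, hq1q0]; ring
    have hgap : s - r ≤ τ/2 := by
      have hlog : Real.log w₂ - Real.log w₁ ≤ β*(τ/2)/α := by
        have h1 : Real.log (w₂*σ) ≤ Real.log w₁ := Real.log_le_log (by positivity) hkey
        rw [Real.log_mul (ne_of_gt hw₂pos) (ne_of_gt hσpos), hσ, Real.log_exp] at h1
        rw [neg_div] at h1
        linarith
      have hsr : s - r = α*(Real.log w₂ - Real.log w₁)/β := by rw [hr, hs]; field_simp; ring
      rw [hsr]
      rw [div_le_iff₀ hβ]
      have := mul_le_mul_of_nonneg_left hlog hα.le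
      have he : α * (β*(τ/2)/α) = τ/2*β := by field_simp
      linarith [he ▸ this]
    have hm1 : ∀ t ∈ Set.Icc p r, b^2/4 ≤ (c₁ + c₂ * Real.exp (-(β*t)/α))^2 := by
      intro t ht
      have hx : w₂ ≤ Real.exp (-(β*t)/α) := by rw [← hEr]; exact hEmono ht.2
      set d : ℝ := c₂ * (Real.exp (-(β*t)/α) - q1) with hd
      clear_value d
      have hxq : 3*θ*(q0-q1) ≤ Real.exp (-(β*t)/α) - q1 := by rw [hw₂] at hx; linarith
      have habs : 3*θ*|a-b| ≤ |d| := by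
        rw [hd, abs_mul, abs_of_nonneg (le_trans (by linarith :
          (0:ℝ) ≤ 3*θ*(q0-q1)) hxq)]
        have h1 : |a-b| = |c₂| * (q0-q1) := by rw [← hab, abs_mul, abs_of_pos hD]
        rw [h1]
        calc 3*θ*(|c₂| * (q0-q1)) = |c₂| * (3*θ*(q0-q1)) := by ring
          _ ≤ |c₂| * (Real.exp (-(β*t)/α) - q1) := mul_le_mul_of_nonneg_left hxq (abs_nonneg c₂)
      have hθab : θ*|a-b| = |b|/2 := by
        rw [hθ]
        field_simp
      have hY : (3/2)*|b| ≤ |d| := by linarith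
      rw [hvt t, ← hd]
      exact sq_quarter_of_large hY
    have hm2 : ∀ t ∈ Set.Icc s (p+τ), b^2/4 ≤ (c₁ + c₂ * Real.exp (-(β*t)/α))^2 := by
      intro t ht
      have hx : Real.exp (-(β*t)/α) ≤ w₁ := by rw [← hEs]; exact hEmono ht.1
      have hxl : q1 ≤ Real.exp (-(β*t)/α) := by rw [hq1]; exact hEmono ht.2
      set d : ℝ := c₂ * (Real.exp (-(β*t)/α) - q1) with hd
      clear_value d
      have hθsq : θ^2 * (a-b)^2 = b^2/4 := by
        rw [hθ, div_pow, mul_pow, sq_abs, sq_abs]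
        field_simp
        ring
      have hd2 : d^2 ≤ b^2/4 := by
        have hxu : Real.exp (-(β*t)/α) - q1 ≤ θ*(q0-q1) := by rw [hw₁] at hx; linarith
        have hx2 : (Real.exp (-(β*t)/α) - q1)^2 ≤ (θ*(q0-q1))^2 :=
          sq_le_sq_of_nonneg' (by linarith) hxu
        calc d^2 = c₂^2 * (Real.exp (-(β*t)/α) - q1)^2 := by rw [hd]; ring
          _ ≤ c₂^2 * (θ*(q0-q1))^2 := mul_le_mul_of_nonneg_left hx2 (sq_nonneg c₂)
          _ = θ^2 * (c₂*(q0-q1))^2 := by ring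
          _ = θ^2 * (a-b)^2 := by rw [hab]
          _ = b^2/4 := hθsq
      rw [hvt t, ← hd]
      exact sq_quarter_of_small hd2
    have hsplit := split_lower _ hfc hnn p r s (p+τ) hpr.le hrs hsq.le (b^2/4) (b^2/4) hm1 hm2
    have hsum : τ/2 ≤ (r - p) + ((p+τ) - s) := by linarith
    have h7 := mul_le_mul_of_nonneg_right hsum (by positivity : (0:ℝ) ≤ b^2/4)
    have h8 := mul_nonneg hτ.le (sq_nonneg b)
    linarith [h7, hsplit, h8]

lemma exp_sq_upper (α β p τ a b c₁ c₂ : ℝ) (hα : 0 < α) (hβ : 0 < β) (hτ : 0 < τ)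
    (ha : c₁ + c₂ * Real.exp (-(β*p)/α) = a)
    (hb : c₁ + c₂ * Real.exp (-(β*(p+τ))/α) = b) :
    ∫ t in p..(p+τ), (c₁ + c₂ * Real.exp (-(β*t)/α))^2 ≤ τ * (a^2 + b^2) := by
  have key : ∀ t ∈ Set.Icc p (p+τ), (c₁ + c₂ * Real.exp (-(β*t)/α))^2 ≤ a^2 + b^2 := by
    intro t ht
    have h1 : Real.exp (-(β*(p+τ))/α) ≤ Real.exp (-(β*t)/α) := by
      apply Real.exp_le_exp.2
      rw [div_le_div_iff_of_pos_right hα]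
      nlinarith [ht.2]
    have h2 : Real.exp (-(β*t)/α) ≤ Real.exp (-(β*p)/α) := by
      apply Real.exp_le_exp.2
      rw [div_le_div_iff_of_pos_right hα]
      nlinarith [ht.1]
    apply sq_le_of_between
    have heq : (c₁ + c₂ * Real.exp (-(β*t)/α) - b) * (a - (c₁ + c₂ * Real.exp (-(β*t)/α)))
        = c₂^2 * ((Real.exp (-(β*t)/α) - Real.exp (-(β*(p+τ))/α))
            * (Real.exp (-(β*p)/α) - Real.exp (-(β*t)/α))) := by
      rw [← ha, ← hb]; ring
    rw [heq]
    exact mul_nonneg (sq_nonneg _) (mul_nonneg (by linarith) (by linarith))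
  have := upper_const _ (exp_cont α β c₁ c₂) p (p+τ) (a^2+b^2) (by linarith) key
  simpa using this

/-- `u` is affine on each interval `[kτ, (k+1)τ]`, `0 ≤ k < N`. -/
def PWAffine (τ : ℝ) (N : ℕ) (u : ℝ → ℝ) : Prop :=
  ∀ k : ℕ, k < N → ∃ c₁ c₂ : ℝ,
    ∀ t ∈ Set.Icc ((k : ℝ) * τ) (((k : ℝ) + 1) * τ), u t = c₁ + c₂ * t

/-- `v` is of the upwinded form `c₁ + c₂ exp(−βt/α)` on each interval
`[kτ, (k+1)τ]`, `0 ≤ k < N`. -/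
def Upwind (α β τ : ℝ) (N : ℕ) (v : ℝ → ℝ) : Prop :=
  ∀ k : ℕ, k < N → ∃ c₁ c₂ : ℝ,
    ∀ t ∈ Set.Icc ((k : ℝ) * τ) (((k : ℝ) + 1) * τ),
      v t = c₁ + c₂ * Real.exp (-(β * t) / α)

/-- **`L²` equivalence of a piecewise affine function vanishing at the extremities and
its upwinded interpolant, uniformly in `α`, `β`, `τ`, `N`:** there is `C > 0` such that
for all `α, β, τ > 0`, all integers `N ≥ 1` with `T = Nτ`, all continuous `τ`-piecewise
affine `u` on `[0,T]` with `u(0) = u(T) = 0`, and `v` its upwinded interpolant,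
`(1/C) ∫₀ᵀ |u|² ≤ ∫₀ᵀ |v|² ≤ C ∫₀ᵀ |u|²`. -/
theorem upwind_interpolant_L2_equiv :
    ∃ C > (0 : ℝ), ∀ α β τ : ℝ, 0 < α → 0 < β → 0 < τ → ∀ N : ℕ, 1 ≤ N →
      ∀ u v : ℝ → ℝ,
        ContinuousOn u (Set.Icc 0 ((N : ℝ) * τ)) →
        PWAffine τ N u →
        u 0 = 0 → u ((N : ℝ) * τ) = 0 →
        ContinuousOn v (Set.Icc 0 ((N : ℝ) * τ)) →
        (∀ k : ℕ, k ≤ N → v ((k : ℝ) * τ) = u ((k : ℝ) * τ)) →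
        Upwind α β τ N v →
        ((1 / C) * ∫ t in (0 : ℝ)..((N : ℝ) * τ), (u t) ^ 2)
            ≤ (∫ t in (0 : ℝ)..((N : ℝ) * τ), (v t) ^ 2) ∧
          (∫ t in (0 : ℝ)..((N : ℝ) * τ), (v t) ^ 2)
            ≤ C * ∫ t in (0 : ℝ)..((N : ℝ) * τ), (u t) ^ 2 := by
  refine ⟨16, by norm_num, ?_⟩
  intro α β τ hα hβ hτ N hN u v hu hPW hu0 huT hv hvu hUp
  have hτ0 : (0:ℝ) ≤ τ := hτ.le
  set A : ℕ → ℝ := fun k => (u ((k:ℝ)*τ))^2 with hA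
  have hcast : ∀ k : ℕ, (((k+1:ℕ)):ℝ) = (k:ℝ)+1 := by intro k; push_cast; ring
  have hle : ∀ k : ℕ, (k:ℝ)*τ ≤ ((k:ℝ)+1)*τ := fun k => by nlinarith
  have hmem1 : ∀ k : ℕ, ((k:ℝ)*τ) ∈ Set.Icc ((k:ℝ)*τ) (((k:ℝ)+1)*τ) :=
    fun k => ⟨le_rfl, hle k⟩
  have hmem2 : ∀ k : ℕ, (((k:ℝ)+1)*τ) ∈ Set.Icc ((k:ℝ)*τ) (((k:ℝ)+1)*τ) :=
    fun k => ⟨hle k, le_rfl⟩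
  have hsub : ∀ k : ℕ, k < N → Set.Icc ((k:ℝ)*τ) (((k:ℝ)+1)*τ) ⊆ Set.Icc 0 ((N:ℝ)*τ) := by
    intro k hk
    apply Set.Icc_subset_Icc
    · positivity
    · have hk1 : ((k:ℝ)+1) ≤ (N:ℝ) := by exact_mod_cast hk
      nlinarith
  -- per-interval bounds for u
  have keyU : ∀ k : ℕ, k < N →
      τ*(A k + A (k+1))/6 ≤ (∫ t in ((k:ℝ)*τ)..(((k:ℝ)+1)*τ), (u t)^2)
        ∧ (∫ t in ((k:ℝ)*τ)..(((k:ℝ)+1)*τ), (u t)^2) ≤ τ*(A k + A (k+1))/2 := by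
    intro k hk
    obtain ⟨c₁, c₂, hform⟩ := hPW k hk
    have he : ((k:ℝ)+1)*τ = (k:ℝ)*τ + τ := by ring
    have hend1 : u ((k:ℝ)*τ) = c₁ + c₂*((k:ℝ)*τ) := hform _ (hmem1 k)
    have hend2 : u (((k:ℝ)+1)*τ) = c₁ + c₂*(((k:ℝ)+1)*τ) := hform _ (hmem2 k)
    have hAk : A k = (c₁ + c₂*((k:ℝ)*τ))^2 := by rw [hA]; simp only; rw [hend1]
    have hAk1 : A (k+1) = (c₁ + c₂*(((k:ℝ)*τ)+τ))^2 := by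
      rw [hA]; simp only; rw [hcast k, hend2, he]
    have hcong : (∫ t in ((k:ℝ)*τ)..(((k:ℝ)+1)*τ), (u t)^2)
        = ∫ t in ((k:ℝ)*τ)..(((k:ℝ)*τ)+τ), (c₁ + c₂*t)^2 := by
      rw [he]
      apply intervalIntegral.integral_congr
      intro t ht
      rw [Set.uIcc_of_le (by linarith [hle k])] at ht
      have htm : t ∈ Set.Icc ((k:ℝ)*τ) (((k:ℝ)+1)*τ) := by rw [he]; exact ht
      simp only
      rw [hform t htm]
    rw [hcong, hAk, hAk1, affine_sq_integral c₁ c₂ ((k:ℝ)*τ) τ]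
    constructor
    · nlinarith [mul_nonneg hτ0 (sq_nonneg ((c₁ + c₂*((k:ℝ)*τ)) + (c₁ + c₂*(((k:ℝ)*τ)+τ))))]
    · nlinarith [mul_nonneg hτ0 (sq_nonneg ((c₁ + c₂*((k:ℝ)*τ)) - (c₁ + c₂*(((k:ℝ)*τ)+τ))))]
  -- per-interval bounds for v
  have keyV : ∀ k : ℕ, k < N →
      τ*(A (k+1))/16 ≤ (∫ t in ((k:ℝ)*τ)..(((k:ℝ)+1)*τ), (v t)^2)
        ∧ (∫ t in ((k:ℝ)*τ)..(((k:ℝ)+1)*τ), (v t)^2) ≤ τ*(A k + A (k+1)) := by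
    intro k hk
    obtain ⟨c₁, c₂, hform⟩ := hUp k hk
    have he : ((k:ℝ)+1)*τ = (k:ℝ)*τ + τ := by ring
    have hva : v ((k:ℝ)*τ) = u ((k:ℝ)*τ) := hvu k hk.le
    have hvb : v (((k:ℝ)+1)*τ) = u (((k:ℝ)+1)*τ) := by
      have := hvu (k+1) hk
      rwa [hcast k] at this
    have ha : c₁ + c₂ * Real.exp (-(β*((k:ℝ)*τ))/α) = u ((k:ℝ)*τ) :=
      (hform _ (hmem1 k)).symm.trans hva
    have hb : c₁ + c₂ * Real.exp (-(β*(((k:ℝ)*τ)+τ))/α) = u (((k:ℝ)+1)*τ) := by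
      rw [show ((k:ℝ)*τ)+τ = ((k:ℝ)+1)*τ from by ring]
      exact (hform _ (hmem2 k)).symm.trans hvb
    have hcong : (∫ t in ((k:ℝ)*τ)..(((k:ℝ)+1)*τ), (v t)^2)
        = ∫ t in ((k:ℝ)*τ)..(((k:ℝ)*τ)+τ), (c₁ + c₂*Real.exp (-(β*t)/α))^2 := by
      rw [he]
      apply intervalIntegral.integral_congr
      intro t ht
      rw [Set.uIcc_of_le (by linarith [hle k])] at ht
      have htm : t ∈ Set.Icc ((k:ℝ)*τ) (((k:ℝ)+1)*τ) := by rw [he]; exact ht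
      simp only
      rw [hform t htm]
    have hAk : A k = (u ((k:ℝ)*τ))^2 := by rw [hA]
    have hAk1 : A (k+1) = (u (((k:ℝ)+1)*τ))^2 := by rw [hA]; simp only; rw [hcast k]
    constructor
    · rw [hcong, hAk1]
      have := exp_sq_lower α β ((k:ℝ)*τ) τ (u ((k:ℝ)*τ)) (u (((k:ℝ)+1)*τ)) c₁ c₂ hα hβ hτ ha hb
      linarith
    · rw [hcong, hAk, hAk1]
      have := exp_sq_upper α β ((k:ℝ)*τ) τ (u ((k:ℝ)*τ)) (u (((k:ℝ)+1)*τ)) c₁ c₂ hα hβ hτ ha hb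
      linarith
  -- integrability and decomposition into subintervals
  have hdecomp : ∀ w : ℝ → ℝ, ContinuousOn w (Set.Icc 0 ((N:ℝ)*τ)) →
      (∑ k ∈ Finset.range N, ∫ t in ((k:ℝ)*τ)..(((k:ℝ)+1)*τ), (w t)^2)
        = ∫ t in (0:ℝ)..((N:ℝ)*τ), (w t)^2 := by
    intro w hw
    have h := intervalIntegral.sum_integral_adjacent_intervals (μ := volume)
      (a := fun k : ℕ => (k:ℝ)*τ) (n := N) (f := fun t => (w t)^2) ?_
    · simp only [Nat.cast_zero, zero_mul, Nat.cast_add, Nat.cast_one] at h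
      exact h
    · intro k hk
      show IntervalIntegrable (fun t => (w t)^2) volume ((k:ℝ)*τ) (((k+1:ℕ):ℝ)*τ)
      rw [hcast k]
      apply ContinuousOn.intervalIntegrable
      apply ContinuousOn.mono (ContinuousOn.pow hw 2)
      rw [Set.uIcc_of_le (hle k)]
      exact hsub k hk
  have hU := hdecomp u hu
  have hV := hdecomp v hv
  -- sums of endpoint squares
  set S : ℝ := ∑ k ∈ Finset.range N, A (k+1) with hS
  have hSnn : 0 ≤ S := Finset.sum_nonneg (fun k _ => sq_nonneg _)
  have hA0 : A 0 = 0 := by rw [hA]; simp [hu0]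
  have hAN : A N = 0 := by rw [hA]; simp only; rw [huT]; simp
  have hsum_eq : ∑ k ∈ Finset.range N, A k = S := by
    have h1 := Finset.sum_range_succ A N
    have h2 := Finset.sum_range_succ' A N
    rw [hS]; rw [h1] at h2; linarith [h2]
  -- bounds on total integrals
  have hsplitsum : ∀ c : ℝ, (∑ k ∈ Finset.range N, c*(A k + A (k+1))) = c*(S + S) := by
    intro c
    calc (∑ k ∈ Finset.range N, c*(A k + A (k+1)))
        = c * ∑ k ∈ Finset.range N, (A k + A (k+1)) := (Finset.mul_sum _ _ _).symm
      _ = c * ((∑ k ∈ Finset.range N, A k) + ∑ k ∈ Finset.range N, A (k+1)) := by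
          rw [Finset.sum_add_distrib]
      _ = c*(S + S) := by rw [hsum_eq, ← hS]
  have hIuU : (∫ t in (0:ℝ)..((N:ℝ)*τ), (u t)^2) ≤ τ*S := by
    rw [← hU]
    calc (∑ k ∈ Finset.range N, ∫ t in ((k:ℝ)*τ)..(((k:ℝ)+1)*τ), (u t)^2)
        ≤ ∑ k ∈ Finset.range N, τ*(A k + A (k+1))/2 :=
          Finset.sum_le_sum (fun k hk => (keyU k (Finset.mem_range.1 hk)).2)
      _ = ∑ k ∈ Finset.range N, (τ/2)*(A k + A (k+1)) :=
          Finset.sum_congr rfl (fun k _ => by ring)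
      _ = (τ/2)*(S + S) := hsplitsum _
      _ = τ*S := by ring
  have hIuL : τ*S/3 ≤ ∫ t in (0:ℝ)..((N:ℝ)*τ), (u t)^2 := by
    rw [← hU]
    calc τ*S/3 = (τ/6)*(S + S) := by ring
      _ = ∑ k ∈ Finset.range N, (τ/6)*(A k + A (k+1)) := (hsplitsum _).symm
      _ = ∑ k ∈ Finset.range N, τ*(A k + A (k+1))/6 :=
          Finset.sum_congr rfl (fun k _ => by ring)
      _ ≤ _ := Finset.sum_le_sum (fun k hk => (keyU k (Finset.mem_range.1 hk)).1)
  have hIvU : (∫ t in (0:ℝ)..((N:ℝ)*τ), (v t)^2) ≤ 2*(τ*S) := by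
    rw [← hV]
    calc (∑ k ∈ Finset.range N, ∫ t in ((k:ℝ)*τ)..(((k:ℝ)+1)*τ), (v t)^2)
        ≤ ∑ k ∈ Finset.range N, τ*(A k + A (k+1)) :=
          Finset.sum_le_sum (fun k hk => (keyV k (Finset.mem_range.1 hk)).2)
      _ = τ*(S + S) := hsplitsum _
      _ = 2*(τ*S) := by ring
  have hIvL : τ*S/16 ≤ ∫ t in (0:ℝ)..((N:ℝ)*τ), (v t)^2 := by
    rw [← hV]
    calc τ*S/16 = (τ/16)*S := by ring
      _ = ∑ k ∈ Finset.range N, (τ/16)*(A (k+1)) := by rw [← Finset.mul_sum, ← hS]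
      _ = ∑ k ∈ Finset.range N, τ*(A (k+1))/16 :=
          Finset.sum_congr rfl (fun k _ => by ring)
      _ ≤ _ := Finset.sum_le_sum (fun k hk => (keyV k (Finset.mem_range.1 hk)).1)
  have hτS : 0 ≤ τ*S := mul_nonneg hτ0 hSnn
  constructor
  · linarith
  · linarith
end

section
/- There exists a constant C > 0, independent of α, β, τ and N, with the following property. Let α, β, τ > 0, let N ≥ 1 be an integer, set T = Nτ, let u ∈ H¹(0,T), and let v be the upwinded interpolant of u, i.e. v is continuous on [0,T], v(kτ) = u(kτ) for all 0 ≤ k ≤ N, and on each interval [kτ, (k+1)τ] there exist constants c₁, c₂ with v(t) = c₁ + c₂ exp(−βt/α). Then ∫₀ᵀ |u − v|² ≤ C τ² ∫₀ᵀ |u̇|². -/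
open MeasureTheory

lemma myCS (a b : ℝ) (hab : a < b) (f : ℝ → ℝ)
    (hf : IntervalIntegrable f volume a b)
    (hf2 : IntervalIntegrable (fun t => (f t) ^ 2) volume a b) :
    (∫ t in a..b, |f t|) ^ 2 ≤ (b - a) * ∫ t in a..b, (f t) ^ 2 := by
  set I := ∫ t in a..b, |f t| with hI
  set J := ∫ t in a..b, (f t) ^ 2 with hJ
  have habs : IntervalIntegrable (fun t => |f t|) volume a b := hf.abs
  have h1 : IntervalIntegrable (fun t => (b-a)^2 * (f t)^2) volume a b :=
    hf2.const_mul _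
  have h2 : IntervalIntegrable (fun t => (2*(b-a)*I) * |f t|) volume a b :=
    habs.const_mul _
  have key : (0:ℝ) ≤ ∫ t in a..b, ((b-a) * |f t| - I)^2 :=
    intervalIntegral.integral_nonneg hab.le (fun t _ => sq_nonneg _)
  have expand : (∫ t in a..b, ((b-a) * |f t| - I)^2)
      = (b-a)^2 * J - (2*(b-a)*I) * I + I^2 * (b-a) := by
    have heq : ∀ t : ℝ, ((b-a) * |f t| - I)^2
        = (b-a)^2 * (f t)^2 - (2*(b-a)*I) * |f t| + I^2 := by
      intro t
      nlinarith [sq_abs (f t)]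
    rw [intervalIntegral.integral_congr (g := fun t =>
      (b-a)^2 * (f t)^2 - (2*(b-a)*I) * |f t| + I^2) (fun t _ => heq t)]
    rw [intervalIntegral.integral_add (h1.sub h2) intervalIntegrable_const,
      intervalIntegral.integral_sub h1 h2,
      intervalIntegral.integral_const_mul, intervalIntegral.integral_const_mul,
      intervalIntegral.integral_const]
    simp [smul_eq_mul]
    ring
  rw [expand] at key
  nlinarith [sub_pos.mpr hab]

lemma expBound (α β c₁ c₂ a b t : ℝ) (hα : 0 < α) (hβ : 0 < β)
    (hat : a ≤ t) (htb : t ≤ b) :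
    |(c₁ + c₂ * Real.exp (-(β*t)/α)) - (c₁ + c₂ * Real.exp (-(β*a)/α))|
      ≤ |(c₁ + c₂ * Real.exp (-(β*b)/α)) - (c₁ + c₂ * Real.exp (-(β*a)/α))| := by
  have hE : ∀ x y : ℝ, x ≤ y → Real.exp (-(β*y)/α) ≤ Real.exp (-(β*x)/α) := by
    intro x y hxy
    apply Real.exp_le_exp.2
    have : -(β*y) ≤ -(β*x) := by nlinarith
    gcongr
  have h1 := hE a t hat
  have h2 := hE t b htb
  have e1 : (c₁ + c₂ * Real.exp (-(β*t)/α)) - (c₁ + c₂ * Real.exp (-(β*a)/α))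
      = c₂ * (Real.exp (-(β*t)/α) - Real.exp (-(β*a)/α)) := by ring
  have e2 : (c₁ + c₂ * Real.exp (-(β*b)/α)) - (c₁ + c₂ * Real.exp (-(β*a)/α))
      = c₂ * (Real.exp (-(β*b)/α) - Real.exp (-(β*a)/α)) := by ring
  rw [e1, e2, abs_mul, abs_mul]
  apply mul_le_mul_of_nonneg_left ?_ (abs_nonneg c₂)
  rw [abs_sub_comm, abs_of_nonneg (by linarith), abs_sub_comm, abs_of_nonneg (by linarith)]
  linarith

lemma interval_bound (α β τ a : ℝ) (hα : 0 < α) (hβ : 0 < β) (hτ : 0 < τ)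
    (u u' v : ℝ → ℝ)
    (hftc : ∀ t ∈ Set.Icc a (a + τ), u t - u a = ∫ s in a..t, u' s)
    (hu' : IntervalIntegrable u' volume a (a + τ))
    (hu'2 : IntervalIntegrable (fun t => (u' t) ^ 2) volume a (a + τ))
    (huv2 : IntervalIntegrable (fun t => (u t - v t) ^ 2) volume a (a + τ))
    (hva : v a = u a) (hvb : v (a + τ) = u (a + τ))
    (c₁ c₂ : ℝ)
    (hform : ∀ t ∈ Set.Icc a (a + τ), v t = c₁ + c₂ * Real.exp (-(β * t) / α)) :
    (∫ t in a..(a + τ), (u t - v t) ^ 2)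
      ≤ 4 * τ ^ 2 * ∫ t in a..(a + τ), (u' t) ^ 2 := by
  have hab : a < a + τ := by linarith
  set b := a + τ with hb
  set I := ∫ t in a..b, |u' t| with hIdef
  set J := ∫ t in a..b, (u' t) ^ 2 with hJdef
  have habs : IntervalIntegrable (fun t => |u' t|) volume a b := hu'.abs
  have hInonneg : 0 ≤ I :=
    intervalIntegral.integral_nonneg hab.le (fun t _ => abs_nonneg _)
  have hCS : I ^ 2 ≤ τ * J := by
    have := myCS a b hab u' hu' hu'2
    simpa [hb] using this
  -- pointwise bound
  have hpt : ∀ t ∈ Set.Icc a b, (u t - v t) ^ 2 ≤ 4 * τ * J := by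
    intro t ht
    obtain ⟨hat, htb⟩ := ht
    have hmemb : b ∈ Set.Icc a b := ⟨hab.le, le_refl _⟩
    have hmema : a ∈ Set.Icc a b := ⟨le_refl _, hab.le⟩
    -- |u t - u a| ≤ I
    have h1 : |u t - u a| ≤ I := by
      rw [hftc t ⟨hat, htb⟩]
      calc |∫ s in a..t, u' s| ≤ ∫ s in a..t, |u' s| :=
            intervalIntegral.abs_integral_le_integral_abs hat
        _ ≤ I := intervalIntegral.integral_mono_interval le_rfl hat htb
            (Filter.Eventually.of_forall fun s => abs_nonneg _) habs
    -- |u b - u a| ≤ I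
    have h2 : |u b - u a| ≤ I := by
      rw [hftc b hmemb]
      exact intervalIntegral.abs_integral_le_integral_abs hab.le
    -- |v t - v a| ≤ |v b - v a|
    have h3 : |v t - v a| ≤ |v b - v a| := by
      rw [hform t ⟨hat, htb⟩, hform a hmema, hform b hmemb]
      exact expBound α β c₁ c₂ a b t hα hβ hat htb
    have h4 : |v t - v a| ≤ I := by
      refine h3.trans ?_
      rw [hvb, hva]
      exact h2
    have h5 : |u t - v t| ≤ 2 * I := by
      have : u t - v t = (u t - u a) - (v t - v a) := by rw [hva]; ring
      rw [this]
      calc |(u t - u a) - (v t - v a)| ≤ |u t - u a| + |v t - v a| := abs_sub _ _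
        _ ≤ 2 * I := by linarith
    nlinarith [sq_abs (u t - v t), abs_nonneg (u t - v t)]
  calc (∫ t in a..b, (u t - v t) ^ 2) ≤ ∫ _t in a..b, 4 * τ * J :=
        intervalIntegral.integral_mono_on hab.le huv2 intervalIntegrable_const hpt
    _ = 4 * τ ^ 2 * J := by
        rw [intervalIntegral.integral_const]; simp [hb, smul_eq_mul]; ring


/-- **Approximation error of the upwinded interpolant, uniformly in `α`, `β`, `τ`, `N`:**
there is `C > 0` such that for all `α, β, τ > 0`, all integers `N ≥ 1` with `T = Nτ`,
every `u ∈ H¹(0,T)` (continuous with weak derivative `u'` on `[0,T]`, `u' ∈ L²(0,T)`),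
and `v` its upwinded interpolant (continuous, agreeing with `u` at the grid points `kτ`,
upwinded on each interval), one has `∫₀ᵀ |u − v|² ≤ C τ² ∫₀ᵀ |u̇|²`. -/
theorem upwind_interpolant_error :
    ∃ C > (0 : ℝ), ∀ α β τ : ℝ, 0 < α → 0 < β → 0 < τ → ∀ N : ℕ, 1 ≤ N →
      ∀ u u' v : ℝ → ℝ,
        ContinuousOn u (Set.Icc 0 ((N : ℝ) * τ)) →
        (∀ s ∈ Set.Icc (0 : ℝ) ((N : ℝ) * τ), u s = u 0 + ∫ t in (0 : ℝ)..s, u' t) →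
        IntervalIntegrable u' volume 0 ((N : ℝ) * τ) →
        IntervalIntegrable (fun t => (u' t) ^ 2) volume 0 ((N : ℝ) * τ) →
        ContinuousOn v (Set.Icc 0 ((N : ℝ) * τ)) →
        (∀ k : ℕ, k ≤ N → v ((k : ℝ) * τ) = u ((k : ℝ) * τ)) →
        Upwind α β τ N v →
        (∫ t in (0 : ℝ)..((N : ℝ) * τ), (u t - v t) ^ 2)
          ≤ C * τ ^ 2 * ∫ t in (0 : ℝ)..((N : ℝ) * τ), (u' t) ^ 2 := by
  refine ⟨4, by norm_num, ?_⟩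
  intro α β τ hα hβ hτ N hN u u' v hu hrep hint hint2 hv hgrid hup
  set T := (N : ℝ) * τ with hT
  set g : ℕ → ℝ := fun k => (k : ℝ) * τ with hgdef
  have hgsucc : ∀ k : ℕ, g (k + 1) = g k + τ := by
    intro k; simp only [hgdef]; push_cast; ring
  have hgmem : ∀ k : ℕ, k ≤ N → g k ∈ Set.Icc (0 : ℝ) T := by
    intro k hk
    refine ⟨by positivity, ?_⟩
    have : (k : ℝ) ≤ (N : ℝ) := by exact_mod_cast hk
    exact mul_le_mul_of_nonneg_right this hτ.le
  have hsub : ∀ k : ℕ, k < N → Set.uIcc (g k) (g k + τ) ⊆ Set.uIcc (0 : ℝ) T := by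
    intro k hk
    have h1 := (hgmem k hk.le).1
    have h2 : g k + τ ≤ T := by
      have := (hgmem (k + 1) hk).2
      rw [hgsucc] at this; exact this
    rw [Set.uIcc_of_le (by linarith), Set.uIcc_of_le (by linarith)]
    exact Set.Icc_subset_Icc h1 h2
  have hIccsub : ∀ k : ℕ, k < N → Set.Icc (g k) (g k + τ) ⊆ Set.Icc (0 : ℝ) T := by
    intro k hk
    have := hsub k hk
    rwa [Set.uIcc_of_le (by linarith), Set.uIcc_of_le (by positivity)] at this
  have hu'k : ∀ k : ℕ, k < N → IntervalIntegrable u' volume (g k) (g k + τ) :=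
    fun k hk => hint.mono_set (hsub k hk)
  have hu'2k : ∀ k : ℕ, k < N →
      IntervalIntegrable (fun t => (u' t) ^ 2) volume (g k) (g k + τ) :=
    fun k hk => hint2.mono_set (hsub k hk)
  have huvcont : ContinuousOn (fun t => (u t - v t) ^ 2) (Set.Icc 0 T) :=
    (hu.sub hv).pow 2
  have huv2k : ∀ k : ℕ, k < N →
      IntervalIntegrable (fun t => (u t - v t) ^ 2) volume (g k) (g k + τ) := by
    intro k hk
    exact (huvcont.mono ((hsub k hk).trans (by
      rw [Set.uIcc_of_le (by positivity)]))).intervalIntegrable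
  -- FTC on each subinterval
  have hftck : ∀ k : ℕ, k < N → ∀ t ∈ Set.Icc (g k) (g k + τ),
      u t - u (g k) = ∫ s in (g k)..t, u' s := by
    intro k hk t ht
    have ht0 : t ∈ Set.Icc (0 : ℝ) T := hIccsub k hk ht
    have ha0 : g k ∈ Set.Icc (0 : ℝ) T := hgmem k hk.le
    have h0t : IntervalIntegrable u' volume 0 t := by
      apply hint.mono_set
      rw [Set.uIcc_of_le ht0.1, Set.uIcc_of_le (by positivity)]
      exact Set.Icc_subset_Icc le_rfl ht0.2
    have h0a : IntervalIntegrable u' volume 0 (g k) := by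
      apply hint.mono_set
      rw [Set.uIcc_of_le ha0.1, Set.uIcc_of_le (by positivity)]
      exact Set.Icc_subset_Icc le_rfl ha0.2
    have hkey := intervalIntegral.integral_interval_sub_left h0t h0a
    rw [hrep t ht0, hrep (g k) ha0]
    linarith [hkey]
  -- per-interval estimate
  have hbk : ∀ k : ℕ, k < N →
      (∫ t in (g k)..(g k + τ), (u t - v t) ^ 2)
        ≤ 4 * τ ^ 2 * ∫ t in (g k)..(g k + τ), (u' t) ^ 2 := by
    intro k hk
    obtain ⟨c₁, c₂, hform⟩ := hup k hk
    have hform' : ∀ t ∈ Set.Icc (g k) (g k + τ),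
        v t = c₁ + c₂ * Real.exp (-(β * t) / α) := by
      intro t ht
      apply hform
      have : ((k : ℝ) + 1) * τ = g k + τ := by simp only [hgdef]; ring
      rw [this]
      exact ht
    have hva : v (g k) = u (g k) := hgrid k hk.le
    have hvb : v (g k + τ) = u (g k + τ) := by
      have := hgrid (k + 1) hk
      rwa [show ((k + 1 : ℕ) : ℝ) * τ = g k + τ by push_cast [hgdef]; ring] at this
    exact interval_bound α β τ (g k) hα hβ hτ u u' v (hftck k hk)
      (hu'k k hk) (hu'2k k hk) (huv2k k hk) hva hvb c₁ c₂ hform'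
  -- sum up
  have hg0 : g 0 = 0 := by simp [hgdef]
  have hgN : g N = T := rfl
  have hsum1 : ∑ k ∈ Finset.range N, ∫ t in (g k)..(g (k + 1)), (u t - v t) ^ 2
      = ∫ t in (0 : ℝ)..T, (u t - v t) ^ 2 := by
    rw [← hg0, ← hgN]
    exact intervalIntegral.sum_integral_adjacent_intervals
      (fun k hk => by rw [hgsucc]; exact huv2k k hk)
  have hsum2 : ∑ k ∈ Finset.range N, ∫ t in (g k)..(g (k + 1)), (u' t) ^ 2
      = ∫ t in (0 : ℝ)..T, (u' t) ^ 2 := by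
    rw [← hg0, ← hgN]
    exact intervalIntegral.sum_integral_adjacent_intervals
      (fun k hk => by rw [hgsucc]; exact hu'2k k hk)
  calc (∫ t in (0 : ℝ)..T, (u t - v t) ^ 2)
      = ∑ k ∈ Finset.range N, ∫ t in (g k)..(g (k + 1)), (u t - v t) ^ 2 := hsum1.symm
    _ ≤ ∑ k ∈ Finset.range N, 4 * τ ^ 2 * ∫ t in (g k)..(g (k + 1)), (u' t) ^ 2 := by
        apply Finset.sum_le_sum
        intro k hk
        rw [hgsucc]
        exact hbk k (Finset.mem_range.mp hk)
    _ = 4 * τ ^ 2 * ∫ t in (0 : ℝ)..T, (u' t) ^ 2 := by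
        rw [← Finset.mul_sum, hsum2]
end

section
/- There exists a constant C > 0, independent of α, β and τ, with the following property. Let α, β, τ > 0, let u : ℝ → ℝ be continuous, affine on each interval [kτ, (k+1)τ] (k ∈ ℤ), belonging to L²(ℝ) with finite Slobodetski H^{1/2} seminorm, and let v be its upwinded interpolant: v is continuous, v(kτ) = u(kτ) for all k ∈ ℤ, and on each interval [kτ, (k+1)τ] of the form v(t) = c₁ + c₂ exp(−βt/α). Then |v|_{H^{1/2}_w} ≤ C |u|_{H^{1/2}}, i.e. ‖v − v(· − y)‖_{L²(ℝ)} ≤ C |y|^{1/2} |u|_{H^{1/2}} for all y ∈ ℝ. -/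
open MeasureTheory

/-- `u` is affine on each interval `[kτ, (k+1)τ]`, `k ∈ ℤ`. -/
def PWAffineZ (τ : ℝ) (u : ℝ → ℝ) : Prop :=
  ∀ k : ℤ, ∃ c₁ c₂ : ℝ,
    ∀ t ∈ Set.Icc ((k : ℝ) * τ) (((k : ℝ) + 1) * τ), u t = c₁ + c₂ * t

/-- `v` is of the upwinded form `c₁ + c₂ exp(−βt/α)` on each interval
`[kτ, (k+1)τ]`, `k ∈ ℤ`. -/
def UpwindZ (α β τ : ℝ) (v : ℝ → ℝ) : Prop :=
  ∀ k : ℤ, ∃ c₁ c₂ : ℝ,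
    ∀ t ∈ Set.Icc ((k : ℝ) * τ) (((k : ℝ) + 1) * τ),
      v t = c₁ + c₂ * Real.exp (-(β * t) / α)

section UIBAux

open Set

noncomputable def gsh (w : ℝ → ℝ) (y : ℝ) : ENNReal :=
  ∫⁻ x : ℝ, ENNReal.ofReal ((w x - w (x - y)) ^ 2)

lemma ofReal_sq_add_le (A B : ℝ) :
    ENNReal.ofReal ((A + B) ^ 2) ≤ 2 * ENNReal.ofReal (A ^ 2) + 2 * ENNReal.ofReal (B ^ 2) := by
  have h : (A + B) ^ 2 ≤ 2 * A ^ 2 + 2 * B ^ 2 := by nlinarith [sq_nonneg (A - B)]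
  calc ENNReal.ofReal ((A + B) ^ 2) ≤ ENNReal.ofReal (2 * A ^ 2 + 2 * B ^ 2) :=
        ENNReal.ofReal_le_ofReal h
    _ = ENNReal.ofReal (2 * A ^ 2) + ENNReal.ofReal (2 * B ^ 2) :=
        ENNReal.ofReal_add (by positivity) (by positivity)
    _ = 2 * ENNReal.ofReal (A ^ 2) + 2 * ENNReal.ofReal (B ^ 2) := by
        rw [ENNReal.ofReal_mul (by norm_num), ENNReal.ofReal_mul (by norm_num),
          ENNReal.ofReal_ofNat]

lemma sq_swap (p q : ℝ) : (p - q) ^ 2 = (q - p) ^ 2 := by ring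

lemma gsh_neg (w : ℝ → ℝ) (y : ℝ) : gsh w (-y) = gsh w y := by
  have h := lintegral_add_right_eq_self (μ := volume) (fun x => ENNReal.ofReal ((w x - w (x - y)) ^ 2)) y
  unfold gsh
  rw [← h]
  congr 1; funext x
  have e1 : x + y - y = x := by ring
  have e2 : x - -y = x + y := by ring
  rw [e1, e2, sq_swap]

lemma cont_int (w : ℝ → ℝ) (hw : Continuous w) (y : ℝ) :
    Measurable fun x => ENNReal.ofReal ((w x - w (x - y)) ^ 2) := by
  have : Continuous fun x : ℝ => (w x - w (x - y)) ^ 2 := by fun_prop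
  exact this.measurable.ennreal_ofReal

lemma gsh_meas (w : ℝ → ℝ) (hw : Continuous w) : Measurable fun y => gsh w y := by
  unfold gsh
  apply Measurable.lintegral_prod_right (f := fun y x => ENNReal.ofReal ((w x - w (x - y)) ^ 2))
  apply Measurable.ennreal_ofReal
  have : Continuous (Function.uncurry fun (y x : ℝ) => (w x - w (x - y)) ^ 2) := by
    apply Continuous.pow
    apply Continuous.sub
    · exact hw.comp continuous_snd
    · exact hw.comp (continuous_snd.sub continuous_fst)
  exact this.measurable

lemma gsh_subadd (w : ℝ → ℝ) (hw : Continuous w) (h y : ℝ) :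
    gsh w y ≤ 2 * gsh w h + 2 * gsh w (y - h) := by
  have key : ∀ x : ℝ, ENNReal.ofReal ((w x - w (x - y)) ^ 2)
      ≤ 2 * ENNReal.ofReal ((w x - w (x - h)) ^ 2)
        + 2 * ENNReal.ofReal ((w (x - h) - w (x - h - (y - h))) ^ 2) := by
    intro x
    have e0 : x - h - (y - h) = x - y := by ring
    rw [e0]
    have e : w x - w (x - y) = (w x - w (x - h)) + (w (x - h) - w (x - y)) := by ring
    rw [e]
    exact ofReal_sq_add_le _ _
  calc gsh w y ≤ ∫⁻ x : ℝ, (2 * ENNReal.ofReal ((w x - w (x - h)) ^ 2)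
        + 2 * ENNReal.ofReal ((w (x - h) - w (x - h - (y - h))) ^ 2)) := lintegral_mono key
    _ = 2 * gsh w h + 2 * ∫⁻ x : ℝ, ENNReal.ofReal ((w (x - h) - w (x - h - (y - h))) ^ 2) := by
        rw [lintegral_add_left (((cont_int w hw h).const_mul 2)),
          lintegral_const_mul' _ _ (by norm_num),
          lintegral_const_mul' _ _ (by norm_num)]
        rfl
    _ = 2 * gsh w h + 2 * gsh w (y - h) := by
        congr 1
        congr 1
        exact lintegral_sub_right_eq_self
          (fun z => ENNReal.ofReal ((w z - w (z - (y - h))) ^ 2)) h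

lemma cells_union (τ : ℝ) (hτ : 0 < τ) :
    (⋃ k : ℤ, Ico ((k : ℝ) * τ) (((k : ℝ) + 1) * τ)) = univ := by
  ext x
  simp only [mem_iUnion, mem_Ico, mem_univ, iff_true]
  refine ⟨⌊x / τ⌋, ?_, ?_⟩
  · have h := Int.floor_le (x / τ)
    calc ((⌊x / τ⌋ : ℝ)) * τ ≤ (x / τ) * τ := by nlinarith
      _ = x := by field_simp
  · have h := Int.lt_floor_add_one (x / τ)
    calc x = (x / τ) * τ := by field_simp
      _ < ((⌊x / τ⌋ : ℝ) + 1) * τ := by nlinarith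

lemma cells_disj (τ : ℝ) (hτ : 0 < τ) :
    Pairwise (Function.onFun Disjoint fun k : ℤ => Ico ((k : ℝ) * τ) (((k : ℝ) + 1) * τ)) := by
  intro k l hkl
  simp only [Function.onFun]
  apply Set.disjoint_left.mpr
  rintro x ⟨hk1, hk2⟩ ⟨hl1, hl2⟩
  apply hkl
  have h1 : (k : ℝ) < (l : ℝ) + 1 := by nlinarith
  have h2 : (l : ℝ) < (k : ℝ) + 1 := by nlinarith
  have h1' : k < l + 1 := by exact_mod_cast h1
  have h2' : l < k + 1 := by exact_mod_cast h2
  omega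

lemma lint_cells (τ : ℝ) (hτ : 0 < τ) (f : ℝ → ENNReal) :
    ∫⁻ x : ℝ, f x = ∑' k : ℤ, ∫⁻ x in Ico ((k : ℝ) * τ) (((k : ℝ) + 1) * τ), f x := by
  rw [← lintegral_iUnion (fun k => measurableSet_Ico) (cells_disj τ hτ) f,
    cells_union τ hτ, Measure.restrict_univ]

lemma between_bound {p q a b : ℝ} (hp : p ∈ uIcc a b) (hq : q ∈ uIcc a b) :
    (p - q) ^ 2 ≤ (b - a) ^ 2 := by
  rw [Set.uIcc, mem_Icc] at hp hq
  have h1 : a ⊓ b ≤ a ⊔ b := le_trans hp.1 hp.2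
  have key : (p - q) ^ 2 ≤ (a ⊔ b - a ⊓ b) ^ 2 := by
    apply sq_le_sq' <;> [skip; skip] <;> cases hp <;> cases hq <;> linarith
  calc (p - q) ^ 2 ≤ (a ⊔ b - a ⊓ b) ^ 2 := key
    _ = |b - a| ^ 2 := by rw [max_sub_min_eq_abs]
    _ = (b - a) ^ 2 := sq_abs _

lemma affine_mem {c₁ c₂ a b t : ℝ} (ht : t ∈ Icc a b) :
    c₁ + c₂ * t ∈ uIcc (c₁ + c₂ * a) (c₁ + c₂ * b) := by
  rcases ht with ⟨h1, h2⟩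
  rcases le_or_gt 0 c₂ with hc | hc
  · apply mem_uIcc.mpr; left; constructor <;> nlinarith
  · apply mem_uIcc.mpr; right; constructor <;> nlinarith

lemma exp_mem {c₁ c₂ β α a b : ℝ} (hα : 0 < α) (hβ : 0 < β) {t : ℝ} (ht : t ∈ Icc a b) :
    c₁ + c₂ * Real.exp (-(β * t) / α) ∈
      uIcc (c₁ + c₂ * Real.exp (-(β * a) / α)) (c₁ + c₂ * Real.exp (-(β * b) / α)) := by
  rcases ht with ⟨h1, h2⟩
  have key : ∀ s r : ℝ, s ≤ r → Real.exp (-(β * r) / α) ≤ Real.exp (-(β * s) / α) := by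
    intro s r hsr
    apply Real.exp_le_exp.mpr
    rw [div_le_div_iff₀ hα hα]
    have hbs : β * s ≤ β * r := by nlinarith
    nlinarith [mul_le_mul_of_nonneg_right hbs hα.le]
  have kab := key a t h1
  have ktb := key t b h2
  rcases le_or_gt 0 c₂ with hc | hc
  · apply mem_uIcc.mpr; right; constructor <;> nlinarith
  · apply mem_uIcc.mpr; left; constructor <;> nlinarith

lemma int_exp_neg {c : ℝ} (hc : 0 < c) (s t : ℝ) :
    ∫ x in s..t, Real.exp (-(c * x)) = (Real.exp (-(c * s)) - Real.exp (-(c * t))) / c := by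
  have hne : -c ≠ 0 := by linarith
  have h := intervalIntegral.integral_comp_mul_left (a := s) (b := t) Real.exp hne
  simp only [integral_exp] at h
  have e : ∀ x : ℝ, -(c * x) = -c * x := by intro x; ring
  simp only [e]
  rw [h]
  rw [smul_eq_mul]
  have e2 : -c * s = -(c * s) := by ring
  have e3 : -c * t = -(c * t) := by ring
  rw [e2, e3]
  field_simp
  ring

lemma affine_sq_int (A B a τ : ℝ) (hτ : 0 < τ) :
    τ * ((A + B * a) ^ 2 + (A + B * (a + τ)) ^ 2) / 6 ≤ ∫ x in a..(a + τ), (A + B * x) ^ 2 := by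
  have e : (fun x : ℝ => (A + B * x) ^ 2)
      = fun x : ℝ => A ^ 2 + (2 * A * B) * x + B ^ 2 * x ^ 2 := by funext x; ring
  rw [e]
  have i1 : IntervalIntegrable (fun x : ℝ => A ^ 2 + (2 * A * B) * x) volume a (a + τ) := by
    apply Continuous.intervalIntegrable; fun_prop
  have i2 : IntervalIntegrable (fun x : ℝ => B ^ 2 * x ^ 2) volume a (a + τ) := by
    apply Continuous.intervalIntegrable; fun_prop
  have i3 : IntervalIntegrable (fun _ : ℝ => A ^ 2) volume a (a + τ) :=
    intervalIntegrable_const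
  have i4 : IntervalIntegrable (fun x : ℝ => (2 * A * B) * x) volume a (a + τ) := by
    apply Continuous.intervalIntegrable; fun_prop
  rw [intervalIntegral.integral_add i1 i2, intervalIntegral.integral_add i3 i4,
    intervalIntegral.integral_const, intervalIntegral.integral_const_mul,
    intervalIntegral.integral_const_mul, integral_id, integral_pow]
  simp only [smul_eq_mul]
  nlinarith [sq_nonneg (2 * A + B * a + B * (a + τ)), sq_nonneg (B * τ),
    mul_nonneg hτ.le (sq_nonneg (2 * A + B * a + B * (a + τ)))]

lemma key_exp {s m : ℝ} (hs : 0 < s) (hsm : s ≤ m) :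
    (1 - Real.exp (-s)) ^ 2 * (1 - Real.exp (-(2 * (m - s))))
      ≤ 2 * s * (1 - Real.exp (-m)) ^ 2 := by
  have h1 : 1 - Real.exp (-s) ≤ s := by nlinarith [Real.add_one_le_exp (-s)]
  have h2 : Real.exp (-m) ≤ Real.exp (-s) := Real.exp_le_exp.mpr (by linarith)
  have h2' : 1 - Real.exp (-s) ≤ 1 - Real.exp (-m) := by linarith
  have h3 : Real.exp (-(2 * m)) ≤ Real.exp (-(2 * (m - s))) :=
    Real.exp_le_exp.mpr (by linarith)
  have e : Real.exp (-(2 * m)) = Real.exp (-m) * Real.exp (-m) := by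
    rw [← Real.exp_add]; ring_nf
  have h5 : Real.exp (-m) ≤ 1 := by
    rw [← Real.exp_zero]; exact Real.exp_le_exp.mpr (by linarith)
  have h5s : Real.exp (-s) ≤ 1 := by
    rw [← Real.exp_zero]; exact Real.exp_le_exp.mpr (by linarith)
  have h6 : Real.exp (-(2 * (m - s))) ≤ 1 := by
    rw [← Real.exp_zero]; exact Real.exp_le_exp.mpr (by nlinarith)
  have h4 : 1 - Real.exp (-(2 * (m - s))) ≤ 2 * (1 - Real.exp (-m)) := by nlinarith
  have hA : (1 - Real.exp (-s)) * (1 - Real.exp (-(2 * (m - s))))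
      ≤ (1 - Real.exp (-m)) * (2 * (1 - Real.exp (-m))) :=
    mul_le_mul h2' h4 (by linarith) (by linarith)
  calc (1 - Real.exp (-s)) ^ 2 * (1 - Real.exp (-(2 * (m - s))))
      = (1 - Real.exp (-s)) * ((1 - Real.exp (-s)) * (1 - Real.exp (-(2 * (m - s))))) := by ring
    _ ≤ s * ((1 - Real.exp (-m)) * (2 * (1 - Real.exp (-m)))) := by
        apply mul_le_mul h1 hA ?_ hs.le
        have : 0 ≤ 1 - Real.exp (-s) := by linarith
        have : 0 ≤ 1 - Real.exp (-(2 * (m - s))) := by linarith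
        positivity
    _ = 2 * s * (1 - Real.exp (-m)) ^ 2 := by ring

lemma lint_Ico_ofReal (f : ℝ → ℝ) (hf : Continuous f) (hnn : ∀ x, 0 ≤ f x) {a b : ℝ}
    (hab : a ≤ b) :
    ∫⁻ x in Ico a b, ENNReal.ofReal (f x) = ENNReal.ofReal (∫ x in a..b, f x) := by
  have h1 : ∫⁻ x in Ico a b, ENNReal.ofReal (f x) = ∫⁻ x in Ioc a b, ENNReal.ofReal (f x) :=
    setLIntegral_congr Ico_ae_eq_Ioc
  rw [h1, intervalIntegral.integral_of_le hab,
    ofReal_integral_eq_lintegral_ofReal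
      ((hf.integrableOn_Icc).mono_set Ioc_subset_Icc_self) (ae_of_all _ hnn)]

lemma cell_exp_bound {lam z τ : ℝ} (qk a : ℝ) (hlam : 0 < lam) (hz : 0 < z) (hzτ : z ≤ τ) :
    qk ^ 2 * (1 - Real.exp (lam * z)) ^ 2 *
        ((Real.exp (-(2 * lam * (a + z))) - Real.exp (-(2 * lam * (a + τ)))) / (2 * lam))
      ≤ (qk * (Real.exp (-(lam * (a + τ))) - Real.exp (-(lam * a)))) ^ 2 * z := by
  have key := key_exp (s := lam * z) (m := lam * τ) (by positivity) (by nlinarith)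
  set A0 := Real.exp (-(lam * a)) with hA0
  set Zm := Real.exp (-(lam * z)) with hZm
  set Tm := Real.exp (-(lam * τ)) with hTm
  have hA0p : 0 < A0 := Real.exp_pos _
  have hZmp : 0 < Zm := Real.exp_pos _
  have hTmp : 0 < Tm := Real.exp_pos _
  have eZ : Real.exp (lam * z) = Zm⁻¹ := by rw [hZm, Real.exp_neg, inv_inv]
  have e1 : Real.exp (-(2 * lam * (a + z))) = A0 ^ 2 * Zm ^ 2 := by
    rw [hA0, hZm]; simp only [pow_two, ← Real.exp_add]; congr 1; ring
  have e2 : Real.exp (-(2 * lam * (a + τ))) = A0 ^ 2 * Tm ^ 2 := by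
    rw [hA0, hTm]; simp only [pow_two, ← Real.exp_add]; congr 1; ring
  have e3 : Real.exp (-(lam * (a + τ))) = A0 * Tm := by
    rw [hA0, hTm, ← Real.exp_add]; congr 1; ring
  have e4 : Real.exp (-(2 * (lam * τ - lam * z))) = Tm ^ 2 * Zm⁻¹ ^ 2 := by
    rw [hTm, hZm]
    rw [show -(2 * (lam * τ - lam * z)) = (-(lam * τ)) + (-(lam * τ)) + ((lam * z) + (lam * z))
      from by ring]
    rw [Real.exp_add, Real.exp_add, Real.exp_add]
    rw [show Real.exp (lam * z) = (Real.exp (-(lam * z)))⁻¹ from by rw [Real.exp_neg, inv_inv]]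
    ring
  rw [eZ, e1, e2, e3]
  rw [e4] at key
  have h1 : (1 - Zm⁻¹) ^ 2 * (A0 ^ 2 * Zm ^ 2 - A0 ^ 2 * Tm ^ 2)
      = A0 ^ 2 * ((1 - Zm) ^ 2 * (1 - Tm ^ 2 * Zm⁻¹ ^ 2)) := by
    field_simp
    ring
  have h2 : (qk * (A0 * Tm - A0)) ^ 2 = qk ^ 2 * (A0 ^ 2 * (1 - Tm) ^ 2) := by ring
  have hstep : qk ^ 2 * (A0 ^ 2 * ((1 - Zm) ^ 2 * (1 - Tm ^ 2 * Zm⁻¹ ^ 2)))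
      ≤ qk ^ 2 * (A0 ^ 2 * (2 * (lam * z) * (1 - Tm) ^ 2)) := by
    apply mul_le_mul_of_nonneg_left _ (sq_nonneg qk)
    exact mul_le_mul_of_nonneg_left key (sq_nonneg A0)
  calc qk ^ 2 * (1 - Zm⁻¹) ^ 2 * ((A0 ^ 2 * Zm ^ 2 - A0 ^ 2 * Tm ^ 2) / (2 * lam))
      = qk ^ 2 * (A0 ^ 2 * ((1 - Zm) ^ 2 * (1 - Tm ^ 2 * Zm⁻¹ ^ 2))) / (2 * lam) := by
        rw [← h1]; ring
    _ ≤ qk ^ 2 * (A0 ^ 2 * (2 * (lam * z) * (1 - Tm) ^ 2)) / (2 * lam) := by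
        have h2lam : (0:ℝ) < 2 * lam := by positivity
        exact (div_le_div_iff_of_pos_right h2lam).mpr hstep
    _ = (qk * (A0 * Tm - A0)) ^ 2 * z := by
        rw [h2]; field_simp

lemma slob_repr (u : ℝ → ℝ) (hu : Continuous u) :
    slobHalfSq u = ∫⁻ h : ℝ, ∫⁻ x : ℝ, ENNReal.ofReal ((u x - u (x - h)) ^ 2 / h ^ 2) := by
  have inner : ∀ x : ℝ, (∫⁻ z : ℝ, ENNReal.ofReal ((u x - u z) ^ 2 / |x - z| ^ 2))
      = ∫⁻ h : ℝ, ENNReal.ofReal ((u x - u (x - h)) ^ 2 / h ^ 2) := by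
    intro x
    have mF : Measurable fun z : ℝ => ENNReal.ofReal ((u x - u z) ^ 2 / |x - z| ^ 2) := by
      apply Measurable.ennreal_ofReal
      apply Measurable.div
      · fun_prop
      · fun_prop
    have mp := Measure.measurePreserving_sub_left (volume : Measure ℝ) x
    have h1 := mp.lintegral_comp mF
    rw [← h1]
    congr 1; funext h
    have e1 : x - (x - h) = h := by ring
    rw [e1, sq_abs]
  have swap : (∫⁻ x : ℝ, ∫⁻ h : ℝ, ENNReal.ofReal ((u x - u (x - h)) ^ 2 / h ^ 2))
      = ∫⁻ h : ℝ, ∫⁻ x : ℝ, ENNReal.ofReal ((u x - u (x - h)) ^ 2 / h ^ 2) := by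
    apply lintegral_lintegral_swap
    apply Measurable.aemeasurable
    apply Measurable.ennreal_ofReal
    apply Measurable.div
    · fun_prop
    · fun_prop
  rw [← swap]
  unfold slobHalfSq
  congr 1; funext x
  exact inner x

lemma inner_div (u : ℝ → ℝ) (hu : Continuous u) {h : ℝ} (hh : h ≠ 0) :
    (∫⁻ x : ℝ, ENNReal.ofReal ((u x - u (x - h)) ^ 2 / h ^ 2))
      = gsh u h / ENNReal.ofReal (h ^ 2) := by
  have hpos : (0 : ℝ) < h ^ 2 := by positivity
  have e : ∀ x : ℝ, ENNReal.ofReal ((u x - u (x - h)) ^ 2 / h ^ 2)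
      = ENNReal.ofReal ((u x - u (x - h)) ^ 2) * (ENNReal.ofReal (h ^ 2))⁻¹ := by
    intro x
    rw [ENNReal.ofReal_div_of_pos hpos, div_eq_mul_inv]
  simp only [e]
  rw [lintegral_mul_const' _ _ (by
    simp [ENNReal.inv_ne_top, ENNReal.ofReal_eq_zero]; exact hh)]
  rw [div_eq_mul_inv]
  rfl

lemma gsh_weak (u : ℝ → ℝ) (hu : Continuous u) {y : ℝ} (hy : 0 < y) :
    gsh u y ≤ ENNReal.ofReal (4 * y) * slobHalfSq u := by
  set S := slobHalfSq u with hS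
  have meas_g : Measurable fun h => gsh u h := gsh_meas u hu
  have meas_gy : Measurable fun h : ℝ => gsh u (y - h) :=
    meas_g.comp (measurable_const.sub measurable_id)
  have step3 : ENNReal.ofReal y * gsh u y ≤ 4 * ∫⁻ h in Ioo (0:ℝ) y, gsh u h := by
    have c1 : ENNReal.ofReal y * gsh u y = ∫⁻ _ in Ioo (0:ℝ) y, gsh u y := by
      rw [setLIntegral_const, Real.volume_Ioo, sub_zero, mul_comm]
    have c2 : (∫⁻ _ in Ioo (0:ℝ) y, gsh u y)
        ≤ ∫⁻ h in Ioo (0:ℝ) y, (2 * gsh u h + 2 * gsh u (y - h)) := by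
      apply setLIntegral_mono ((meas_g.const_mul 2).add (meas_gy.const_mul 2))
      intro h _
      exact gsh_subadd u hu h y
    have c3 : (∫⁻ h in Ioo (0:ℝ) y, (2 * gsh u h + 2 * gsh u (y - h)))
        = 2 * (∫⁻ h in Ioo (0:ℝ) y, gsh u h) + 2 * ∫⁻ h in Ioo (0:ℝ) y, gsh u (y - h) := by
      rw [lintegral_add_left (meas_g.const_mul 2),
        lintegral_const_mul' _ _ (by norm_num), lintegral_const_mul' _ _ (by norm_num)]
    have c4 : (∫⁻ h in Ioo (0:ℝ) y, gsh u (y - h)) = ∫⁻ h in Ioo (0:ℝ) y, gsh u h := by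
      have mp := Measure.measurePreserving_sub_left (volume : Measure ℝ) y
      have emb : MeasurableEmbedding (fun h : ℝ => y - h) :=
        (Homeomorph.subLeft y).measurableEmbedding
      have pre : (fun h : ℝ => y - h) ⁻¹' Ioo (0:ℝ) y = Ioo (0:ℝ) y := by
        ext t
        simp only [mem_preimage, mem_Ioo]
        constructor <;> rintro ⟨h1, h2⟩ <;> constructor <;> linarith
      have := mp.setLIntegral_comp_preimage_emb emb (fun h => gsh u h) (Ioo (0:ℝ) y)
      rw [pre] at this
      exact this
    calc ENNReal.ofReal y * gsh u y = ∫⁻ _ in Ioo (0:ℝ) y, gsh u y := c1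
      _ ≤ _ := c2
      _ = 2 * (∫⁻ h in Ioo (0:ℝ) y, gsh u h) + 2 * ∫⁻ h in Ioo (0:ℝ) y, gsh u (y - h) := c3
      _ = 4 * ∫⁻ h in Ioo (0:ℝ) y, gsh u h := by rw [c4]; ring
  have step4 : (∫⁻ h in Ioo (0:ℝ) y, gsh u h) ≤ ENNReal.ofReal (y ^ 2) * S := by
    have meas_rhs : Measurable fun h : ℝ =>
        ENNReal.ofReal (y ^ 2) * (gsh u h / ENNReal.ofReal (h ^ 2)) := by
      apply Measurable.const_mul
      apply meas_g.div
      exact (measurable_id.pow_const 2).ennreal_ofReal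
    have c5 : (∫⁻ h in Ioo (0:ℝ) y, gsh u h)
        ≤ ∫⁻ h in Ioo (0:ℝ) y, ENNReal.ofReal (y ^ 2) * (gsh u h / ENNReal.ofReal (h ^ 2)) := by
      apply setLIntegral_mono meas_rhs
      intro h hh
      obtain ⟨h0, h1⟩ := hh
      have hne : ENNReal.ofReal (h ^ 2) ≠ 0 := by
        simp [ENNReal.ofReal_eq_zero]; positivity
      have hnt : ENNReal.ofReal (h ^ 2) ≠ ⊤ := ENNReal.ofReal_ne_top
      calc gsh u h = gsh u h / ENNReal.ofReal (h ^ 2) * ENNReal.ofReal (h ^ 2) :=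
            (ENNReal.div_mul_cancel hne hnt).symm
        _ ≤ gsh u h / ENNReal.ofReal (h ^ 2) * ENNReal.ofReal (y ^ 2) := by
            apply mul_le_mul_right
            apply ENNReal.ofReal_le_ofReal
            nlinarith
        _ = ENNReal.ofReal (y ^ 2) * (gsh u h / ENNReal.ofReal (h ^ 2)) := mul_comm _ _
    have c6 : (∫⁻ h in Ioo (0:ℝ) y, ENNReal.ofReal (y ^ 2) * (gsh u h / ENNReal.ofReal (h ^ 2)))
        = ENNReal.ofReal (y ^ 2) * ∫⁻ h in Ioo (0:ℝ) y, gsh u h / ENNReal.ofReal (h ^ 2) :=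
      lintegral_const_mul' _ _ ENNReal.ofReal_ne_top
    have c7 : (∫⁻ h in Ioo (0:ℝ) y, gsh u h / ENNReal.ofReal (h ^ 2))
        = ∫⁻ h in Ioo (0:ℝ) y, ∫⁻ x : ℝ, ENNReal.ofReal ((u x - u (x - h)) ^ 2 / h ^ 2) := by
      apply setLIntegral_congr_fun measurableSet_Ioo
      intro h hh
      exact (inner_div u hu (by rcases hh with ⟨h0, _⟩; linarith)).symm
    have c8 : (∫⁻ h in Ioo (0:ℝ) y, ∫⁻ x : ℝ, ENNReal.ofReal ((u x - u (x - h)) ^ 2 / h ^ 2)) ≤ S := by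
      rw [hS, slob_repr u hu]
      exact setLIntegral_le_lintegral _ _
    calc (∫⁻ h in Ioo (0:ℝ) y, gsh u h) ≤ _ := c5
      _ = ENNReal.ofReal (y ^ 2) * ∫⁻ h in Ioo (0:ℝ) y, gsh u h / ENNReal.ofReal (h ^ 2) := c6
      _ = ENNReal.ofReal (y ^ 2) * ∫⁻ h in Ioo (0:ℝ) y,
            ∫⁻ x : ℝ, ENNReal.ofReal ((u x - u (x - h)) ^ 2 / h ^ 2) := by rw [c7]
      _ ≤ ENNReal.ofReal (y ^ 2) * S := mul_le_mul_right c8 _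
  have final : ENNReal.ofReal y * gsh u y ≤ ENNReal.ofReal y * (ENNReal.ofReal (4 * y) * S) := by
    calc ENNReal.ofReal y * gsh u y ≤ 4 * ∫⁻ h in Ioo (0:ℝ) y, gsh u h := step3
      _ ≤ 4 * (ENNReal.ofReal (y ^ 2) * S) := mul_le_mul_right step4 _
      _ = ENNReal.ofReal y * (ENNReal.ofReal (4 * y) * S) := by
          rw [← mul_assoc, ← mul_assoc]
          congr 1
          rw [← ENNReal.ofReal_ofNat 4, ← ENNReal.ofReal_mul (by norm_num),
            ← ENNReal.ofReal_mul (by positivity)]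
          congr 1
          ring
  exact (ENNReal.mul_le_mul_iff_right (by simp [ENNReal.ofReal_eq_zero]; linarith)
    ENNReal.ofReal_ne_top).mp final

lemma exp_diff_sq (qk lam x z : ℝ) :
    (qk * Real.exp (-(lam * x)) - qk * Real.exp (-(lam * (x - z)))) ^ 2
      = qk ^ 2 * (1 - Real.exp (lam * z)) ^ 2 * Real.exp (-(2 * lam * x)) := by
  rw [show -(lam * (x - z)) = -(lam * x) + lam * z by ring, Real.exp_add,
    show -(2 * lam * x) = -(lam * x) + -(lam * x) by ring, Real.exp_add]
  ring

lemma claimW (τ : ℝ) (hτ : 0 < τ) (u v : ℝ → ℝ) (Δ : ℤ → ℝ)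
    (hbound : ∀ k : ℤ, ∀ x ∈ Ico ((k : ℝ) * τ) (((k : ℝ) + 1) * τ),
      (v x - u x) ^ 2 ≤ (Δ k) ^ 2) :
    (∫⁻ x : ℝ, ENNReal.ofReal ((v x - u x) ^ 2))
      ≤ ENNReal.ofReal τ * ∑' k : ℤ, ENNReal.ofReal ((Δ k) ^ 2) := by
  rw [lint_cells τ hτ]
  have percell : ∀ k : ℤ,
      (∫⁻ x in Ico ((k : ℝ) * τ) (((k : ℝ) + 1) * τ), ENNReal.ofReal ((v x - u x) ^ 2))
        ≤ ENNReal.ofReal τ * ENNReal.ofReal ((Δ k) ^ 2) := by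
    intro k
    calc (∫⁻ x in Ico ((k : ℝ) * τ) (((k : ℝ) + 1) * τ), ENNReal.ofReal ((v x - u x) ^ 2))
        ≤ ∫⁻ _ in Ico ((k : ℝ) * τ) (((k : ℝ) + 1) * τ), ENNReal.ofReal ((Δ k) ^ 2) :=
          setLIntegral_mono measurable_const (fun x hx => ENNReal.ofReal_le_ofReal (hbound k x hx))
      _ = ENNReal.ofReal ((Δ k) ^ 2) * volume (Ico ((k : ℝ) * τ) (((k : ℝ) + 1) * τ)) :=
          setLIntegral_const _ _
      _ = ENNReal.ofReal τ * ENNReal.ofReal ((Δ k) ^ 2) := by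
          rw [Real.volume_Ico, show ((k : ℝ) + 1) * τ - (k : ℝ) * τ = τ by ring, mul_comm]
  calc _ ≤ ∑' k : ℤ, ENNReal.ofReal τ * ENNReal.ofReal ((Δ k) ^ 2) :=
        ENNReal.tsum_le_tsum percell
    _ = _ := ENNReal.tsum_mul_left

lemma claimDD (τ : ℝ) (hτ : 0 < τ) (u : ℝ → ℝ) (hu : Continuous u) (Δ P Q : ℤ → ℝ)
    (heq : ∀ k : ℤ, ∀ x ∈ Ico ((k : ℝ) * τ) (((k : ℝ) + 1) * τ),
      u x - u (x - τ) = P k + Q k * x)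
    (hPa : ∀ k : ℤ, P k + Q k * ((k : ℝ) * τ) = Δ (k - 1))
    (hPb : ∀ k : ℤ, P k + Q k * (((k : ℝ) + 1) * τ) = Δ k) :
    ENNReal.ofReal τ * ∑' k : ℤ, ENNReal.ofReal ((Δ k) ^ 2) ≤ 3 * gsh u τ := by
  have percell : ∀ k : ℤ,
      ENNReal.ofReal (τ / 6 * (Δ (k - 1)) ^ 2) + ENNReal.ofReal (τ / 6 * (Δ k) ^ 2)
        ≤ ∫⁻ x in Ico ((k : ℝ) * τ) (((k : ℝ) + 1) * τ),
            ENNReal.ofReal ((u x - u (x - τ)) ^ 2) := by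
    intro k
    have hab : (k : ℝ) * τ ≤ ((k : ℝ) + 1) * τ := by nlinarith
    have e1 : (∫⁻ x in Ico ((k : ℝ) * τ) (((k : ℝ) + 1) * τ),
          ENNReal.ofReal ((u x - u (x - τ)) ^ 2))
        = ∫⁻ x in Ico ((k : ℝ) * τ) (((k : ℝ) + 1) * τ),
            ENNReal.ofReal ((P k + Q k * x) ^ 2) := by
      apply setLIntegral_congr_fun measurableSet_Ico
      intro x hx
      beta_reduce
      rw [heq k x hx]
    rw [e1, lint_Ico_ofReal _ (by fun_prop) (fun x => sq_nonneg _) hab,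
      ← ENNReal.ofReal_add (by positivity) (by positivity)]
    apply ENNReal.ofReal_le_ofReal
    have haff := affine_sq_int (P k) (Q k) ((k : ℝ) * τ) τ hτ
    rw [show (k : ℝ) * τ + τ = ((k : ℝ) + 1) * τ by ring, hPa k, hPb k] at haff
    linarith
  have hsum : ENNReal.ofReal (τ / 6) * (∑' k : ℤ, ENNReal.ofReal ((Δ k) ^ 2))
      + ENNReal.ofReal (τ / 6) * (∑' k : ℤ, ENNReal.ofReal ((Δ k) ^ 2)) ≤ gsh u τ := by
    have step : (∑' k : ℤ, (ENNReal.ofReal (τ / 6 * (Δ (k - 1)) ^ 2)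
        + ENNReal.ofReal (τ / 6 * (Δ k) ^ 2))) ≤ gsh u τ := by
      rw [gsh, lint_cells τ hτ]
      exact ENNReal.tsum_le_tsum percell
    have e2 : ∀ k : ℤ, ENNReal.ofReal (τ / 6 * (Δ (k - 1)) ^ 2)
        = ENNReal.ofReal (τ / 6) * ENNReal.ofReal ((Δ (k - 1)) ^ 2) := fun k =>
      ENNReal.ofReal_mul (by positivity)
    have e3 : ∀ k : ℤ, ENNReal.ofReal (τ / 6 * (Δ k) ^ 2)
        = ENNReal.ofReal (τ / 6) * ENNReal.ofReal ((Δ k) ^ 2) := fun k =>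
      ENNReal.ofReal_mul (by positivity)
    simp only [e2, e3] at step
    rw [ENNReal.tsum_add, ENNReal.tsum_mul_left, ENNReal.tsum_mul_left] at step
    have e4 : (∑' k : ℤ, ENNReal.ofReal ((Δ (k - 1)) ^ 2))
        = ∑' k : ℤ, ENNReal.ofReal ((Δ k) ^ 2) :=
      (Equiv.subRight (1 : ℤ)).tsum_eq (fun j => ENNReal.ofReal ((Δ j) ^ 2))
    rw [e4] at step
    exact step
  calc ENNReal.ofReal τ * ∑' k : ℤ, ENNReal.ofReal ((Δ k) ^ 2)
      = 3 * (ENNReal.ofReal (τ / 6) * (∑' k : ℤ, ENNReal.ofReal ((Δ k) ^ 2))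
          + ENNReal.ofReal (τ / 6) * (∑' k : ℤ, ENNReal.ofReal ((Δ k) ^ 2))) := by
        have : ENNReal.ofReal τ = 6 * ENNReal.ofReal (τ / 6) := by
          rw [← ENNReal.ofReal_ofNat 6, ← ENNReal.ofReal_mul (by norm_num)]
          congr 1
          field_simp
        rw [this]
        ring
    _ ≤ 3 * gsh u τ := mul_le_mul_right hsum 3

lemma claimBig (u v : ℝ → ℝ) (hu : Continuous u) (hv : Continuous v) (z : ℝ) :
    gsh v z ≤ 2 * gsh u z + 8 * ∫⁻ x : ℝ, ENNReal.ofReal ((v x - u x) ^ 2) := by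
  have measW : Measurable fun x : ℝ => ENNReal.ofReal ((v x - u x) ^ 2) := by
    have : Continuous fun x : ℝ => (v x - u x) ^ 2 := by fun_prop
    exact this.measurable.ennreal_ofReal
  have measWs : Measurable fun x : ℝ => ENNReal.ofReal ((v (x - z) - u (x - z)) ^ 2) := by
    have : Continuous fun x : ℝ => (v (x - z) - u (x - z)) ^ 2 := by fun_prop
    exact this.measurable.ennreal_ofReal
  have pt : ∀ x : ℝ, ENNReal.ofReal ((v x - v (x - z)) ^ 2)
      ≤ 2 * ENNReal.ofReal ((u x - u (x - z)) ^ 2)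
        + (4 * ENNReal.ofReal ((v x - u x) ^ 2)
          + 4 * ENNReal.ofReal ((v (x - z) - u (x - z)) ^ 2)) := by
    intro x
    have d1 : v x - v (x - z)
        = (u x - u (x - z)) + ((v x - u x) + (-(v (x - z) - u (x - z)))) := by ring
    calc ENNReal.ofReal ((v x - v (x - z)) ^ 2)
        ≤ 2 * ENNReal.ofReal ((u x - u (x - z)) ^ 2)
          + 2 * ENNReal.ofReal (((v x - u x) + (-(v (x - z) - u (x - z)))) ^ 2) := by
          rw [d1]; exact ofReal_sq_add_le _ _
      _ ≤ 2 * ENNReal.ofReal ((u x - u (x - z)) ^ 2)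
          + (4 * ENNReal.ofReal ((v x - u x) ^ 2)
            + 4 * ENNReal.ofReal ((v (x - z) - u (x - z)) ^ 2)) := by
          apply add_le_add_right
          have h := ofReal_sq_add_le (v x - u x) (-(v (x - z) - u (x - z)))
          rw [show (-(v (x - z) - u (x - z))) ^ 2 = (v (x - z) - u (x - z)) ^ 2 by ring] at h
          calc 2 * ENNReal.ofReal (((v x - u x) + (-(v (x - z) - u (x - z)))) ^ 2)
              ≤ 2 * (2 * ENNReal.ofReal ((v x - u x) ^ 2)
                + 2 * ENNReal.ofReal ((v (x - z) - u (x - z)) ^ 2)) := mul_le_mul_right h 2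
            _ = 4 * ENNReal.ofReal ((v x - u x) ^ 2)
                + 4 * ENNReal.ofReal ((v (x - z) - u (x - z)) ^ 2) := by ring
  calc gsh v z ≤ ∫⁻ x : ℝ, (2 * ENNReal.ofReal ((u x - u (x - z)) ^ 2)
        + (4 * ENNReal.ofReal ((v x - u x) ^ 2)
          + 4 * ENNReal.ofReal ((v (x - z) - u (x - z)) ^ 2))) := lintegral_mono pt
    _ = 2 * gsh u z + (4 * (∫⁻ x : ℝ, ENNReal.ofReal ((v x - u x) ^ 2))
        + 4 * ∫⁻ x : ℝ, ENNReal.ofReal ((v (x - z) - u (x - z)) ^ 2)) := by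
        rw [lintegral_add_left ((cont_int u hu z).const_mul 2),
          lintegral_add_left (measW.const_mul 4),
          lintegral_const_mul' _ _ (by norm_num),
          lintegral_const_mul' _ _ (by norm_num),
          lintegral_const_mul' _ _ (by norm_num)]
        rfl
    _ = 2 * gsh u z + 8 * ∫⁻ x : ℝ, ENNReal.ofReal ((v x - u x) ^ 2) := by
        rw [lintegral_sub_right_eq_self
          (fun t => ENNReal.ofReal ((v t - u t) ^ 2)) z]
        ring

lemma cell_small (lam z τ : ℝ) (hlam : 0 < lam) (hz : 0 < z) (hzτ : z ≤ τ)
    (v : ℝ → ℝ) (pk qk Δk' Δk a : ℝ)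
    (hexp : ∀ t ∈ Icc a (a + τ), v t = pk + qk * Real.exp (-(lam * t)))
    (hΔ : Δk = qk * (Real.exp (-(lam * (a + τ))) - Real.exp (-(lam * a))))
    (hstrip : ∀ x ∈ Ico a (a + z), (v x - v (x - z)) ^ 2 ≤ 2 * Δk' ^ 2 + 2 * Δk ^ 2) :
    (∫⁻ x in Ico a (a + τ), ENNReal.ofReal ((v x - v (x - z)) ^ 2))
      ≤ ENNReal.ofReal z * (2 * ENNReal.ofReal (Δk' ^ 2) + 3 * ENNReal.ofReal (Δk ^ 2)) := by
  have haz : a ≤ a + z := by linarith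
  have hazb : a + z ≤ a + τ := by linarith
  rw [← Ico_union_Ico_eq_Ico haz hazb,
    lintegral_union measurableSet_Ico (by apply Set.disjoint_left.mpr; rintro x ⟨_, h2⟩ ⟨h3, _⟩; linarith)]
  have strip : (∫⁻ x in Ico a (a + z), ENNReal.ofReal ((v x - v (x - z)) ^ 2))
      ≤ ENNReal.ofReal (2 * Δk' ^ 2 + 2 * Δk ^ 2) * ENNReal.ofReal z := by
    calc (∫⁻ x in Ico a (a + z), ENNReal.ofReal ((v x - v (x - z)) ^ 2))
        ≤ ∫⁻ _ in Ico a (a + z), ENNReal.ofReal (2 * Δk' ^ 2 + 2 * Δk ^ 2) :=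
          setLIntegral_mono measurable_const
            (fun x hx => ENNReal.ofReal_le_ofReal (hstrip x hx))
      _ = ENNReal.ofReal (2 * Δk' ^ 2 + 2 * Δk ^ 2) * volume (Ico a (a + z)) :=
          setLIntegral_const _ _
      _ = _ := by rw [Real.volume_Ico, show a + z - a = z by ring]
  have main : (∫⁻ x in Ico (a + z) (a + τ), ENNReal.ofReal ((v x - v (x - z)) ^ 2))
      ≤ ENNReal.ofReal (Δk ^ 2 * z) := by
    have e2 : (∫⁻ x in Ico (a + z) (a + τ), ENNReal.ofReal ((v x - v (x - z)) ^ 2))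
        = ∫⁻ x in Ico (a + z) (a + τ),
            ENNReal.ofReal (qk ^ 2 * (1 - Real.exp (lam * z)) ^ 2
              * Real.exp (-(2 * lam * x))) := by
      apply setLIntegral_congr_fun measurableSet_Ico
      intro x hx
      beta_reduce
      have hx1 : x ∈ Icc a (a + τ) := ⟨by linarith [hx.1], hx.2.le⟩
      have hx2 : x - z ∈ Icc a (a + τ) := ⟨by linarith [hx.1], by linarith [hx.2.le]⟩
      rw [hexp x hx1, hexp (x - z) hx2,
        show (pk + qk * Real.exp (-(lam * x))) - (pk + qk * Real.exp (-(lam * (x - z))))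
          = qk * Real.exp (-(lam * x)) - qk * Real.exp (-(lam * (x - z))) by ring,
        exp_diff_sq]
    rw [e2, lint_Ico_ofReal _ (by fun_prop) (fun x => by positivity) hazb]
    apply ENNReal.ofReal_le_ofReal
    rw [intervalIntegral.integral_const_mul, int_exp_neg (by positivity : (0:ℝ) < 2 * lam)]
    rw [hΔ]
    exact cell_exp_bound qk a hlam hz hzτ
  calc (∫⁻ x in Ico a (a + z), ENNReal.ofReal ((v x - v (x - z)) ^ 2))
        + ∫⁻ x in Ico (a + z) (a + τ), ENNReal.ofReal ((v x - v (x - z)) ^ 2)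
      ≤ ENNReal.ofReal (2 * Δk' ^ 2 + 2 * Δk ^ 2) * ENNReal.ofReal z
          + ENNReal.ofReal (Δk ^ 2 * z) := add_le_add strip main
    _ = ENNReal.ofReal z * (2 * ENNReal.ofReal (Δk' ^ 2) + 3 * ENNReal.ofReal (Δk ^ 2)) := by
        rw [ENNReal.ofReal_add (by positivity) (by positivity),
          ENNReal.ofReal_mul (by norm_num : (0:ℝ) ≤ 2),
          ENNReal.ofReal_mul (by norm_num : (0:ℝ) ≤ 2),
          ENNReal.ofReal_mul (sq_nonneg Δk), ENNReal.ofReal_ofNat]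
        ring

lemma claimSmall (τ lam : ℝ) (hτ : 0 < τ) (hlam : 0 < lam) (v : ℝ → ℝ)
    (p q Δ : ℤ → ℝ) {z : ℝ} (hz : 0 < z) (hzτ : z ≤ τ)
    (hexp : ∀ k : ℤ, ∀ t ∈ Icc ((k : ℝ) * τ) (((k : ℝ) + 1) * τ),
      v t = p k + q k * Real.exp (-(lam * t)))
    (hΔ : ∀ k : ℤ, Δ k = q k * (Real.exp (-(lam * (((k : ℝ) + 1) * τ)))
      - Real.exp (-(lam * ((k : ℝ) * τ)))))
    (hstrip : ∀ k : ℤ, ∀ x ∈ Ico ((k : ℝ) * τ) ((k : ℝ) * τ + z),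
      (v x - v (x - z)) ^ 2 ≤ 2 * (Δ (k - 1)) ^ 2 + 2 * (Δ k) ^ 2) :
    gsh v z ≤ ENNReal.ofReal z * (5 * ∑' k : ℤ, ENNReal.ofReal ((Δ k) ^ 2)) := by
  have percell : ∀ k : ℤ,
      (∫⁻ x in Ico ((k : ℝ) * τ) (((k : ℝ) + 1) * τ), ENNReal.ofReal ((v x - v (x - z)) ^ 2))
        ≤ ENNReal.ofReal z
            * (2 * ENNReal.ofReal ((Δ (k - 1)) ^ 2) + 3 * ENNReal.ofReal ((Δ k) ^ 2)) := by
    intro k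
    have hb : ((k : ℝ) + 1) * τ = (k : ℝ) * τ + τ := by ring
    have hexpk := hexp k
    have hΔk := hΔ k
    rw [hb] at hexpk hΔk ⊢
    exact cell_small lam z τ hlam hz hzτ v (p k) (q k) (Δ (k - 1)) (Δ k) ((k : ℝ) * τ)
      hexpk hΔk (hstrip k)
  rw [gsh, lint_cells τ hτ]
  calc (∑' k : ℤ, ∫⁻ x in Ico ((k : ℝ) * τ) (((k : ℝ) + 1) * τ),
        ENNReal.ofReal ((v x - v (x - z)) ^ 2))
      ≤ ∑' k : ℤ, ENNReal.ofReal z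
          * (2 * ENNReal.ofReal ((Δ (k - 1)) ^ 2) + 3 * ENNReal.ofReal ((Δ k) ^ 2)) :=
        ENNReal.tsum_le_tsum percell
    _ = ENNReal.ofReal z * ∑' k : ℤ,
          (2 * ENNReal.ofReal ((Δ (k - 1)) ^ 2) + 3 * ENNReal.ofReal ((Δ k) ^ 2)) :=
        ENNReal.tsum_mul_left
    _ = ENNReal.ofReal z * (5 * ∑' k : ℤ, ENNReal.ofReal ((Δ k) ^ 2)) := by
        congr 1
        have e4 : (∑' i : ℤ, ENNReal.ofReal ((Δ (i - 1)) ^ 2))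
            = ∑' i : ℤ, ENNReal.ofReal ((Δ i) ^ 2) :=
          (Equiv.subRight (1 : ℤ)).tsum_eq (fun j => ENNReal.ofReal ((Δ j) ^ 2))
        rw [ENNReal.tsum_add, ENNReal.tsum_mul_left, ENNReal.tsum_mul_left, e4]
        ring

end UIBAux

/-- **Weak `H^{1/2}` bound for the upwinded interpolant, uniformly in `α`, `β`, `τ`:**
there is `C > 0` such that for all `α, β, τ > 0`, every continuous `τ`-piecewise affine
`u ∈ L²(ℝ)` with finite Slobodetski seminorm and `v` its upwinded interpolant,
`‖v − v(· − y)‖²_{L²} ≤ C² |y| |u|²_{H^{1/2}}` for all `y ∈ ℝ`. -/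
theorem upwind_interpolant_weakHalf_bound :
    ∃ C > (0 : ℝ), ∀ α β τ : ℝ, 0 < α → 0 < β → 0 < τ →
      ∀ u v : ℝ → ℝ,
        Continuous u → PWAffineZ τ u → MemLp u 2 volume → slobHalfSq u < ⊤ →
        Continuous v → (∀ k : ℤ, v ((k : ℝ) * τ) = u ((k : ℝ) * τ)) →
        UpwindZ α β τ v →
        ∀ y : ℝ,
          (∫⁻ x : ℝ, ENNReal.ofReal ((v x - v (x - y)) ^ 2))
            ≤ ENNReal.ofReal (C ^ 2 * |y|) * slobHalfSq u := by
  refine ⟨11, by norm_num, ?_⟩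
  intro α β τ hα hβ hτ u v hu hPW huL2 hSfin hv hint hUp y
  have lampos : (0 : ℝ) < β / α := by positivity
  set lam := β / α with hlamdef
  have hPW' : ∀ k : ℤ, ∃ c₁ c₂ : ℝ,
      ∀ t ∈ Set.Icc ((k : ℝ) * τ) (((k : ℝ) + 1) * τ), u t = c₁ + c₂ * t := hPW
  have hUp' : ∀ k : ℤ, ∃ c₁ c₂ : ℝ,
      ∀ t ∈ Set.Icc ((k : ℝ) * τ) (((k : ℝ) + 1) * τ),
        v t = c₁ + c₂ * Real.exp (-(β * t) / α) := hUp
  choose A B hAB using hPW'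
  choose p q hpq using hUp'
  set Δ : ℤ → ℝ := fun k => u (((k : ℝ) + 1) * τ) - u ((k : ℝ) * τ) with hΔdef
  set D := ∑' k : ℤ, ENNReal.ofReal ((Δ k) ^ 2) with hDdef
  set S := slobHalfSq u with hSdef
  have hcell : ∀ k : ℤ, (k : ℝ) * τ ≤ ((k : ℝ) + 1) * τ := by intro k; nlinarith
  have hint1 : ∀ k : ℤ, v (((k : ℝ) + 1) * τ) = u (((k : ℝ) + 1) * τ) := by
    intro k
    have h := hint (k + 1)
    push_cast at h
    exact h
  have hcast : ∀ k : ℤ, ((k - 1 : ℤ) : ℝ) = (k : ℝ) - 1 := by intro k; push_cast; ring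
  -- exponential form in terms of lam
  have hexp : ∀ k : ℤ, ∀ t ∈ Set.Icc ((k : ℝ) * τ) (((k : ℝ) + 1) * τ),
      v t = p k + q k * Real.exp (-(lam * t)) := by
    intro k t ht
    rw [show -(lam * t) = -(β * t) / α by rw [hlamdef]; ring]
    exact hpq k t ht
  -- range bounds
  have range_v : ∀ k : ℤ, ∀ t ∈ Set.Icc ((k : ℝ) * τ) (((k : ℝ) + 1) * τ),
      v t ∈ Set.uIcc (u ((k : ℝ) * τ)) (u (((k : ℝ) + 1) * τ)) := by
    intro k t ht
    have hl := hpq k _ (Set.left_mem_Icc.mpr (hcell k))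
    have hr := hpq k _ (Set.right_mem_Icc.mpr (hcell k))
    rw [← hint k, ← hint1 k, hl, hr, hpq k t ht]
    exact exp_mem hα hβ ht
  have range_u : ∀ k : ℤ, ∀ t ∈ Set.Icc ((k : ℝ) * τ) (((k : ℝ) + 1) * τ),
      u t ∈ Set.uIcc (u ((k : ℝ) * τ)) (u (((k : ℝ) + 1) * τ)) := by
    intro k t ht
    have hl := hAB k _ (Set.left_mem_Icc.mpr (hcell k))
    have hr := hAB k _ (Set.right_mem_Icc.mpr (hcell k))
    rw [hl, hr, hAB k t ht]
    exact affine_mem ht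
  -- L² bound on v − u
  have hboundW : ∀ k : ℤ, ∀ x ∈ Set.Ico ((k : ℝ) * τ) (((k : ℝ) + 1) * τ),
      (v x - u x) ^ 2 ≤ (Δ k) ^ 2 := by
    intro k x hx
    have hxI : x ∈ Set.Icc ((k : ℝ) * τ) (((k : ℝ) + 1) * τ) := ⟨hx.1, hx.2.le⟩
    exact between_bound (range_v k x hxI) (range_u k x hxI)
  have W : (∫⁻ x : ℝ, ENNReal.ofReal ((v x - u x) ^ 2)) ≤ ENNReal.ofReal τ * D :=
    claimW τ hτ u v Δ hboundW
  -- the telescoping-difference data for claimDD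
  have heq : ∀ k : ℤ, ∀ x ∈ Set.Ico ((k : ℝ) * τ) (((k : ℝ) + 1) * τ),
      u x - u (x - τ) = (A k - A (k - 1) + B (k - 1) * τ) + (B k - B (k - 1)) * x := by
    intro k x hx
    have hx1 : x ∈ Set.Icc ((k : ℝ) * τ) (((k : ℝ) + 1) * τ) := ⟨hx.1, hx.2.le⟩
    have hx2 : x - τ ∈ Set.Icc (((k - 1 : ℤ) : ℝ) * τ) ((((k - 1 : ℤ) : ℝ) + 1) * τ) := by
      rw [hcast k]
      constructor
      · nlinarith [hx.1]
      · rw [show ((k : ℝ) - 1 + 1) = (k : ℝ) by ring]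
        nlinarith [hx.2]
    rw [hAB k x hx1, hAB (k - 1) _ hx2]
    ring
  have hPa : ∀ k : ℤ, (A k - A (k - 1) + B (k - 1) * τ) + (B k - B (k - 1)) * ((k : ℝ) * τ)
      = Δ (k - 1) := by
    intro k
    have e1 := hAB k _ (Set.left_mem_Icc.mpr (hcell k))
    have e2 := hAB (k - 1) _ (Set.left_mem_Icc.mpr (hcell (k - 1)))
    have eΔ : Δ (k - 1) = u ((((k - 1 : ℤ) : ℝ) + 1) * τ) - u (((k - 1 : ℤ) : ℝ) * τ) := rfl
    rw [hcast k] at e2 eΔ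
    rw [show ((k : ℝ) - 1 + 1) * τ = (k : ℝ) * τ by ring] at eΔ
    rw [eΔ, e1, e2]
    ring
  have hPb : ∀ k : ℤ, (A k - A (k - 1) + B (k - 1) * τ) + (B k - B (k - 1)) * (((k : ℝ) + 1) * τ)
      = Δ k := by
    intro k
    have e3 := hAB k _ (Set.right_mem_Icc.mpr (hcell k))
    have e4 := hAB (k - 1) _ (Set.right_mem_Icc.mpr (hcell (k - 1)))
    have e1 := hAB k _ (Set.left_mem_Icc.mpr (hcell k))
    have eΔ : Δ k = u (((k : ℝ) + 1) * τ) - u ((k : ℝ) * τ) := rfl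
    rw [hcast k] at e4
    rw [show ((k : ℝ) - 1 + 1) * τ = (k : ℝ) * τ by ring] at e4
    rw [eΔ, e3, e4]
    ring
  have DD : ENNReal.ofReal τ * D ≤ 3 * gsh u τ :=
    claimDD τ hτ u hu Δ (fun k => A k - A (k - 1) + B (k - 1) * τ)
      (fun k => B k - B (k - 1)) heq hPa hPb
  have hτ0 : ENNReal.ofReal τ ≠ 0 := by
    simp only [ne_eq, ENNReal.ofReal_eq_zero, not_le]
    exact hτ
  have hD12 : D ≤ 12 * S := by
    have g4 : gsh u τ ≤ ENNReal.ofReal (4 * τ) * S := gsh_weak u hu hτ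
    have chain : ENNReal.ofReal τ * D ≤ ENNReal.ofReal τ * (12 * S) := by
      calc ENNReal.ofReal τ * D ≤ 3 * gsh u τ := DD
        _ ≤ 3 * (ENNReal.ofReal (4 * τ) * S) := mul_le_mul_right g4 3
        _ = ENNReal.ofReal τ * (12 * S) := by
            rw [ENNReal.ofReal_mul (by norm_num : (0:ℝ) ≤ 4), ENNReal.ofReal_ofNat]
            ring
    exact (ENNReal.mul_le_mul_iff_right hτ0 ENNReal.ofReal_ne_top).mp chain
  -- Δ in exponential form
  have hΔq : ∀ k : ℤ, Δ k = q k * (Real.exp (-(lam * (((k : ℝ) + 1) * τ)))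
      - Real.exp (-(lam * ((k : ℝ) * τ)))) := by
    intro k
    have hl := hexp k _ (Set.left_mem_Icc.mpr (hcell k))
    have hr := hexp k _ (Set.right_mem_Icc.mpr (hcell k))
    have eΔ : Δ k = u (((k : ℝ) + 1) * τ) - u ((k : ℝ) * τ) := rfl
    rw [eΔ, ← hint k, ← hint1 k, hl, hr]
    ring
  -- the main positive-shift estimate
  have main : ∀ z : ℝ, 0 < z → gsh v z ≤ ENNReal.ofReal (121 * z) * S := by
    intro z hz
    have hofz : ENNReal.ofReal (121 * z) = 121 * ENNReal.ofReal z := by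
      rw [ENNReal.ofReal_mul (by norm_num : (0:ℝ) ≤ 121), ENNReal.ofReal_ofNat]
    rcases le_or_gt z τ with hzτ | hzτ
    · -- small shifts
      have hstrip : ∀ k : ℤ, ∀ x ∈ Set.Ico ((k : ℝ) * τ) ((k : ℝ) * τ + z),
          (v x - v (x - z)) ^ 2 ≤ 2 * (Δ (k - 1)) ^ 2 + 2 * (Δ k) ^ 2 := by
        intro k x hx
        have hx1 : x ∈ Set.Icc ((k : ℝ) * τ) (((k : ℝ) + 1) * τ) :=
          ⟨hx.1, by nlinarith [hx.2]⟩
        have hx2 : x - z ∈ Set.Icc (((k - 1 : ℤ) : ℝ) * τ) ((((k - 1 : ℤ) : ℝ) + 1) * τ) := by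
          rw [hcast k]
          constructor
          · nlinarith [hx.1]
          · rw [show ((k : ℝ) - 1 + 1) = (k : ℝ) by ring]
            nlinarith [hx.2]
        have r1 := range_v k x hx1
        have r2 := range_v (k - 1) _ hx2
        rw [show ((((k - 1 : ℤ) : ℝ)) + 1) * τ = (k : ℝ) * τ by rw [hcast k]; ring] at r2
        have b1 : (v x - u ((k : ℝ) * τ)) ^ 2 ≤ (Δ k) ^ 2 :=
          between_bound r1 Set.left_mem_uIcc
        have b2 : (u ((k : ℝ) * τ) - v (x - z)) ^ 2 ≤ (Δ (k - 1)) ^ 2 := by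
          have eΔ : Δ (k - 1) = u ((((k - 1 : ℤ) : ℝ) + 1) * τ) - u (((k - 1 : ℤ) : ℝ) * τ) := rfl
          rw [show ((((k - 1 : ℤ) : ℝ)) + 1) * τ = (k : ℝ) * τ by rw [hcast k]; ring] at eΔ
          rw [eΔ]
          exact between_bound Set.right_mem_uIcc r2
        nlinarith [b1, b2, sq_nonneg ((v x - u ((k : ℝ) * τ)) - (u ((k : ℝ) * τ) - v (x - z)))]
      have hsm := claimSmall τ lam hτ lampos v p q Δ hz hzτ hexp hΔq hstrip
      calc gsh v z ≤ ENNReal.ofReal z * (5 * D) := hsm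
        _ ≤ ENNReal.ofReal z * (5 * (12 * S)) :=
            mul_le_mul_right (mul_le_mul_right hD12 5) _
        _ = (ENNReal.ofReal z * 60) * S := by ring
        _ ≤ (ENNReal.ofReal z * 121) * S := by
            exact mul_le_mul_left (mul_le_mul_right (by norm_num) _) S
        _ = ENNReal.ofReal (121 * z) * S := by rw [hofz]; ring
    · -- large shifts
      have hbig := claimBig u v hu hv z
      have hweak : gsh u z ≤ ENNReal.ofReal (4 * z) * S := gsh_weak u hu hz
      have hτz : ENNReal.ofReal τ ≤ ENNReal.ofReal z := ENNReal.ofReal_le_ofReal hzτ.le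
      have hof4 : ENNReal.ofReal (4 * z) = 4 * ENNReal.ofReal z := by
        rw [ENNReal.ofReal_mul (by norm_num : (0:ℝ) ≤ 4), ENNReal.ofReal_ofNat]
      calc gsh v z ≤ 2 * gsh u z + 8 * ∫⁻ x : ℝ, ENNReal.ofReal ((v x - u x) ^ 2) := hbig
        _ ≤ 2 * (ENNReal.ofReal (4 * z) * S) + 8 * (ENNReal.ofReal τ * D) := by
            exact add_le_add (mul_le_mul_right hweak 2) (mul_le_mul_right W 8)
        _ ≤ 2 * (ENNReal.ofReal (4 * z) * S) + 8 * (ENNReal.ofReal z * (12 * S)) := by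
            apply add_le_add_right
            apply mul_le_mul_right
            exact mul_le_mul hτz hD12 (by positivity) (by positivity)
        _ = (ENNReal.ofReal z * 104) * S := by rw [hof4]; ring
        _ ≤ (ENNReal.ofReal z * 121) * S := by
            exact mul_le_mul_left (mul_le_mul_right (by norm_num) _) S
        _ = ENNReal.ofReal (121 * z) * S := by rw [hofz]; ring
  -- conclude, splitting on the sign of y
  have hC : (11 : ℝ) ^ 2 = 121 := by norm_num
  rcases lt_trichotomy y 0 with hneg | hzero | hpos
  · have h2 : gsh v y = gsh v (-y) := by
      have h3 := gsh_neg v (-y)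
      rw [neg_neg] at h3
      exact h3
    show gsh v y ≤ ENNReal.ofReal ((11 : ℝ) ^ 2 * |y|) * S
    rw [h2, hC, abs_of_neg hneg]
    exact main (-y) (by linarith)
  · subst hzero
    have : ∀ x : ℝ, ENNReal.ofReal ((v x - v (x - 0)) ^ 2) = 0 := by
      intro x
      simp [sub_zero]
    simp only [this, lintegral_zero]
    positivity
  · show gsh v y ≤ ENNReal.ofReal ((11 : ℝ) ^ 2 * |y|) * S
    rw [hC, abs_of_pos hpos]
    exact main y hpos
end
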